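/- arXiv:0909.2622 — 9 statements merged into one kernel-verified Lean document; each statement's English description precedes it below -/
import Mathlib

section
/- Let P > 0 and σ² > 0, let H_R ∈ ℂ^{n_R×n_T} and H_E ∈ ℂ^{n_E×n_T}, and assume H_R†H_R − H_E†H_E ≠ 0. Then sup over all n_T×n_T Hermitian positive semidefinite matrices R_x with Tr(R_x) ≤ P of [log det(I + H_R R_x H_R†/σ²) − log det(I + H_E R_x H_E†/σ²)] is strictly positive if and only if the Hermitian matrix H_R†H_R − H_E†H_E has a positive eigenvalue (equivalently, it is positive semidefinite or indefinite, i.e., not negative semidefinite). -/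
open Matrix
open scoped ComplexOrder

section WiretapHelpers

variable {m n : Type*} [Fintype m] [Fintype n] [DecidableEq n] [DecidableEq m]

private lemma smulPSD' {M : Matrix n n ℂ} (hM : M.PosSemidef) {r : ℝ} (hr : 0 ≤ r) :
    ((r : ℂ) • M).PosSemidef := by
  refine PosSemidef.of_dotProduct_mulVec_nonneg ?_ (fun x => ?_)
  · unfold Matrix.IsHermitian
    rw [conjTranspose_smul, hM.1.eq]
    norm_num
  · rw [smul_mulVec, dotProduct_smul]
    exact mul_nonneg (by exact_mod_cast hr) (hM.dotProduct_mulVec_nonneg x)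

private lemma det_one_add_psd' {N : Matrix n n ℂ} (hN : N.PosSemidef) :
    (1 + N).det = ((∏ i, (1 + hN.1.eigenvalues i) : ℝ) : ℂ) := by
  set U : Matrix n n ℂ := (hN.1.eigenvectorUnitary : Matrix n n ℂ)
  have hUU : U * star U = 1 := mem_unitaryGroup_iff.mp hN.1.eigenvectorUnitary.2
  have h1 : (1 : Matrix n n ℂ) + N
      = U * (1 + diagonal (RCLike.ofReal ∘ hN.1.eigenvalues)) * star U := by
    conv_lhs => rw [hN.1.spectral_theorem, Unitary.conjStarAlgAut_apply]
    rw [Matrix.mul_add, Matrix.add_mul, Matrix.mul_one, hUU]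
  have hdetU : U.det * (star U).det = 1 := by rw [← det_mul, hUU, det_one]
  rw [h1, det_mul, det_mul]
  have h2 : U.det * ((1 : Matrix n n ℂ) + diagonal (RCLike.ofReal ∘ hN.1.eigenvalues)).det
        * (star U).det
      = ((1 : Matrix n n ℂ) + diagonal (RCLike.ofReal ∘ hN.1.eigenvalues)).det
        * (U.det * (star U).det) := by ring
  rw [h2, hdetU, mul_one, ← diagonal_one, diagonal_add, det_diagonal]
  push_cast
  simp [Function.comp]

private lemma trace_herm' {N : Matrix n n ℂ} (hN : N.IsHermitian) :
    N.trace = ((∑ i, hN.eigenvalues i : ℝ) : ℂ) := by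
  set U : Matrix n n ℂ := (hN.eigenvectorUnitary : Matrix n n ℂ)
  have hUU : star U * U = 1 := mem_unitaryGroup_iff'.mp hN.eigenvectorUnitary.2
  conv_lhs => rw [hN.spectral_theorem, Unitary.conjStarAlgAut_apply]
  rw [trace_mul_cycle, hUU, Matrix.one_mul, trace_diagonal]
  push_cast
  simp [Function.comp]

private lemma one_le_prod_real' {f : n → ℝ} (h : ∀ i, 1 ≤ f i) : 1 ≤ ∏ i, f i :=
  calc (1:ℝ) = ∏ _i : n, 1 := by simp
    _ ≤ ∏ i, f i := Finset.prod_le_prod (by intros; norm_num) (fun i _ => h i)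

private lemma det_one_add_psd_re_ge_one' {N : Matrix n n ℂ} (hN : N.PosSemidef) :
    1 ≤ (1 + N).det.re := by
  rw [det_one_add_psd' hN, Complex.ofReal_re]
  exact one_le_prod_real' fun i => by linarith [hN.eigenvalues_nonneg i]

private lemma det_one_add_psd_re_le' {N : Matrix n n ℂ} (hN : N.PosSemidef) :
    (1 + N).det.re ≤ Real.exp N.trace.re := by
  rw [det_one_add_psd' hN, Complex.ofReal_re, trace_herm' hN.1, Complex.ofReal_re, Real.exp_sum]
  refine Finset.prod_le_prod (fun i _ => by linarith [hN.eigenvalues_nonneg i])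
    (fun i _ => by simpa [add_comm] using Real.add_one_le_exp (hN.1.eigenvalues i))

private lemma trace_psd_re_nonneg' {N : Matrix n n ℂ} (hN : N.PosSemidef) : 0 ≤ N.trace.re := by
  rw [trace_herm' hN.1, Complex.ofReal_re]
  exact Finset.sum_nonneg fun i _ => hN.eigenvalues_nonneg i

open scoped MatrixOrder in
private lemma psd_exists_ct_mul_self' {A : Matrix n n ℂ} (hA : A.PosSemidef) :
    ∃ B : Matrix n n ℂ, A = Bᴴ * B := by
  refine ⟨CFC.sqrt A, ?_⟩
  rw [(Matrix.nonneg_iff_posSemidef.mp (CFC.sqrt_nonneg A)).1.eq,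
    CFC.sqrt_mul_sqrt_self A hA.nonneg]

private lemma trace_mul_psd_re_nonneg' {A B : Matrix n n ℂ} (hA : A.PosSemidef)
    (hB : B.PosSemidef) : 0 ≤ (A * B).trace.re := by
  obtain ⟨C, rfl⟩ := psd_exists_ct_mul_self' hA
  rw [Matrix.mul_assoc, trace_mul_comm]
  exact trace_psd_re_nonneg' (hB.mul_mul_conjTranspose_same C)

private lemma smul_one_sub_psd' {A : Matrix n n ℂ} (hA : A.PosSemidef) :
    (((A.trace.re : ℂ)) • 1 - A).PosSemidef := by
  set c : ℝ := A.trace.re with hc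
  set U : Matrix n n ℂ := (hA.1.eigenvectorUnitary : Matrix n n ℂ)
  have hUU : U * Uᴴ = 1 := mem_unitaryGroup_iff.mp hA.1.eigenvectorUnitary.2
  have h1 : (c : ℂ) • (1 : Matrix n n ℂ) - A
      = U * (diagonal (fun i => ((c - hA.1.eigenvalues i : ℝ) : ℂ))) * Uᴴ := by
    conv_lhs => rw [hA.1.spectral_theorem, Unitary.conjStarAlgAut_apply]
    simp only [star_eq_conjTranspose]
    have hd : diagonal (fun i => ((c - hA.1.eigenvalues i : ℝ) : ℂ))
        = (c : ℂ) • (1 : Matrix n n ℂ) - diagonal (RCLike.ofReal ∘ hA.1.eigenvalues) := by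
      rw [← diagonal_one, ← diagonal_smul, diagonal_sub]
      congr 1
      funext i
      simp [Function.comp]
    rw [hd, Matrix.mul_sub, Matrix.sub_mul, Matrix.mul_smul, Matrix.mul_one,
      Matrix.smul_mul, hUU]
  rw [h1]
  refine PosSemidef.mul_mul_conjTranspose_same (PosSemidef.diagonal fun i => ?_) U
  simp only [Pi.zero_apply]
  rw [Complex.le_def]
  refine ⟨?_, by simp⟩
  simp only [Complex.ofReal_re, Complex.zero_re]
  rw [sub_nonneg, hc]
  rw [trace_herm' hA.1, Complex.ofReal_re]
  exact Finset.single_le_sum (fun j _ => hA.eigenvalues_nonneg j) (Finset.mem_univ i)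

private lemma trace_mul_le_psd' {A Rx : Matrix n n ℂ} (hA : A.PosSemidef) (hR : Rx.PosSemidef)
    {P : ℝ} (hP : Rx.trace.re ≤ P) : (A * Rx).trace.re ≤ A.trace.re * P := by
  set c : ℝ := A.trace.re with hc
  have hc0 : 0 ≤ c := trace_psd_re_nonneg' hA
  have key : 0 ≤ (((c : ℂ) • 1 - A) * Rx).trace.re :=
    trace_mul_psd_re_nonneg' (smul_one_sub_psd' hA) hR
  have expand : (((c : ℂ) • 1 - A) * Rx).trace = (c : ℂ) * Rx.trace - (A * Rx).trace := by
    rw [Matrix.sub_mul, trace_sub, Matrix.smul_mul, Matrix.one_mul, trace_smul]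
    simp
  rw [expand] at key
  have hre : ((c : ℂ) * Rx.trace).re = c * Rx.trace.re := by
    simp [Complex.mul_re]
  rw [Complex.sub_re, hre] at key
  nlinarith [mul_le_mul_of_nonneg_left hP hc0]

open scoped MatrixOrder in
private lemma det_re_mono' {N₁ N₂ : Matrix n n ℂ} (h₁ : N₁.PosSemidef)
    (h : (N₂ - N₁).PosSemidef) : (1 + N₁).det.re ≤ (1 + N₂).det.re := by
  have hM : ((1 : Matrix n n ℂ) + N₁).PosDef := Matrix.PosDef.one.add_posSemidef h₁
  set S : Matrix n n ℂ := CFC.sqrt (1 + N₁) with hS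
  have hSS : S * S = 1 + N₁ := CFC.sqrt_mul_sqrt_self _ hM.posSemidef.nonneg
  have hSH : S.IsHermitian := (Matrix.nonneg_iff_posSemidef.mp (CFC.sqrt_nonneg _)).1
  have h0 : S.det * S.det ≠ 0 := by rw [← det_mul, hSS]; exact hM.det_pos.ne'
  have hdet : IsUnit S.det := isUnit_iff_ne_zero.mpr (fun hz => h0 (by rw [hz, zero_mul]))
  have hSinv : S * S⁻¹ = 1 := mul_nonsing_inv S hdet
  have hSinv' : S⁻¹ * S = 1 := nonsing_inv_mul S hdet
  have hSiH : (S⁻¹).IsHermitian := hSH.inv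
  set X : Matrix n n ℂ := S⁻¹ * (N₂ - N₁) * (S⁻¹)ᴴ with hX
  have hXpsd : X.PosSemidef := h.mul_mul_conjTranspose_same S⁻¹
  have hkey : (1 : Matrix n n ℂ) + N₂ = S * (1 + X) * S := by
    rw [Matrix.mul_add, Matrix.add_mul, Matrix.mul_one, hSS, hX, hSiH.eq]
    rw [Matrix.mul_assoc S⁻¹ (N₂ - N₁) S⁻¹, ← Matrix.mul_assoc S S⁻¹ _, hSinv, Matrix.one_mul,
      Matrix.mul_assoc (N₂ - N₁) S⁻¹ S, hSinv', Matrix.mul_one]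
    abel
  have e1 := det_one_add_psd' h₁
  have e2 := det_one_add_psd' hXpsd
  have hp1 : (1:ℝ) ≤ ∏ i, (1 + h₁.1.eigenvalues i) :=
    one_le_prod_real' fun i => by linarith [h₁.eigenvalues_nonneg i]
  have hq1 : (1:ℝ) ≤ ∏ i, (1 + hXpsd.1.eigenvalues i) :=
    one_le_prod_real' fun i => by linarith [hXpsd.eigenvalues_nonneg i]
  have hSd : S.det * S.det = ((∏ i, (1 + h₁.1.eigenvalues i) : ℝ) : ℂ) := by
    rw [← det_mul, hSS, e1]
  have hdet2 : ((1 : Matrix n n ℂ) + N₂).det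
      = ((∏ i, (1 + hXpsd.1.eigenvalues i) : ℝ) : ℂ)
        * ((∏ i, (1 + h₁.1.eigenvalues i) : ℝ) : ℂ) := by
    calc ((1 : Matrix n n ℂ) + N₂).det = S.det * (1 + X).det * S.det := by
          rw [hkey, det_mul, det_mul]
      _ = (1 + X).det * (S.det * S.det) := by ring
      _ = _ := by rw [e2, hSd]
  rw [hdet2, e1, ← Complex.ofReal_mul, Complex.ofReal_re, Complex.ofReal_re]
  nlinarith

private lemma star_dot_self' (u : n → ℂ) :
    star u ⬝ᵥ u = ((∑ i, Complex.normSq (u i) : ℝ) : ℂ) := by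
  push_cast
  simp [dotProduct, Complex.normSq_eq_conj_mul_self]

private lemma quad_form' (H : Matrix m n ℂ) (v : n → ℂ) :
    star v ⬝ᵥ ((Hᴴ * H) *ᵥ v) = ((∑ i, Complex.normSq ((H *ᵥ v) i) : ℝ) : ℂ) := by
  rw [← mulVec_mulVec, dotProduct_mulVec, ← star_mulVec, star_dot_self']

private lemma vecMulVec_psd' (v : n → ℂ) : (vecMulVec v (star v)).PosSemidef := by
  rw [vecMulVec_eq Unit, ← conjTranspose_replicateCol]
  exact posSemidef_self_mul_conjTranspose _

private lemma trace_vecMulVec' (v : n → ℂ) :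
    (vecMulVec v (star v)).trace = ((∑ i, Complex.normSq (v i) : ℝ) : ℂ) := by
  push_cast
  simp only [Matrix.trace, Matrix.diag, vecMulVec_apply, Pi.star_apply, Complex.star_def]
  congr 1
  funext i
  rw [mul_comm, ← Complex.normSq_eq_conj_mul_self]

private lemma conj_vecMulVec' (H : Matrix m n ℂ) (v : n → ℂ) :
    H * vecMulVec v (star v) * Hᴴ = vecMulVec (H *ᵥ v) (star (H *ᵥ v)) := by
  rw [vecMulVec_eq Unit, vecMulVec_eq Unit, ← conjTranspose_replicateCol, ← conjTranspose_replicateCol,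
    replicateCol_mulVec, conjTranspose_mul, Matrix.mul_assoc, Matrix.mul_assoc, Matrix.mul_assoc]

private lemma det_one_add_smul_vecMulVec' (b : ℝ) (u : m → ℂ) :
    (1 + (b : ℂ) • vecMulVec u (star u)).det
      = 1 + (b : ℂ) * ((∑ i, Complex.normSq (u i) : ℝ) : ℂ) := by
  have h1 : (b : ℂ) • vecMulVec u (star u) = vecMulVec ((b : ℂ) • u) (star u) := by
    ext i j
    simp [vecMulVec_apply, mul_assoc]
  rw [h1, vecMulVec_eq Unit, det_one_add_replicateCol_mul_replicateRow, dotProduct_smul, star_dot_self']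
  simp

end WiretapHelpers

/-- For the Gaussian MIMO wiretap channel with power constraint
`Tr(R_x) ≤ P`, the supremum of the secrecy rate over positive semidefinite input
covariance matrices is strictly positive iff the Hermitian matrix
`H_R† H_R − H_E† H_E` has a positive eigenvalue. -/
theorem stmt_0 (nT nR nE : ℕ) (P σ2 : ℝ) (hP : 0 < P) (hσ : 0 < σ2)
    (HR : Matrix (Fin nR) (Fin nT) ℂ) (HE : Matrix (Fin nE) (Fin nT) ℂ)
    (hne : HRᴴ * HR - HEᴴ * HE ≠ 0) :
    0 < sSup {c : ℝ | ∃ Rx : Matrix (Fin nT) (Fin nT) ℂ, Rx.PosSemidef ∧ Rx.trace.re ≤ P ∧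
        c = Real.log ((1 + ((σ2⁻¹ : ℝ) : ℂ) • (HR * Rx * HRᴴ)).det.re)
          - Real.log ((1 + ((σ2⁻¹ : ℝ) : ℂ) • (HE * Rx * HEᴴ)).det.re)} ↔
      ∃ (t : ℝ) (v : Fin nT → ℂ), 0 < t ∧ v ≠ 0 ∧
        (HRᴴ * HR - HEᴴ * HE) *ᵥ v = (t : ℂ) • v := by
  have hr0 : (0:ℝ) ≤ σ2⁻¹ := (inv_pos.mpr hσ).le
  have hrpos : (0:ℝ) < σ2⁻¹ := inv_pos.mpr hσ
  set A : Matrix (Fin nT) (Fin nT) ℂ := HRᴴ * HR - HEᴴ * HE with hAdef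
  have hAH : A.IsHermitian :=
    ((posSemidef_conjTranspose_mul_self HR).1).sub ((posSemidef_conjTranspose_mul_self HE).1)
  set S : Set ℝ := {c : ℝ | ∃ Rx : Matrix (Fin nT) (Fin nT) ℂ,
      Rx.PosSemidef ∧ Rx.trace.re ≤ P ∧
      c = Real.log ((1 + ((σ2⁻¹ : ℝ) : ℂ) • (HR * Rx * HRᴴ)).det.re)
        - Real.log ((1 + ((σ2⁻¹ : ℝ) : ℂ) • (HE * Rx * HEᴴ)).det.re)} with hSdef
  -- boundedness of the rate set
  have hbdd : BddAbove S := by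
    refine ⟨σ2⁻¹ * ((HRᴴ * HR).trace.re * P), ?_⟩
    rintro c ⟨Rx, hRx, htr, rfl⟩
    have hNR : (((σ2⁻¹:ℝ) : ℂ) • (HR * Rx * HRᴴ)).PosSemidef :=
      smulPSD' (hRx.mul_mul_conjTranspose_same HR) hr0
    have hNE : (((σ2⁻¹:ℝ) : ℂ) • (HE * Rx * HEᴴ)).PosSemidef :=
      smulPSD' (hRx.mul_mul_conjTranspose_same HE) hr0
    have h1R := det_one_add_psd_re_ge_one' hNR
    have h1E := det_one_add_psd_re_ge_one' hNE
    have hlogE : 0 ≤ Real.log ((1 + ((σ2⁻¹:ℝ) : ℂ) • (HE * Rx * HEᴴ)).det.re) :=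
      Real.log_nonneg h1E
    have hlogR : Real.log ((1 + ((σ2⁻¹:ℝ) : ℂ) • (HR * Rx * HRᴴ)).det.re)
        ≤ (((σ2⁻¹:ℝ) : ℂ) • (HR * Rx * HRᴴ)).trace.re := by
      rw [Real.log_le_iff_le_exp (by linarith)]
      exact det_one_add_psd_re_le' hNR
    have htr2 : (((σ2⁻¹:ℝ) : ℂ) • (HR * Rx * HRᴴ)).trace.re
        = σ2⁻¹ * (HR * Rx * HRᴴ).trace.re := by
      rw [trace_smul, smul_eq_mul]
      simp [Complex.mul_re]
    have hcyc : (HR * Rx * HRᴴ).trace = ((HRᴴ * HR) * Rx).trace := by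
      rw [trace_mul_cycle]
    have hmul : ((HRᴴ * HR) * Rx).trace.re ≤ (HRᴴ * HR).trace.re * P :=
      trace_mul_le_psd' (posSemidef_conjTranspose_mul_self HR) hRx htr
    have := mul_le_mul_of_nonneg_left hmul hr0
    rw [htr2, hcyc] at hlogR
    linarith
  constructor
  · -- forward direction, by contraposition
    intro hsup
    by_contra hno
    have heig : ∀ i, hAH.eigenvalues i ≤ 0 := by
      intro i
      by_contra hpos
      push_neg at hpos
      refine hno ⟨hAH.eigenvalues i, hAH.eigenvectorBasis i, hpos, ?_, ?_⟩
      · exact fun h0 => hAH.eigenvectorBasis.orthonormal.ne_zero i ((WithLp.ofLp_eq_zero 2).mp h0)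
      · funext j
        have h := congrFun (hAH.mulVec_eigenvectorBasis i) j
        simpa [Complex.real_smul] using h
    have hneg : (-A).PosSemidef := by
      set U : Matrix (Fin nT) (Fin nT) ℂ := (hAH.eigenvectorUnitary : Matrix (Fin nT) (Fin nT) ℂ)
      have h2 : -A = U * diagonal (fun i => ((-hAH.eigenvalues i : ℝ) : ℂ)) * Uᴴ := by
        conv_lhs => rw [hAH.spectral_theorem, Unitary.conjStarAlgAut_apply]
        simp only [star_eq_conjTranspose]
        have hdneg : -diagonal (RCLike.ofReal ∘ hAH.eigenvalues)
            = diagonal (fun i => ((-hAH.eigenvalues i : ℝ) : ℂ)) := by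
          rw [diagonal_neg]
          congr 1
          funext i
          simp [Function.comp]
        rw [← Matrix.neg_mul, ← Matrix.mul_neg, hdneg]
      rw [h2]
      refine PosSemidef.mul_mul_conjTranspose_same (PosSemidef.diagonal fun i => ?_) U
      simp only [Pi.zero_apply]
      rw [Complex.le_def]
      exact ⟨by simpa using neg_nonneg.mpr (heig i), by simp⟩
    have hle : sSup S ≤ 0 := by
      refine Real.sSup_le ?_ le_rfl
      rintro c ⟨Rx, hRx, htr, rfl⟩
      obtain ⟨B, hB⟩ := psd_exists_ct_mul_self' hRx
      have key : ∀ (k : ℕ) (H : Matrix (Fin k) (Fin nT) ℂ),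
          (1 + ((σ2⁻¹:ℝ) : ℂ) • (H * Rx * Hᴴ)).det
            = (1 + ((σ2⁻¹:ℝ) : ℂ) • (B * (Hᴴ * H) * Bᴴ)).det := by
        intro k H
        have h1 : ((σ2⁻¹:ℝ) : ℂ) • (H * Rx * Hᴴ)
            = (H * Bᴴ) * (((σ2⁻¹:ℝ) : ℂ) • (B * Hᴴ)) := by
          rw [hB, Matrix.mul_smul]
          congr 1
          rw [← Matrix.mul_assoc H Bᴴ B, Matrix.mul_assoc (H * Bᴴ) B Hᴴ]
        rw [h1, det_one_add_mul_comm]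
        congr 2
        rw [Matrix.smul_mul]
        congr 1
        rw [Matrix.mul_assoc B Hᴴ (H * Bᴴ), ← Matrix.mul_assoc Hᴴ H Bᴴ,
          ← Matrix.mul_assoc B (Hᴴ * H) Bᴴ]
      have hN1 : (((σ2⁻¹:ℝ) : ℂ) • (B * (HRᴴ * HR) * Bᴴ)).PosSemidef :=
        smulPSD' ((posSemidef_conjTranspose_mul_self HR).mul_mul_conjTranspose_same B) hr0
      have hsub : ((((σ2⁻¹:ℝ) : ℂ) • (B * (HEᴴ * HE) * Bᴴ))
          - (((σ2⁻¹:ℝ) : ℂ) • (B * (HRᴴ * HR) * Bᴴ))).PosSemidef := by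
        have hd : (((σ2⁻¹:ℝ) : ℂ) • (B * (HEᴴ * HE) * Bᴴ))
            - (((σ2⁻¹:ℝ) : ℂ) • (B * (HRᴴ * HR) * Bᴴ))
            = ((σ2⁻¹:ℝ) : ℂ) • (B * (-A) * Bᴴ) := by
          rw [← smul_sub]
          congr 1
          rw [← Matrix.sub_mul, ← Matrix.mul_sub]
          congr 2
          rw [hAdef, neg_sub]
        rw [hd]
        exact smulPSD' (hneg.mul_mul_conjTranspose_same B) hr0
      have hmono := det_re_mono' hN1 hsub
      rw [key nR HR, key nE HE]
      have hpos1 : (0:ℝ) <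
          ((1 + ((σ2⁻¹:ℝ) : ℂ) • (B * (HRᴴ * HR) * Bᴴ)).det.re) := by
        linarith [det_one_add_psd_re_ge_one' hN1]
      have := Real.log_le_log hpos1 hmono
      linarith
    linarith
  · -- backward direction: construct a rank-one input
    rintro ⟨t, v, ht, hv, heq⟩
    set qv : ℝ := ∑ i, Complex.normSq (v i) with hqv
    have hqvpos : 0 < qv := by
      obtain ⟨i, hi⟩ := Function.ne_iff.mp hv
      exact Finset.sum_pos' (fun j _ => Complex.normSq_nonneg _)
        ⟨i, Finset.mem_univ i, Complex.normSq_pos.mpr hi⟩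
    set qR : ℝ := ∑ i, Complex.normSq ((HR *ᵥ v) i) with hqR
    set qE : ℝ := ∑ i, Complex.normSq ((HE *ᵥ v) i) with hqE
    have hqE0 : 0 ≤ qE := Finset.sum_nonneg fun i _ => Complex.normSq_nonneg _
    have hdiffC : ((qR : ℂ)) - (qE : ℂ) = (t : ℂ) * (qv : ℂ) := by
      rw [← quad_form' HR v, ← quad_form' HE v, ← dotProduct_sub, ← sub_mulVec, ← hAdef, heq,
        dotProduct_smul, star_dot_self', smul_eq_mul]
    have hdiff : qR - qE = t * qv := by exact_mod_cast hdiffC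
    set a : ℝ := P / qv with ha
    have hapos : 0 < a := div_pos hP hqvpos
    set Rx : Matrix (Fin nT) (Fin nT) ℂ := ((a : ℝ) : ℂ) • vecMulVec v (star v) with hRxdef
    have hRxpsd : Rx.PosSemidef := smulPSD' (vecMulVec_psd' v) hapos.le
    have htrRx : Rx.trace.re = P := by
      rw [hRxdef, trace_smul, smul_eq_mul, trace_vecMulVec', ← hqv, ← Complex.ofReal_mul,
        Complex.ofReal_re, ha, div_mul_cancel₀ _ hqvpos.ne']
    have hdetval : ∀ (k : ℕ) (H : Matrix (Fin k) (Fin nT) ℂ),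
        (1 + ((σ2⁻¹:ℝ) : ℂ) • (H * Rx * Hᴴ)).det.re
          = 1 + (σ2⁻¹ * a) * ∑ i, Complex.normSq ((H *ᵥ v) i) := by
      intro k H
      have h1 : H * Rx * Hᴴ = (a : ℂ) • vecMulVec (H *ᵥ v) (star (H *ᵥ v)) := by
        rw [hRxdef, Matrix.mul_smul, Matrix.smul_mul, conj_vecMulVec']
      rw [h1, smul_smul, ← Complex.ofReal_mul, det_one_add_smul_vecMulVec',
        ← Complex.ofReal_mul, ← Complex.ofReal_one, ← Complex.ofReal_add, Complex.ofReal_re]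
    have hmem : Real.log (1 + (σ2⁻¹ * a) * qR) - Real.log (1 + (σ2⁻¹ * a) * qE) ∈ S := by
      refine ⟨Rx, hRxpsd, le_of_eq htrRx, ?_⟩
      rw [hdetval nR HR, hdetval nE HE]
    have hba : 0 < σ2⁻¹ * a := mul_pos hrpos hapos
    have hqRgt : qE < qR := by nlinarith
    have hlt : Real.log (1 + (σ2⁻¹ * a) * qE) < Real.log (1 + (σ2⁻¹ * a) * qR) :=
      Real.log_lt_log (by nlinarith) (by nlinarith)
    exact lt_csSup_of_lt hbdd hmem (by linarith)
end

section
/- Let r, s ∈ ℂⁿ be nonzero vectors such that r†s ≠ 0 and r is not a scalar multiple of s. Set Δ = (‖r‖² + ‖s‖²)² − 4|r†s|². Then Δ > 0, and the Hermitian matrix r r† − s s† has rank two with exactly two nonzero eigenvalues η₁ = (‖r‖² − ‖s‖² + √Δ)/2 > 0 and η₂ = (‖r‖² − ‖s‖² − √Δ)/2 < 0. Moreover, with φ the argument of r†s, |c₂| = (‖r‖² + ‖s‖² − √Δ)/(2|r†s|) and |c₄| = (‖r‖² + ‖s‖² + √Δ)/(2|r†s|), the vectors r + |c₂| e^{i(π−φ)}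 s and r + |c₄| e^{i(π−φ)} s are (nonzero) eigenvectors of r r† − s s† for η₁ and η₂ respectively. (Equivalently, η₁ = ‖r‖² − |c₂||r†s| and η₂ = ‖r‖² − |c₄||r†s|.) -/
open Matrix
open scoped ComplexOrder

private lemma vmv_mulVec {n : ℕ} (u v w : Fin n → ℂ) :
    vecMulVec u v *ᵥ w = (v ⬝ᵥ w) • u := by
  ext i
  simp only [vecMulVec_apply, mulVec, dotProduct, Pi.smul_apply, smul_eq_mul, Finset.sum_mul]
  exact Finset.sum_congr rfl (fun j _ => by ring)

private lemma dot_self_real {n : ℕ} (r : Fin n → ℂ) :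
    star r ⬝ᵥ r = (((star r ⬝ᵥ r).re : ℝ) : ℂ) := by
  have h : star r ⬝ᵥ r = ((∑ j, Complex.normSq (r j) : ℝ) : ℂ) := by
    push_cast
    simp [dotProduct, Complex.normSq_eq_conj_mul_self]
  rw [h]; simp

private lemma dot_self_pos {n : ℕ} (r : Fin n → ℂ) (hr : r ≠ 0) :
    0 < (star r ⬝ᵥ r).re := by
  have h : star r ⬝ᵥ r = ((∑ j, Complex.normSq (r j) : ℝ) : ℂ) := by
    push_cast
    simp [dotProduct, Complex.normSq_eq_conj_mul_self]
  rw [h]; simp only [Complex.ofReal_re]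
  obtain ⟨j, hj⟩ : ∃ j, r j ≠ 0 := by
    by_contra hc; push_neg at hc; exact hr (funext hc)
  exact Finset.sum_pos' (fun i _ => Complex.normSq_nonneg _)
    ⟨j, Finset.mem_univ _, Complex.normSq_pos.2 hj⟩

private lemma realFacts (nr ns ip Δ η₁ η₂ c2 c4 : ℝ)
    (hnr : 0 < nr) (hns : 0 < ns) (hp : 0 < ip) (hcs : ip ^ 2 < nr * ns)
    (hΔ : Δ = (nr + ns) ^ 2 - 4 * ip ^ 2)
    (hη₁ : η₁ = (nr - ns + Real.sqrt Δ) / 2)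
    (hη₂ : η₂ = (nr - ns - Real.sqrt Δ) / 2)
    (hc2 : c2 = (nr + ns - Real.sqrt Δ) / (2 * ip))
    (hc4 : c4 = (nr + ns + Real.sqrt Δ) / (2 * ip)) :
    0 < Δ ∧ 0 < η₁ ∧ η₂ < 0 ∧ 0 < c2 ∧ c2 < c4 ∧
    nr - c2 * ip = η₁ ∧ c2 * (ns + η₁) = ip ∧
    nr - c4 * ip = η₂ ∧ c4 * (ns + η₂) = ip := by
  have hΔpos : 0 < Δ := by nlinarith [sq_nonneg (nr - ns)]
  set sd := Real.sqrt Δ with hsd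
  have hsd2 : sd ^ 2 = Δ := Real.sq_sqrt hΔpos.le
  have hsdpos : 0 < sd := Real.sqrt_pos.2 hΔpos
  have h1 : |nr - ns| < sd := by
    calc |nr - ns| = Real.sqrt ((nr - ns) ^ 2) := (Real.sqrt_sq_eq_abs _).symm
    _ < sd := by rw [hsd]; exact Real.sqrt_lt_sqrt (sq_nonneg _) (by nlinarith)
  rw [abs_lt] at h1
  have h2 : sd < nr + ns := by
    have h : sd ^ 2 < (nr + ns) ^ 2 := by nlinarith
    calc sd = Real.sqrt (sd ^ 2) := by rw [Real.sqrt_sq hsdpos.le]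
    _ < Real.sqrt ((nr + ns) ^ 2) := Real.sqrt_lt_sqrt (sq_nonneg _) h
    _ = nr + ns := Real.sqrt_sq (by positivity)
  refine ⟨hΔpos, by rw [hη₁]; linarith [h1.1], by rw [hη₂]; linarith [h1.2],
    by rw [hc2]; exact div_pos (by linarith) (by positivity), ?_, ?_, ?_, ?_, ?_⟩
  · rw [hc2, hc4]
    exact div_lt_div_of_pos_right (by linarith) (by positivity)
  · rw [hc2, hη₁]; field_simp; ring
  · rw [hc2, hη₁]; field_simp; nlinarith [hsd2]
  · rw [hc4, hη₂]; field_simp; ring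
  · rw [hc4, hη₂]; field_simp; nlinarith [hsd2]

set_option maxHeartbeats 2000000 in
/-- For nonzero vectors `r, s ∈ ℂⁿ` with `r†s ≠ 0` and `r` not a
scalar multiple of `s`, setting `Δ = (‖r‖² + ‖s‖²)² − 4|r†s|²`, we have `Δ > 0`,
`r r† − s s†` has rank two with exactly two nonzero eigenvalues
`η₁ = (‖r‖² − ‖s‖² + √Δ)/2 > 0` and `η₂ = (‖r‖² − ‖s‖² − √Δ)/2 < 0`, and
`r + |c₂| e^{i(π−φ)} s`, `r + |c₄| e^{i(π−φ)} s` are nonzero eigenvectors for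
`η₁`, `η₂` respectively, where `φ = arg(r†s)`,
`|c₂| = (‖r‖² + ‖s‖² − √Δ)/(2|r†s|)`, `|c₄| = (‖r‖² + ‖s‖² + √Δ)/(2|r†s|)`. -/
theorem stmt_2 (n : ℕ) (r s : Fin n → ℂ) (hr : r ≠ 0) (hs : s ≠ 0)
    (hip : star r ⬝ᵥ s ≠ 0) (hind : ∀ c : ℂ, r ≠ c • s)
    (hA : (vecMulVec r (star r) - vecMulVec s (star s)).IsHermitian)
    (nr ns ip Δ η₁ η₂ c2 c4 φ : ℝ)
    (hnr : nr = (star r ⬝ᵥ r).re) (hns : ns = (star s ⬝ᵥ s).re)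
    (hipd : ip = ‖star r ⬝ᵥ s‖)
    (hΔ : Δ = (nr + ns) ^ 2 - 4 * ip ^ 2)
    (hη₁ : η₁ = (nr - ns + Real.sqrt Δ) / 2)
    (hη₂ : η₂ = (nr - ns - Real.sqrt Δ) / 2)
    (hc2 : c2 = (nr + ns - Real.sqrt Δ) / (2 * ip))
    (hc4 : c4 = (nr + ns + Real.sqrt Δ) / (2 * ip))
    (hφ : φ = (star r ⬝ᵥ s).arg) :
    0 < Δ ∧
    (vecMulVec r (star r) - vecMulVec s (star s)).rank = 2 ∧
    0 < η₁ ∧ η₂ < 0 ∧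
    (∀ i, hA.eigenvalues i = η₁ ∨ hA.eigenvalues i = η₂ ∨ hA.eigenvalues i = 0) ∧
    r + ((c2 : ℂ) * Complex.exp (Complex.I * ((Real.pi - φ : ℝ) : ℂ))) • s ≠ 0 ∧
    r + ((c4 : ℂ) * Complex.exp (Complex.I * ((Real.pi - φ : ℝ) : ℂ))) • s ≠ 0 ∧
    (vecMulVec r (star r) - vecMulVec s (star s)) *ᵥ
        (r + ((c2 : ℂ) * Complex.exp (Complex.I * ((Real.pi - φ : ℝ) : ℂ))) • s)
      = (η₁ : ℂ) • (r + ((c2 : ℂ) * Complex.exp (Complex.I * ((Real.pi - φ : ℝ) : ℂ))) • s) ∧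
    (vecMulVec r (star r) - vecMulVec s (star s)) *ᵥ
        (r + ((c4 : ℂ) * Complex.exp (Complex.I * ((Real.pi - φ : ℝ) : ℂ))) • s)
      = (η₂ : ℂ) • (r + ((c4 : ℂ) * Complex.exp (Complex.I * ((Real.pi - φ : ℝ) : ℂ))) • s) := by
  classical
  have har : star r ⬝ᵥ r = ((nr : ℝ) : ℂ) := by rw [hnr]; exact dot_self_real r
  have has : star s ⬝ᵥ s = ((ns : ℝ) : ℂ) := by rw [hns]; exact dot_self_real s
  have hnrpos : 0 < nr := hnr ▸ dot_self_pos r hr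
  have hnspos : 0 < ns := hns ▸ dot_self_pos s hs
  have hp : 0 < ip := by rw [hipd]; exact norm_pos_iff.mpr hip
  -- strict Cauchy-Schwarz
  have hcs : ip ^ 2 < nr * ns := by
    let r' : EuclideanSpace ℂ (Fin n) := WithLp.toLp 2 r
    let s' : EuclideanSpace ℂ (Fin n) := WithLp.toLp 2 s
    have hinner : (inner ℂ r' s' : ℂ) = star r ⬝ᵥ s :=
      (EuclideanSpace.inner_eq_star_dotProduct r' s').trans (dotProduct_comm _ _)
    have hr' : r' ≠ 0 := fun h => hr (congrArg WithLp.ofLp h)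
    have hs' : s' ≠ 0 := fun h => hs (congrArg WithLp.ofLp h)
    have hir : (inner ℂ r' r' : ℂ) = star r ⬝ᵥ r := (EuclideanSpace.inner_eq_star_dotProduct r' r').trans (dotProduct_comm _ _)
    have his : (inner ℂ s' s' : ℂ) = star s ⬝ᵥ s := (EuclideanSpace.inner_eq_star_dotProduct s' s').trans (dotProduct_comm _ _)
    have hnorm_r : ‖r'‖ ^ 2 = nr := by
      have h : RCLike.re (inner ℂ r' r' : ℂ) = ‖r'‖ ^ 2 := inner_self_eq_norm_sq (𝕜 := ℂ) r'
      rw [hnr, ← h, hir]; rfl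
    have hnorm_s : ‖s'‖ ^ 2 = ns := by
      have h : RCLike.re (inner ℂ s' s' : ℂ) = ‖s'‖ ^ 2 := inner_self_eq_norm_sq (𝕜 := ℂ) s'
      rw [hns, ← h, his]; rfl
    have hlt : ‖(inner ℂ r' s' : ℂ)‖ < ‖r'‖ * ‖s'‖ := by
      rcases lt_or_eq_of_le (norm_inner_le_norm (𝕜 := ℂ) r' s') with h | h
      · exact h
      · exfalso
        obtain ⟨c, hc0, hcs'⟩ := (norm_inner_eq_norm_iff hr' hs').1 h
        have hsc : s = c • r := congrArg WithLp.ofLp hcs'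
        exact hind c⁻¹ (by rw [hsc, smul_smul, inv_mul_cancel₀ hc0, one_smul])
    have hipn : ip = ‖(inner ℂ r' s' : ℂ)‖ := by rw [hinner, hipd]
    calc ip ^ 2 = ‖(inner ℂ r' s' : ℂ)‖ ^ 2 := by rw [hipn]
      _ < (‖r'‖ * ‖s'‖) ^ 2 := by
          apply pow_lt_pow_left₀ hlt (norm_nonneg _) two_ne_zero
      _ = nr * ns := by rw [mul_pow, hnorm_r, hnorm_s]
  obtain ⟨hΔpos, hη₁pos, hη₂neg, hc2pos, hc24, k1, k2, k3, k4⟩ :=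
    realFacts nr ns ip Δ η₁ η₂ c2 c4 hnrpos hnspos hp hcs hΔ hη₁ hη₂ hc2 hc4
  have hsd2' : Real.sqrt Δ ^ 2 = (nr + ns) ^ 2 - 4 * ip ^ 2 := by
    rw [Real.sq_sqrt hΔpos.le, hΔ]
  -- complex structure
  have hu0 : Complex.exp ((φ : ℂ) * Complex.I) ≠ 0 := Complex.exp_ne_zero _
  have ht : star r ⬝ᵥ s = (ip : ℂ) * Complex.exp ((φ : ℂ) * Complex.I) := by
    rw [hipd, hφ]; exact (Complex.norm_mul_exp_arg_mul_I _).symm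
  have hconj : star s ⬝ᵥ r = starRingEnd ℂ (star r ⬝ᵥ s) := by
    simp [dotProduct, map_sum, mul_comm]
  have hts : star s ⬝ᵥ r = (ip : ℂ) * (Complex.exp ((φ : ℂ) * Complex.I))⁻¹ := by
    rw [hconj, ht, _root_.map_mul, ← Complex.exp_conj, ← Complex.exp_neg]
    simp [Complex.conj_ofReal]
  have hE : Complex.exp (Complex.I * ((Real.pi - φ : ℝ) : ℂ))
      = -(Complex.exp ((φ : ℂ) * Complex.I))⁻¹ := by
    have h1 : Complex.I * ((Real.pi - φ : ℝ) : ℂ)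
        = (Real.pi : ℂ) * Complex.I + -((φ : ℂ) * Complex.I) := by push_cast; ring
    rw [h1, Complex.exp_add, Complex.exp_pi_mul_I, Complex.exp_neg]
    ring
  set A := vecMulVec r (star r) - vecMulVec s (star s) with hAdef
  have hAmul : ∀ w : Fin n → ℂ, A *ᵥ w = (star r ⬝ᵥ w) • r - (star s ⬝ᵥ w) • s := by
    intro w
    rw [hAdef, sub_mulVec, vmv_mulVec, vmv_mulVec]
  -- eigen equation key
  have key : ∀ c η : ℝ, nr - c * ip = η → c * (ns + η) = ip →
      A *ᵥ (r + ((c : ℂ) * Complex.exp (Complex.I * ((Real.pi - φ : ℝ) : ℂ))) • s)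
        = (η : ℂ) • (r + ((c : ℂ) * Complex.exp (Complex.I * ((Real.pi - φ : ℝ) : ℂ))) • s) := by
    intro c η hk1 hk2
    set z := (c : ℂ) * Complex.exp (Complex.I * ((Real.pi - φ : ℝ) : ℂ)) with hz
    have hzval : z = -(c : ℂ) * (Complex.exp ((φ : ℂ) * Complex.I))⁻¹ := by
      rw [hz, hE]; ring
    have hk1c : (nr : ℂ) - (c : ℂ) * (ip : ℂ) = (η : ℂ) := by exact_mod_cast hk1
    have hk2c : (c : ℂ) * ((ns : ℂ) + (η : ℂ)) = (ip : ℂ) := by exact_mod_cast hk2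
    have hd1 : star r ⬝ᵥ (r + z • s) = (η : ℂ) := by
      rw [dotProduct_add, dotProduct_smul, har, ht, hzval, smul_eq_mul]
      field_simp
      linear_combination hk1c
    have hd2 : star s ⬝ᵥ (r + z • s) = -(η : ℂ) * z := by
      rw [dotProduct_add, dotProduct_smul, has, hts, hzval, smul_eq_mul]
      field_simp
      linear_combination -hk2c
    rw [hAmul, hd1, hd2, smul_add, smul_smul]
    rw [neg_mul, neg_smul, sub_neg_eq_add]
  have hv1 := key c2 η₁ k1 k2
  have hv2 := key c4 η₂ k3 k4
  -- nonzero eigenvectors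
  have hne : ∀ c : ℝ,
      r + ((c : ℂ) * Complex.exp (Complex.I * ((Real.pi - φ : ℝ) : ℂ))) • s ≠ 0 := by
    intro c h0
    apply hind (-((c : ℂ) * Complex.exp (Complex.I * ((Real.pi - φ : ℝ) : ℂ))))
    rw [neg_smul]
    exact eq_neg_of_add_eq_zero_left h0
  -- eigenvalue trichotomy
  have hts0 : star s ⬝ᵥ r ≠ 0 := by
    rw [hts]
    exact mul_ne_zero (by exact_mod_cast hp.ne') (inv_ne_zero hu0)
  have htts : (star r ⬝ᵥ s) * (star s ⬝ᵥ r) = (ip : ℂ) ^ 2 := by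
    rw [ht, hts]; field_simp
  have evals : ∀ (μ : ℝ) (w : Fin n → ℂ), w ≠ 0 → A *ᵥ w = (μ : ℂ) • w →
      μ = η₁ ∨ μ = η₂ ∨ μ = 0 := by
    intro μ w hw hmw
    rcases eq_or_ne μ 0 with h0 | h0
    · exact Or.inr (Or.inr h0)
    have hμc : (μ : ℂ) ≠ 0 := by exact_mod_cast h0
    have hws : (μ : ℂ) • w = (star r ⬝ᵥ w) • r - (star s ⬝ᵥ w) • s := by
      rw [← hmw, hAmul]
    set α := star r ⬝ᵥ w with hα
    set β := star s ⬝ᵥ w with hβ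
    have e1 : (μ : ℂ) * α = α * (nr : ℂ) - β * (star r ⬝ᵥ s) := by
      have h := congrArg (fun v => star r ⬝ᵥ v) hws
      simpa [dotProduct_smul, dotProduct_sub, har, smul_eq_mul, hα, mul_comm, mul_left_comm]
        using h
    have e2 : (μ : ℂ) * β = α * (star s ⬝ᵥ r) - β * (ns : ℂ) := by
      have h := congrArg (fun v => star s ⬝ᵥ v) hws
      simpa [dotProduct_smul, dotProduct_sub, has, smul_eq_mul, hβ, mul_comm, mul_left_comm]
        using h
    have hβ0 : β ≠ 0 := by
      intro hb
      rw [hb] at e2 e1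
      simp only [mul_zero, zero_mul, sub_zero, zero_sub] at e2 e1
      have hα0 : α = 0 := by
        rcases mul_eq_zero.1 e2.symm with h | h
        · exact h
        · exact absurd h hts0
      rw [hα0, hb] at hws
      simp only [zero_smul, sub_zero] at hws
      have hzz : (μ : ℂ) • w = 0 := by simpa using hws
      rcases smul_eq_zero.1 hzz with h | h
      · exact hμc h
      · exact hw h
    have hquadc : (((μ : ℂ) - nr) * ((μ : ℂ) + ns)) * β = (-(ip : ℂ) ^ 2) * β := by
      linear_combination (star s ⬝ᵥ r) * e1 + ((μ : ℂ) - (nr : ℂ)) * e2 - β * htts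
    have hquadc' : ((μ : ℂ) - nr) * ((μ : ℂ) + ns) = -(ip : ℂ) ^ 2 :=
      mul_right_cancel₀ hβ0 hquadc
    have hquad : (μ - nr) * (μ + ns) = -ip ^ 2 := by exact_mod_cast hquadc'
    have hfact : (μ - η₁) * (μ - η₂) = 0 := by
      rw [hη₁, hη₂]
      linear_combination hquad - (1/4 : ℝ) * hsd2'
    rcases mul_eq_zero.1 hfact with h | h
    · exact Or.inl (by linarith)
    · exact Or.inr (Or.inl (by linarith))
  have tri : ∀ i, hA.eigenvalues i = η₁ ∨ hA.eigenvalues i = η₂ ∨ hA.eigenvalues i = 0 := by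
    intro i
    refine evals (hA.eigenvalues i) ((WithLp.equiv 2 _) (hA.eigenvectorBasis i)) ?_ ?_
    · intro hz
      apply hA.eigenvectorBasis.orthonormal.ne_zero i
      have h2 := congrArg (WithLp.equiv 2 _).symm hz
      simpa using h2
    · rw [show (WithLp.equiv 2 (Fin n → ℂ)) (hA.eigenvectorBasis i) = (hA.eigenvectorBasis i).ofLp from rfl, hA.mulVec_eigenvectorBasis i]
      ext j
      simp [Complex.real_smul]
  -- rank
  have hrank : A.rank = 2 := by
    set z₁ := (c2 : ℂ) * Complex.exp (Complex.I * ((Real.pi - φ : ℝ) : ℂ)) with hz₁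
    set z₂ := (c4 : ℂ) * Complex.exp (Complex.I * ((Real.pi - φ : ℝ) : ℂ)) with hz₂
    have hz12 : z₁ ≠ z₂ := by
      rw [hz₁, hz₂]
      intro h
      have := mul_right_cancel₀ (Complex.exp_ne_zero _) h
      exact hc24.ne (by exact_mod_cast this)
    have hη₁c : (η₁ : ℂ) ≠ 0 := by exact_mod_cast hη₁pos.ne'
    have hη₂c : (η₂ : ℂ) ≠ 0 := by exact_mod_cast hη₂neg.ne
    have hv1mem : r + z₁ • s ∈ LinearMap.range A.mulVecLin := by
      refine ⟨(η₁ : ℂ)⁻¹ • (r + z₁ • s), ?_⟩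
      rw [mulVecLin_apply, mulVec_smul, hv1, smul_smul, inv_mul_cancel₀ hη₁c, one_smul]
    have hv2mem : r + z₂ • s ∈ LinearMap.range A.mulVecLin := by
      refine ⟨(η₂ : ℂ)⁻¹ • (r + z₂ • s), ?_⟩
      rw [mulVecLin_apply, mulVec_smul, hv2, smul_smul, inv_mul_cancel₀ hη₂c, one_smul]
    have hsmem : s ∈ LinearMap.range A.mulVecLin := by
      have hd : (r + z₁ • s) - (r + z₂ • s) = (z₁ - z₂) • s := by
        rw [sub_smul]; abel
      have h := Submodule.sub_mem _ hv1mem hv2mem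
      rw [hd] at h
      have h2 := Submodule.smul_mem _ (z₁ - z₂)⁻¹ h
      rwa [smul_smul, inv_mul_cancel₀ (sub_ne_zero.2 hz12), one_smul] at h2
    have hrmem : r ∈ LinearMap.range A.mulVecLin := by
      have h := Submodule.sub_mem _ hv1mem (Submodule.smul_mem _ z₁ hsmem)
      rwa [add_sub_cancel_right] at h
    have hspan : LinearMap.range A.mulVecLin = Submodule.span ℂ (Set.range ![r, s]) := by
      have hrg : Set.range ![r, s] = {r, s} := by
        ext x
        simp only [Set.mem_range, Fin.exists_fin_two, Matrix.cons_val_zero, Matrix.cons_val_one,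
          Matrix.head_cons, Set.mem_insert_iff, Set.mem_singleton_iff]
        tauto
      rw [hrg]
      apply le_antisymm
      · rintro x ⟨w, rfl⟩
        rw [mulVecLin_apply, hAmul]
        exact Submodule.sub_mem _
          (Submodule.smul_mem _ _ (Submodule.subset_span (Set.mem_insert _ _)))
          (Submodule.smul_mem _ _ (Submodule.subset_span (Set.mem_insert_of_mem _ rfl)))
      · rw [Submodule.span_le]
        rintro x (rfl | rfl)
        · exact hrmem
        · exact hsmem
    have hli : LinearIndependent ℂ ![r, s] := by
      rw [linearIndependent_fin2]
      refine ⟨by simpa using hs, fun a => ?_⟩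
      simpa using (hind a).symm
    have hrk : A.rank = Module.finrank ℂ (LinearMap.range A.mulVecLin) := rfl
    rw [hrk, hspan, finrank_span_eq_card hli, Fintype.card_fin]
  exact ⟨hΔpos, hrank, hη₁pos, hη₂neg, tri, hne c2, hne c4, hv1, hv2⟩
end

section
/- Let h_R, h_E ∈ ℂ^{n_T} be nonzero and ρ > 0. Define F(α) = 1 + ρ‖h_R‖²/2 − (1 + ρ‖h_E‖²/2)α + (ρ/2)√((‖h_R‖² + α‖h_E‖²)² − 4α|h_R†h_E|²) for α > 0 (the quantity under the square root is nonnegative for all α > 0). Then F is strictly decreasing on (0, ∞) and has a unique zero there, equal to α° = (b + √(b² − 4ac))/(2a), where a = 1 + ρ‖h_E‖², b = 2 + ρ‖h_R‖² + ρ‖h_E‖² + ρ²(‖h_R‖²‖h_E‖² − |h_R†h_E|²), c = 1 + ρ‖h_R‖². -/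
open Matrix
open scoped ComplexOrder


lemma aux1 (a c bs : ℝ) (h1 : a ≤ c) (ha : 0 < a) (h2 : 2*c ≤ bs) :
    (1+c)*(2*a) ≤ (1+a)*bs := by nlinarith

lemma aux2 (a c bs : ℝ) (h1 : c ≤ a) (ha : 0 < a) (h2 : 2*a ≤ bs) :
    (1+c)*(2*a) ≤ (1+a)*bs := by nlinarith

-- Pure real analysis part, assuming the key scalar facts.
theorem real_part (ρ : ℝ) (hρ : 0 < ρ) (nr ns ip2 a b c α : ℝ) (F : ℝ → ℝ)
    (hnr0 : 0 < nr) (hns0 : 0 < ns) (hip0 : 0 ≤ ip2) (hcs : ip2 ≤ nr * ns)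
    (ha : a = 1 + ρ * ns)
    (hb : b = 2 + ρ * nr + ρ * ns + ρ ^ 2 * (nr * ns - ip2))
    (hc : c = 1 + ρ * nr)
    (hα : α = (b + Real.sqrt (b ^ 2 - 4 * a * c)) / (2 * a))
    (hF : F = fun t : ℝ => 1 + ρ * nr / 2 - (1 + ρ * ns / 2) * t
        + (ρ / 2) * Real.sqrt ((nr + t * ns) ^ 2 - 4 * t * ip2)) :
    (∀ t : ℝ, 0 < t → 0 ≤ (nr + t * ns) ^ 2 - 4 * t * ip2) ∧
    StrictAntiOn F (Set.Ioi 0) ∧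
    0 < α ∧ F α = 0 ∧
    ∀ t : ℝ, 0 < t → F t = 0 → t = α := by
  have hrad : ∀ t : ℝ, 0 < t → 0 ≤ (nr + t * ns) ^ 2 - 4 * t * ip2 := by
    intro t ht
    nlinarith [sq_nonneg (nr - t * ns), mul_nonneg ht.le (sub_nonneg.2 hcs)]
  -- key sqrt Lipschitz fact
  have key : ∀ t : ℝ, 0 < t →
      ns * (nr + t * ns) - 2 * ip2 ≤ ns * Real.sqrt ((nr + t * ns) ^ 2 - 4 * t * ip2) := by
    intro t ht
    rcases le_or_gt (ns * (nr + t * ns) - 2 * ip2) 0 with h | h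
    · exact h.trans (by positivity)
    · have h1 : (ns * (nr + t * ns) - 2 * ip2) ^ 2 ≤ ns ^ 2 * ((nr + t * ns) ^ 2 - 4 * t * ip2) := by
        nlinarith [mul_nonneg hip0 (sub_nonneg.2 hcs)]
      have h2 := Real.sqrt_le_sqrt h1
      rwa [Real.sqrt_sq h.le, Real.sqrt_mul (sq_nonneg ns), Real.sqrt_sq hns0.le] at h2
  have hlip : ∀ t1 t2 : ℝ, 0 < t1 → t1 < t2 →
      Real.sqrt ((nr + t2 * ns) ^ 2 - 4 * t2 * ip2)
        ≤ Real.sqrt ((nr + t1 * ns) ^ 2 - 4 * t1 * ip2) + ns * (t2 - t1) := by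
    intro t1 t2 h1 hlt
    have hΔ : 0 < t2 - t1 := by linarith
    have hs1 : Real.sqrt ((nr + t1 * ns) ^ 2 - 4 * t1 * ip2) ^ 2
        = (nr + t1 * ns) ^ 2 - 4 * t1 * ip2 := Real.sq_sqrt (hrad t1 h1)
    have hk := key t1 h1
    have hineq : (nr + t2 * ns) ^ 2 - 4 * t2 * ip2
        ≤ (Real.sqrt ((nr + t1 * ns) ^ 2 - 4 * t1 * ip2) + ns * (t2 - t1)) ^ 2 := by
      nlinarith [mul_le_mul_of_nonneg_left hk hΔ.le]
    have h2 := Real.sqrt_le_sqrt hineq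
    rwa [Real.sqrt_sq (by positivity)] at h2
  have hanti : StrictAntiOn F (Set.Ioi 0) := by
    intro t1 h1 t2 h2 hlt
    simp only [Set.mem_Ioi] at h1 h2
    have hl := hlip t1 t2 h1 hlt
    simp only [hF]
    nlinarith [hl, hlt]
  have ha0 : 0 < a := by nlinarith
  have hc0 : 0 < c := by nlinarith
  have hbac : a + c ≤ b := by nlinarith [mul_nonneg (sq_nonneg ρ) (sub_nonneg.2 hcs)]
  have hb0 : 0 < b := by linarith
  have hDge : (a - c) ^ 2 ≤ b ^ 2 - 4 * a * c := by nlinarith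
  have hD0 : 0 ≤ b ^ 2 - 4 * a * c := le_trans (sq_nonneg _) hDge
  obtain ⟨s, hs⟩ : ∃ s, Real.sqrt (b ^ 2 - 4 * a * c) = s := ⟨_, rfl⟩
  rw [hs] at hα
  have hs0 : 0 ≤ s := hs ▸ Real.sqrt_nonneg _
  have hs2 : s ^ 2 = b ^ 2 - 4 * a * c := by rw [← hs]; exact Real.sq_sqrt hD0
  have hsac : |a - c| ≤ s := by
    rw [← hs, ← Real.sqrt_sq_eq_abs]; exact Real.sqrt_le_sqrt hDge
  have hsac1 : a - c ≤ s := le_trans (le_abs_self _) hsac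
  have hsac2 : c - a ≤ s := le_trans (le_abs_self _) (by rwa [abs_sub_comm] at hsac)
  have hα0 : 0 < α := by rw [hα]; positivity
  have hquad : a * α ^ 2 - b * α + c = 0 := by
    rw [hα]; field_simp; ring_nf; linear_combination hs2
  -- P ≥ 0
  have hP : 1 + c ≤ (1 + a) * α := by
    rw [hα, ← mul_div_assoc, le_div_iff₀ (by positivity)]
    rcases le_total a c with hac | hac
    · exact aux1 a c (b+s) hac ha0 (by linarith)
    · exact aux2 a c (b+s) hac ha0 (by linarith)
  have hPv : 0 ≤ (1 + ρ * ns / 2) * α - (1 + ρ * nr / 2) := by nlinarith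
  have hquad' : (1 + ρ*ns) * α ^ 2 - (2 + ρ*nr + ρ*ns + ρ^2*(nr*ns - ip2)) * α + (1 + ρ*nr) = 0 := by
    linear_combination hquad - α ^ 2 * ha + α * hb - hc
  have hρ' : ρ ≠ 0 := ne_of_gt hρ
  have hgα : (nr + α * ns) ^ 2 - 4 * α * ip2
      = (2 / ρ * ((1 + ρ * ns / 2) * α - (1 + ρ * nr / 2))) ^ 2 := by
    field_simp
    linear_combination (-4:ℝ) * hquad'
  have hFα : F α = 0 := by
    simp only [hF]
    rw [hgα, Real.sqrt_sq (by positivity)]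
    field_simp
    ring
  refine ⟨hrad, hanti, hα0, hFα, ?_⟩
  intro t ht hFt
  by_contra hne
  rcases lt_or_gt_of_ne hne with h | h
  · have := hanti (Set.mem_Ioi.2 ht) (Set.mem_Ioi.2 hα0) h
    rw [hFt, hFα] at this; exact lt_irrefl 0 this
  · have := hanti (Set.mem_Ioi.2 hα0) (Set.mem_Ioi.2 ht) h
    rw [hFt, hFα] at this; exact lt_irrefl 0 this

/-- The parametric function
`F(α) = 1 + ρ‖h_R‖²/2 − (1 + ρ‖h_E‖²/2)α + (ρ/2)√((‖h_R‖² + α‖h_E‖²)² − 4α|h_R†h_E|²)`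
is well defined (the radicand is nonnegative for `α > 0`), strictly decreasing on
`(0, ∞)`, and has a unique zero there, equal to `α° = (b + √(b² − 4ac))/(2a)`. -/
theorem stmt_4 (nT : ℕ) (hR hE : Fin nT → ℂ) (hRne : hR ≠ 0) (hEne : hE ≠ 0)
    (ρ : ℝ) (hρ : 0 < ρ) (nr ns ip2 a b c α : ℝ) (F : ℝ → ℝ)
    (hnr : nr = (star hR ⬝ᵥ hR).re) (hns : ns = (star hE ⬝ᵥ hE).re)
    (hip2 : ip2 = ‖star hR ⬝ᵥ hE‖ ^ 2)
    (ha : a = 1 + ρ * ns)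
    (hb : b = 2 + ρ * nr + ρ * ns + ρ ^ 2 * (nr * ns - ip2))
    (hc : c = 1 + ρ * nr)
    (hα : α = (b + Real.sqrt (b ^ 2 - 4 * a * c)) / (2 * a))
    (hF : F = fun t : ℝ => 1 + ρ * nr / 2 - (1 + ρ * ns / 2) * t
        + (ρ / 2) * Real.sqrt ((nr + t * ns) ^ 2 - 4 * t * ip2)) :
    (∀ t : ℝ, 0 < t → 0 ≤ (nr + t * ns) ^ 2 - 4 * t * ip2) ∧
    StrictAntiOn F (Set.Ioi 0) ∧
    0 < α ∧ F α = 0 ∧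
    ∀ t : ℝ, 0 < t → F t = 0 → t = α := by
  set x : EuclideanSpace ℂ (Fin nT) := (WithLp.equiv 2 _).symm hR with hx
  set y : EuclideanSpace ℂ (Fin nT) := (WithLp.equiv 2 _).symm hE with hy
  have h1 : star hR ⬝ᵥ hR = inner ℂ x x := by rw [dotProduct_comm]; rfl
  have h2 : star hE ⬝ᵥ hE = inner ℂ y y := by rw [dotProduct_comm]; rfl
  have h3 : star hR ⬝ᵥ hE = inner ℂ x y := by rw [dotProduct_comm]; rfl
  have hx0 : x ≠ 0 := fun h => hRne (by simpa [hx] using congrArg (WithLp.equiv 2 (Fin nT → ℂ)) h)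
  have hy0 : y ≠ 0 := fun h => hEne (by simpa [hy] using congrArg (WithLp.equiv 2 (Fin nT → ℂ)) h)
  have hxn : (0:ℝ) < ‖x‖ := norm_pos_iff.2 hx0
  have hyn : (0:ℝ) < ‖y‖ := norm_pos_iff.2 hy0
  have e1 : nr = ‖x‖ ^ 2 := by
    rw [hnr, h1]; exact_mod_cast @inner_self_eq_norm_sq ℂ _ _ _ _ x
  have e2 : ns = ‖y‖ ^ 2 := by
    rw [hns, h2]; exact_mod_cast @inner_self_eq_norm_sq ℂ _ _ _ _ y
  have e3 : ‖star hR ⬝ᵥ hE‖ ≤ ‖x‖ * ‖y‖ := by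
    rw [h3]; exact norm_inner_le_norm x y
  have hnr0 : 0 < nr := by rw [e1]; positivity
  have hns0 : 0 < ns := by rw [e2]; positivity
  have hip0 : 0 ≤ ip2 := by rw [hip2]; positivity
  have hcs : ip2 ≤ nr * ns := by
    rw [hip2, e1, e2]
    calc ‖star hR ⬝ᵥ hE‖ ^ 2 ≤ (‖x‖ * ‖y‖) ^ 2 :=
          pow_le_pow_left₀ (by positivity) e3 2
      _ = ‖x‖ ^ 2 * ‖y‖ ^ 2 := by ring
  exact real_part ρ hρ nr ns ip2 a b c α F hnr0 hns0 hip0 hcs ha hb hc hα hF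
end

section
/- In the MISO wiretap channel, suppose h_R = ξ h_E for a scalar ξ ∈ ℂ with h_E ≠ 0. (a) If |ξ| < 1 and n_T ≥ 2, then the secrecy capacity is zero: sup_{Q ∈ Ω} [log(1 + ρ h_R†Q h_R) − log(1 + ρ h_E†Q h_E)] = 0. (b) If |ξ| > 1, then the secrecy capacity equals log((1 + ρ|ξ|²‖h_E‖²)/(1 + ρ‖h_E‖²)) > 0, and it is attained at Q = h_E h_E†/‖h_E‖². -/
open Matrix
open scoped ComplexOrder

variable {n : ℕ}

lemma aux_dot_self (w : Fin n → ℂ) :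
    star w ⬝ᵥ w = ((∑ i, Complex.normSq (w i) : ℝ) : ℂ) := by
  simp [dotProduct, Complex.normSq_eq_conj_mul_self, Complex.ofReal_sum]

lemma aux_mulVec_vecMulVec (w v x : Fin n → ℂ) :
    vecMulVec w v *ᵥ x = (v ⬝ᵥ x) • w := by
  funext i
  simp only [mulVec, dotProduct, vecMulVec_apply, Pi.smul_apply, smul_eq_mul, Finset.sum_mul]
  exact Finset.sum_congr rfl fun j _ => by ring

lemma aux_trace_vecMulVec (w v : Fin n → ℂ) : (vecMulVec w v).trace = v ⬝ᵥ w := by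
  simp only [trace, diag, vecMulVec_apply, dotProduct]
  exact Finset.sum_congr rfl fun j _ => by ring

lemma aux_psd (c : ℝ) (hc : 0 ≤ c) (w : Fin n → ℂ) :
    (((c : ℂ)) • vecMulVec w (star w)).PosSemidef := by
  refine Matrix.PosSemidef.of_dotProduct_mulVec_nonneg ?_ ?_
  · unfold Matrix.IsHermitian
    rw [conjTranspose_smul]
    congr 1
    · simp
    · ext i j
      simp [conjTranspose_apply, vecMulVec_apply, mul_comm]
  · intro x
    rw [smul_mulVec, dotProduct_smul, aux_mulVec_vecMulVec, dotProduct_smul]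
    have h1 : star x ⬝ᵥ w = star (star w ⬝ᵥ x) := star_dotProduct _ _
    rw [h1, smul_eq_mul, smul_eq_mul, Complex.star_def, Complex.mul_conj,
      ← Complex.ofReal_mul, Complex.zero_le_real]
    exact mul_nonneg hc (Complex.normSq_nonneg _)

lemma aux_quad_le (w : Fin n → ℂ) {Q : Matrix (Fin n) (Fin n) ℂ}
    (hQ : Q.PosSemidef) (ht : Q.trace = 1) :
    (star w ⬝ᵥ Q *ᵥ w).re ≤ (star w ⬝ᵥ w).re := by
  obtain ⟨B, rfl⟩ : ∃ B : Matrix (Fin n) (Fin n) ℂ, Q = Bᴴ * B := by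
    open scoped MatrixOrder in
    obtain ⟨B, hB⟩ := CStarAlgebra.nonneg_iff_eq_star_mul_self.mp hQ.nonneg
    exact ⟨B, by rw [hB, star_eq_conjTranspose]⟩
  have key : star w ⬝ᵥ (Bᴴ * B) *ᵥ w = star (B *ᵥ w) ⬝ᵥ (B *ᵥ w) := by
    rw [star_mulVec, ← mulVec_mulVec, dotProduct_mulVec]
  rw [key, aux_dot_self, aux_dot_self, Complex.ofReal_re, Complex.ofReal_re]
  have htr : ∑ j, ∑ i, Complex.normSq (B i j) = 1 := by
    have : (Bᴴ * B).trace.re = (1 : ℂ).re := by rw [ht]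
    simpa [Matrix.trace, Matrix.diag, Matrix.mul_apply, Matrix.conjTranspose_apply,
      Complex.normSq_eq_conj_mul_self, ← Complex.ofReal_sum, Complex.normSq_apply] using this
  calc ∑ i, Complex.normSq ((B *ᵥ w) i)
      ≤ ∑ i, (∑ j, Complex.normSq (B i j)) * ∑ j, Complex.normSq (w j) := by
        refine Finset.sum_le_sum fun i _ => ?_
        have h1 : ‖(B *ᵥ w) i‖ ≤ ∑ j, ‖B i j‖ * ‖w j‖ := by
          simpa [Matrix.mulVec, dotProduct] using
            (norm_sum_le Finset.univ (fun j => B i j * w j))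
        have h2 : (∑ j, ‖B i j‖ * ‖w j‖) ^ 2
            ≤ (∑ j, ‖B i j‖ ^ 2) * ∑ j, ‖w j‖ ^ 2 :=
          Finset.sum_mul_sq_le_sq_mul_sq _ _ _
        have h3 : Complex.normSq ((B *ᵥ w) i) = ‖(B *ᵥ w) i‖ ^ 2 :=
          (Complex.sq_norm _).symm
        rw [h3]
        calc ‖(B *ᵥ w) i‖ ^ 2
            ≤ (∑ j, ‖B i j‖ * ‖w j‖) ^ 2 := by
              apply pow_le_pow_left₀ (norm_nonneg _) h1
          _ ≤ (∑ j, ‖B i j‖ ^ 2) * ∑ j, ‖w j‖ ^ 2 := h2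
          _ = (∑ j, Complex.normSq (B i j)) * ∑ j, Complex.normSq (w j) := by
              simp [Complex.sq_norm]
    _ = ∑ j, Complex.normSq (w j) := by
        rw [← Finset.sum_mul, Finset.sum_comm, htr, one_mul]

lemma aux_log_mono {ρ a s S : ℝ} (hρ : 0 < ρ) (ha : 1 ≤ a) (hs : 0 ≤ s) (hsS : s ≤ S) :
    Real.log (1 + ρ * (a * s)) - Real.log (1 + ρ * s)
      ≤ Real.log (1 + ρ * (a * S)) - Real.log (1 + ρ * S) := by
  have hS : 0 ≤ S := hs.trans hsS
  have ha0 : (0:ℝ) ≤ a := le_trans zero_le_one ha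
  have p1 : 0 < 1 + ρ * (a * s) := by positivity
  have p2 : 0 < 1 + ρ * s := by positivity
  have p3 : 0 < 1 + ρ * (a * S) := by positivity
  have p4 : 0 < 1 + ρ * S := by positivity
  rw [sub_le_sub_iff, ← Real.log_mul (ne_of_gt p1) (ne_of_gt p4),
    ← Real.log_mul (ne_of_gt p3) (ne_of_gt p2)]
  apply Real.log_le_log (by positivity)
  nlinarith [mul_nonneg (mul_nonneg hρ.le hρ.le) (mul_nonneg (sub_nonneg.mpr ha) (sub_nonneg.mpr hsS))]


/-- In the MISO wiretap channel with `h_R = ξ h_E`, `h_E ≠ 0`: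
(a) if `|ξ| < 1` and `n_T ≥ 2`, the secrecy capacity is zero;
(b) if `|ξ| > 1`, the secrecy capacity equals
`log((1 + ρ|ξ|²‖h_E‖²)/(1 + ρ‖h_E‖²)) > 0`, attained at `Q = h_E h_E†/‖h_E‖²`. -/
theorem stmt_5 (nT : ℕ) (hE : Fin nT → ℂ) (hEne : hE ≠ 0) (ξ : ℂ) (ρ : ℝ) (hρ : 0 < ρ) :
    (‖ξ‖ < 1 → 2 ≤ nT →
      sSup {x : ℝ | ∃ Q : Matrix (Fin nT) (Fin nT) ℂ, Q.PosSemidef ∧ Q.trace = 1 ∧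
          x = Real.log (1 + ρ * (star (ξ • hE) ⬝ᵥ (Q *ᵥ (ξ • hE))).re)
            - Real.log (1 + ρ * (star hE ⬝ᵥ (Q *ᵥ hE)).re)} = 0) ∧
    (1 < ‖ξ‖ →
      sSup {x : ℝ | ∃ Q : Matrix (Fin nT) (Fin nT) ℂ, Q.PosSemidef ∧ Q.trace = 1 ∧
          x = Real.log (1 + ρ * (star (ξ • hE) ⬝ᵥ (Q *ᵥ (ξ • hE))).re)
            - Real.log (1 + ρ * (star hE ⬝ᵥ (Q *ᵥ hE)).re)}
        = Real.log ((1 + ρ * ‖ξ‖ ^ 2 * (star hE ⬝ᵥ hE).re)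
            / (1 + ρ * (star hE ⬝ᵥ hE).re)) ∧
      0 < Real.log ((1 + ρ * ‖ξ‖ ^ 2 * (star hE ⬝ᵥ hE).re)
            / (1 + ρ * (star hE ⬝ᵥ hE).re)) ∧
      ((star hE ⬝ᵥ hE)⁻¹ • vecMulVec hE (star hE)).PosSemidef ∧
      ((star hE ⬝ᵥ hE)⁻¹ • vecMulVec hE (star hE)).trace = 1 ∧
      Real.log (1 + ρ * (star (ξ • hE) ⬝ᵥ
            (((star hE ⬝ᵥ hE)⁻¹ • vecMulVec hE (star hE)) *ᵥ (ξ • hE))).re)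
        - Real.log (1 + ρ * (star hE ⬝ᵥ
            (((star hE ⬝ᵥ hE)⁻¹ • vecMulVec hE (star hE)) *ᵥ hE)).re)
        = Real.log ((1 + ρ * ‖ξ‖ ^ 2 * (star hE ⬝ᵥ hE).re)
            / (1 + ρ * (star hE ⬝ᵥ hE).re))) := by
  set a : ℝ := ‖ξ‖ ^ 2 with ha_def
  have ha0 : 0 ≤ a := sq_nonneg _
  set S : ℝ := ∑ i, Complex.normSq (hE i) with hS_def
  have hdot : star hE ⬝ᵥ hE = (S : ℂ) := aux_dot_self hE
  have hre : (star hE ⬝ᵥ hE).re = S := by rw [hdot, Complex.ofReal_re]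
  have hSpos : 0 < S := by
    obtain ⟨i, hi⟩ := Function.ne_iff.mp hEne
    exact Finset.sum_pos' (fun k _ => Complex.normSq_nonneg _)
      ⟨i, Finset.mem_univ i, Complex.normSq_pos.mpr hi⟩
  have hscale : ∀ Q : Matrix (Fin nT) (Fin nT) ℂ,
      (star (ξ • hE) ⬝ᵥ (Q *ᵥ (ξ • hE))).re = a * (star hE ⬝ᵥ (Q *ᵥ hE)).re := by
    intro Q
    simp only [star_smul, smul_dotProduct, Matrix.mulVec_smul, dotProduct_smul,
      smul_eq_mul, Complex.star_def]
    rw [← mul_assoc, mul_comm ξ ((starRingEnd ℂ) ξ), ← Complex.normSq_eq_conj_mul_self,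
      Complex.re_ofReal_mul, ha_def, Complex.sq_norm]
  have qnonneg : ∀ Q : Matrix (Fin nT) (Fin nT) ℂ, Q.PosSemidef →
      0 ≤ (star hE ⬝ᵥ (Q *ᵥ hE)).re := by
    intro Q hQ
    simpa using (Complex.le_def.mp (hQ.dotProduct_mulVec_nonneg hE)).1
  constructor
  · -- part (a)
    intro hξ hnT
    have ha1 : a ≤ 1 := by
      rw [ha_def]
      nlinarith [norm_nonneg ξ]
    apply IsGreatest.csSup_eq
    constructor
    · -- 0 is attained
      obtain ⟨i, hi⟩ := Function.ne_iff.mp hEne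
      have : Nontrivial (Fin nT) := Fin.nontrivial_iff_two_le.mpr hnT
      obtain ⟨j, hj⟩ := exists_ne i
      set v : Fin nT → ℂ := fun k =>
        if k = i then (starRingEnd ℂ) (hE j) else
          if k = j then -(starRingEnd ℂ) (hE i) else 0 with hv_def
      have hvj : v j = -(starRingEnd ℂ) (hE i) := by simp [hv_def, hj]
      have hvne : v j ≠ 0 := by
        rw [hvj]
        simpa using hi
      set Sv : ℝ := ∑ k, Complex.normSq (v k) with hSv_def
      have hSvpos : 0 < Sv :=
        Finset.sum_pos' (fun k _ => Complex.normSq_nonneg _)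
          ⟨j, Finset.mem_univ j, Complex.normSq_pos.mpr hvne⟩
      have hker : star v ⬝ᵥ hE = 0 := by
        have hsum : (∑ k, star (v k) * hE k) = ∑ k ∈ ({i, j} : Finset (Fin nT)),
            star (v k) * hE k := by
          refine (Finset.sum_subset (Finset.subset_univ _) fun k _ hk => ?_).symm
          simp only [Finset.mem_insert, Finset.mem_singleton, not_or] at hk
          simp [hv_def, hk.1, hk.2]
        rw [show star v ⬝ᵥ hE = ∑ k, star (v k) * hE k from rfl, hsum,
          Finset.sum_pair (Ne.symm hj)]
        simp [hv_def, hj, Ne.symm hj]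
        ring
      set Qv : Matrix (Fin nT) (Fin nT) ℂ := ((Sv⁻¹ : ℝ) : ℂ) • vecMulVec v (star v)
        with hQv_def
      have hQvpsd : Qv.PosSemidef := aux_psd Sv⁻¹ (by positivity) v
      have hQvtr : Qv.trace = 1 := by
        rw [hQv_def, trace_smul, aux_trace_vecMulVec, aux_dot_self, smul_eq_mul,
          ← Complex.ofReal_mul, inv_mul_cancel₀ (ne_of_gt hSvpos), Complex.ofReal_one]
      have hQvvec : Qv *ᵥ hE = 0 := by
        rw [hQv_def, smul_mulVec, aux_mulVec_vecMulVec, hker, zero_smul, smul_zero]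
      refine ⟨Qv, hQvpsd, hQvtr, ?_⟩
      rw [hscale Qv, hQvvec]
      simp
    · -- 0 is an upper bound
      rintro x ⟨Q, hQ, htr, rfl⟩
      rw [hscale Q]
      set s : ℝ := (star hE ⬝ᵥ (Q *ᵥ hE)).re with hs_def
      have hs0 : 0 ≤ s := qnonneg Q hQ
      have h1 : (0:ℝ) < 1 + ρ * (a * s) := by positivity
      refine sub_nonpos.mpr (Real.log_le_log h1 ?_)
      nlinarith [mul_le_mul_of_nonneg_left (mul_le_of_le_one_left hs0 ha1) hρ.le]
  · -- part (b)
    intro hξ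
    have ha1 : 1 ≤ a := by
      rw [ha_def]
      nlinarith
    have htne : (star hE ⬝ᵥ hE) ≠ 0 := by
      rw [hdot]
      exact_mod_cast ne_of_gt hSpos
    have hinv : (star hE ⬝ᵥ hE)⁻¹ = ((S⁻¹ : ℝ) : ℂ) := by
      rw [hdot, Complex.ofReal_inv]
    have hQpsd : ((star hE ⬝ᵥ hE)⁻¹ • vecMulVec hE (star hE)).PosSemidef := by
      rw [hinv]
      exact aux_psd S⁻¹ (by positivity) hE
    have hQtr : ((star hE ⬝ᵥ hE)⁻¹ • vecMulVec hE (star hE)).trace = 1 := by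
      rw [trace_smul, aux_trace_vecMulVec, smul_eq_mul, inv_mul_cancel₀ htne]
    have hQvec : ((star hE ⬝ᵥ hE)⁻¹ • vecMulVec hE (star hE)) *ᵥ hE = hE := by
      rw [smul_mulVec, aux_mulVec_vecMulVec, smul_smul, inv_mul_cancel₀ htne, one_smul]
    have p2 : (0:ℝ) < 1 + ρ * S := by positivity
    have p1 : (0:ℝ) < 1 + ρ * a * S := by positivity
    have hVdiff : Real.log ((1 + ρ * a * S) / (1 + ρ * S))
        = Real.log (1 + ρ * (a * S)) - Real.log (1 + ρ * S) := by
      rw [Real.log_div (by positivity) (ne_of_gt p2), mul_assoc]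
    have hattain : Real.log (1 + ρ * (star (ξ • hE) ⬝ᵥ
          (((star hE ⬝ᵥ hE)⁻¹ • vecMulVec hE (star hE)) *ᵥ (ξ • hE))).re)
        - Real.log (1 + ρ * (star hE ⬝ᵥ
          (((star hE ⬝ᵥ hE)⁻¹ • vecMulVec hE (star hE)) *ᵥ hE)).re)
        = Real.log ((1 + ρ * a * (star hE ⬝ᵥ hE).re) / (1 + ρ * (star hE ⬝ᵥ hE).re)) := by
      rw [hscale, hQvec, hre]
      exact hVdiff.symm
    refine ⟨?_, ?_, hQpsd, hQtr, hattain⟩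
    · apply IsGreatest.csSup_eq
      constructor
      · exact ⟨_, hQpsd, hQtr, hattain.symm⟩
      · rintro x ⟨Q, hQ, htr, rfl⟩
        rw [hscale Q, hre, hVdiff]
        exact aux_log_mono hρ ha1 (qnonneg Q hQ) (hre ▸ aux_quad_le hE hQ htr)
    · rw [hre]
      apply Real.log_pos
      rw [lt_div_iff₀ p2]
      have ha1' : 1 < a := by nlinarith
      nlinarith [mul_pos (mul_pos hρ hSpos) (sub_pos.mpr ha1')]
end

section
/- In the MISO wiretap channel, if h_R is not a scalar multiple of h_E (in particular h_R ≠ 0), then for every ρ > 0 the secrecy capacity is strictly positive: sup_{Q ∈ Ω} [log(1 + ρ h_R†Q h_R) − log(1 + ρ h_E†Q h_E)] > 0. -/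
open Matrix
open scoped ComplexOrder


lemma cs {n : ℕ} (a b : Fin n → ℂ) :
    Complex.normSq (∑ j, a j * b j) ≤ (∑ j, Complex.normSq (a j)) * (∑ j, Complex.normSq (b j)) := by
  have h1 : ‖∑ j, a j * b j‖ ≤ ∑ j, ‖a j‖ * ‖b j‖ :=
    (norm_sum_le _ _).trans_eq (Finset.sum_congr rfl fun j _ => norm_mul _ _)
  calc Complex.normSq (∑ j, a j * b j) = ‖∑ j, a j * b j‖ ^ 2 := (Complex.sq_norm _).symm
    _ ≤ (∑ j, ‖a j‖ * ‖b j‖) ^ 2 := pow_le_pow_left₀ (norm_nonneg _) h1 2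
    _ ≤ (∑ j, ‖a j‖ ^ 2) * (∑ j, ‖b j‖ ^ 2) := Finset.sum_mul_sq_le_sq_mul_sq _ _ _
    _ = _ := by simp only [Complex.sq_norm]

lemma dot_self_eq {n : ℕ} (w : Fin n → ℂ) :
    star w ⬝ᵥ w = ((∑ i, Complex.normSq (w i) : ℝ) : ℂ) := by
  simp [dotProduct, Complex.normSq_eq_conj_mul_self]

lemma outer_dot {n : ℕ} (w x y : Fin n → ℂ) :
    star x ⬝ᵥ (vecMulVec w (star w)) *ᵥ y = (star x ⬝ᵥ w) * (star w ⬝ᵥ y) := by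
  simp only [dotProduct, mulVec, vecMulVec_apply, Pi.star_apply, Finset.mul_sum, Finset.sum_mul]
  rw [Finset.sum_comm]
  refine Finset.sum_congr rfl fun i _ => Finset.sum_congr rfl fun j _ => by ring

lemma trace_outer {n : ℕ} (w : Fin n → ℂ) :
    (vecMulVec w (star w)).trace = ((∑ i, Complex.normSq (w i) : ℝ) : ℂ) := by
  simp [Matrix.trace, Matrix.diag, vecMulVec_apply, Complex.mul_conj]

lemma dot_conj {n : ℕ} (x y : Fin n → ℂ) :
    star x ⬝ᵥ y = (starRingEnd ℂ) (star y ⬝ᵥ x) := by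
  simp only [dotProduct, Pi.star_apply, map_sum, _root_.map_mul, Complex.star_def,
    Complex.conj_conj]
  exact Finset.sum_congr rfl fun i _ => mul_comm _ _

lemma quad_bound {n : ℕ} {Q : Matrix (Fin n) (Fin n) ℂ} (hQ : Q.PosSemidef)
    (ht : Q.trace = 1) (x : Fin n → ℂ) :
    (star x ⬝ᵥ Q *ᵥ x).re ≤ ∑ i, Complex.normSq (x i) := by
  obtain ⟨B, rfl⟩ : ∃ B : Matrix (Fin n) (Fin n) ℂ, Q = Bᴴ * B := by
    classical
    open scoped MatrixOrder in
    obtain ⟨B, hB⟩ := CStarAlgebra.nonneg_iff_eq_star_mul_self.mp hQ.nonneg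
    exact ⟨B, hB⟩
  have h1 : star x ⬝ᵥ (Bᴴ * B) *ᵥ x = star (B *ᵥ x) ⬝ᵥ (B *ᵥ x) := by
    rw [← mulVec_mulVec, dotProduct_mulVec, ← star_mulVec]
  have htr : (∑ i, ∑ j, Complex.normSq (B j i)) = 1 := by
    have h2 : (Bᴴ * B).trace = ((∑ i, ∑ j, Complex.normSq (B j i) : ℝ) : ℂ) := by
      simp [Matrix.trace, Matrix.diag, Matrix.mul_apply, conjTranspose_apply,
        Complex.normSq_eq_conj_mul_self]
    rw [h2] at ht
    exact_mod_cast ht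
  rw [h1, dot_self_eq, Complex.ofReal_re]
  calc ∑ i, Complex.normSq ((B *ᵥ x) i)
      ≤ ∑ i, (∑ j, Complex.normSq (B i j)) * (∑ j, Complex.normSq (x j)) := by
        refine Finset.sum_le_sum fun i _ => ?_
        simpa [Matrix.mulVec, dotProduct] using cs (fun j => B i j) x
    _ = (∑ i, ∑ j, Complex.normSq (B i j)) * (∑ j, Complex.normSq (x j)) := by
        rw [Finset.sum_mul]
    _ = 1 * (∑ j, Complex.normSq (x j)) := by rw [Finset.sum_comm] at htr; rw [htr]
    _ = _ := one_mul _


/-- In the MISO wiretap channel, if `h_R` is not a scalar multiple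
of `h_E`, then for every `ρ > 0` the secrecy capacity is strictly positive. -/
theorem stmt_6 (nT : ℕ) (hR hE : Fin nT → ℂ) (hEne : hE ≠ 0)
    (hind : ∀ c : ℂ, hR ≠ c • hE) (ρ : ℝ) (hρ : 0 < ρ) :
    0 < sSup {x : ℝ | ∃ Q : Matrix (Fin nT) (Fin nT) ℂ, Q.PosSemidef ∧ Q.trace = 1 ∧
        x = Real.log (1 + ρ * (star hR ⬝ᵥ (Q *ᵥ hR)).re)
          - Real.log (1 + ρ * (star hE ⬝ᵥ (Q *ᵥ hE)).re)} := by
  set S := {x : ℝ | ∃ Q : Matrix (Fin nT) (Fin nT) ℂ, Q.PosSemidef ∧ Q.trace = 1 ∧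
        x = Real.log (1 + ρ * (star hR ⬝ᵥ (Q *ᵥ hR)).re)
          - Real.log (1 + ρ * (star hE ⬝ᵥ (Q *ᵥ hE)).re)} with hS
  -- the orthogonal component of hR w.r.t. hE
  set NE : ℝ := ∑ i, Complex.normSq (hE i) with hNE
  have hNEpos : 0 < NE := by
    obtain ⟨i, hi⟩ := Function.ne_iff.mp hEne
    exact Finset.sum_pos' (fun j _ => Complex.normSq_nonneg _)
      ⟨i, Finset.mem_univ i, Complex.normSq_pos.mpr hi⟩
  set c : ℂ := (star hE ⬝ᵥ hR) / (NE : ℂ) with hc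
  set w : Fin nT → ℂ := hR - c • hE with hw
  have hwne : w ≠ 0 := by
    intro h
    exact hind c (by rw [← sub_eq_zero]; exact h)
  set N : ℝ := ∑ i, Complex.normSq (w i) with hN
  have hNpos : 0 < N := by
    obtain ⟨i, hi⟩ := Function.ne_iff.mp hwne
    exact Finset.sum_pos' (fun j _ => Complex.normSq_nonneg _)
      ⟨i, Finset.mem_univ i, Complex.normSq_pos.mpr hi⟩
  have hNC : ((N : ℂ)) ≠ 0 := by exact_mod_cast hNpos.ne'
  -- orthogonality
  have horth : star hE ⬝ᵥ w = 0 := by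
    rw [hw, dotProduct_sub, dotProduct_smul, dot_self_eq, ← hNE, hc, smul_eq_mul,
      div_mul_cancel₀ _ (by exact_mod_cast hNEpos.ne' : (NE : ℂ) ≠ 0), sub_self]
  have horth' : star w ⬝ᵥ hE = 0 := by
    rw [dot_conj, horth, map_zero]
  have hww : star w ⬝ᵥ w = (N : ℂ) := dot_self_eq w
  have hwR : star w ⬝ᵥ hR = (N : ℂ) := by
    have : hR = w + c • hE := by rw [hw]; ring_nf
    rw [this, dotProduct_add, dotProduct_smul, hww, horth', smul_eq_mul, mul_zero, add_zero]
  have hRw : star hR ⬝ᵥ w = (N : ℂ) := by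
    rw [dot_conj, hwR]; simp
  -- the witness matrix
  set Q : Matrix (Fin nT) (Fin nT) ℂ := ((N : ℂ))⁻¹ • vecMulVec w (star w) with hQdef
  have hQval : ∀ x y : Fin nT → ℂ,
      star x ⬝ᵥ Q *ᵥ y = ((N : ℂ))⁻¹ * ((star x ⬝ᵥ w) * (star w ⬝ᵥ y)) := by
    intro x y
    rw [hQdef, smul_mulVec, dotProduct_smul, smul_eq_mul, outer_dot]
  have hQpsd : Q.PosSemidef := by
    refine PosSemidef.of_dotProduct_mulVec_nonneg ?_ ?_
    · ext i j
      simp only [hQdef, conjTranspose_apply, Matrix.smul_apply, vecMulVec_apply, Pi.star_apply,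
        smul_eq_mul, Complex.star_def, _root_.map_mul, map_inv₀, Complex.conj_conj,
        Complex.conj_ofReal]
      ring
    · intro x
      rw [hQval x x]
      have h1 : star x ⬝ᵥ w = (starRingEnd ℂ) (star w ⬝ᵥ x) := dot_conj x w
      rw [h1, ← Complex.normSq_eq_conj_mul_self, ← Complex.ofReal_inv,
        ← Complex.ofReal_mul]
      rw [Complex.zero_le_real]
      exact mul_nonneg (inv_nonneg.mpr hNpos.le) (Complex.normSq_nonneg _)
  have hQtr : Q.trace = 1 := by
    rw [hQdef, trace_smul, trace_outer, ← hN, smul_eq_mul, inv_mul_cancel₀ hNC]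
  have hQR : (star hR ⬝ᵥ Q *ᵥ hR).re = N := by
    rw [hQval, hRw, hwR, ← Complex.ofReal_inv, ← Complex.ofReal_mul, ← Complex.ofReal_mul,
      Complex.ofReal_re, inv_mul_cancel_left₀ hNpos.ne']
  have hQE : (star hE ⬝ᵥ Q *ᵥ hE).re = 0 := by
    simp [hQval, horth']
  -- the witness value
  have hmem : Real.log (1 + ρ * N) ∈ S := by
    refine ⟨Q, hQpsd, hQtr, ?_⟩
    rw [hQR, hQE, mul_zero, add_zero, Real.log_one, sub_zero]
  have hpos : 0 < Real.log (1 + ρ * N) :=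
    Real.log_pos (by nlinarith)
  -- bounded above
  have hbdd : BddAbove S := by
    refine ⟨Real.log (1 + ρ * ∑ i, Complex.normSq (hR i)), fun x hx => ?_⟩
    obtain ⟨P, hP, hPt, rfl⟩ := hx
    have ha0 : 0 ≤ (star hR ⬝ᵥ P *ᵥ hR).re := (Complex.le_def.mp (hP.dotProduct_mulVec_nonneg hR)).1
    have hb0 : 0 ≤ (star hE ⬝ᵥ P *ᵥ hE).re := (Complex.le_def.mp (hP.dotProduct_mulVec_nonneg hE)).1
    have ha1 : (star hR ⬝ᵥ P *ᵥ hR).re ≤ ∑ i, Complex.normSq (hR i) :=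
      quad_bound hP hPt hR
    have h2 : Real.log (1 + ρ * (star hR ⬝ᵥ P *ᵥ hR).re)
        ≤ Real.log (1 + ρ * ∑ i, Complex.normSq (hR i)) := by
      apply Real.log_le_log (by nlinarith)
      nlinarith
    have h3 : 0 ≤ Real.log (1 + ρ * (star hE ⬝ᵥ P *ᵥ hE).re) :=
      Real.log_nonneg (by nlinarith)
    linarith
  exact lt_csSup_of_lt hbdd hmem hpos
end

section
/- In the MISO wiretap channel, assume h_E ≠ 0 and h_R is not a scalar multiple of h_E. Let C_s(ρ) = sup_{Q ∈ Ω} [log(1 + ρ h_R†Q h_R) − log(1 + ρ h_E†Q h_E)]. Then lim_{ρ→∞} (C_s(ρ) − log ρ) = log(‖h_R‖² − |h_R†h_E|²/‖h_E‖²), where the argument of the logarithm is strictly positive; consequently the secrecy degree of freedom lim_{ρ→∞} C_s(ρ)/log ρ equals 1. -/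
set_option maxHeartbeats 1000000

open Matrix
open scoped ComplexOrder

noncomputable section
namespace Stmt7

variable {n m : ℕ}

def nsq (x : Fin n → ℂ) : ℝ := ∑ i, Complex.normSq (x i)

lemma nsq_nonneg (x : Fin n → ℂ) : 0 ≤ nsq x :=
  Finset.sum_nonneg fun _ _ => Complex.normSq_nonneg _

lemma nsq_pos {x : Fin n → ℂ} (hx : x ≠ 0) : 0 < nsq x := by
  rcases (nsq_nonneg x).lt_or_eq with h | h
  · exact h
  · exfalso; apply hx; funext i
    have := (Finset.sum_eq_zero_iff_of_nonneg (fun i _ => Complex.normSq_nonneg (x i))).mp h.symm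
    exact Complex.normSq_eq_zero.mp (this i (Finset.mem_univ i))

lemma dot_self (x : Fin n → ℂ) : star x ⬝ᵥ x = (nsq x : ℂ) := by
  simp only [dotProduct, Pi.star_apply, nsq, Complex.ofReal_sum]
  exact Finset.sum_congr rfl fun i _ => by
    rw [Complex.normSq_eq_conj_mul_self]; rfl

def toE (x : Fin n → ℂ) : EuclideanSpace ℂ (Fin n) := (WithLp.equiv 2 _).symm x

lemma norm_toE_sq (x : Fin n → ℂ) : ‖toE x‖ ^ 2 = nsq x := by
  rw [EuclideanSpace.norm_eq, Real.sq_sqrt (Finset.sum_nonneg fun i _ => sq_nonneg _)]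
  exact Finset.sum_congr rfl fun i _ => by
    simp [toE, Complex.sq_norm]

lemma sqrt_nsq (x : Fin n → ℂ) : Real.sqrt (nsq x) = ‖toE x‖ := by
  rw [← norm_toE_sq, Real.sqrt_sq (norm_nonneg _)]

lemma triangle (c : ℂ) (u w : Fin n → ℂ) :
    Real.sqrt (nsq (c • u + w)) ≤ ‖c‖ * Real.sqrt (nsq u) + Real.sqrt (nsq w) := by
  rw [sqrt_nsq, sqrt_nsq, sqrt_nsq]
  have h : toE (c • u + w) = c • toE u + toE w := by simp [toE]
  rw [h]
  calc ‖c • toE u + toE w‖ ≤ ‖c • toE u‖ + ‖toE w‖ := norm_add_le _ _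
    _ = ‖c‖ * ‖toE u‖ + ‖toE w‖ := by rw [norm_smul]

lemma quadform (B : Matrix (Fin m) (Fin n) ℂ) (x y : Fin n → ℂ) :
    star x ⬝ᵥ ((Bᴴ * B) *ᵥ y) = star (B *ᵥ x) ⬝ᵥ (B *ᵥ y) := by
  rw [← mulVec_mulVec, dotProduct_mulVec, ← star_mulVec]

lemma quadform_re (B : Matrix (Fin m) (Fin n) ℂ) (x : Fin n → ℂ) :
    (star x ⬝ᵥ ((Bᴴ * B) *ᵥ x)).re = nsq (B *ᵥ x) := by
  rw [quadform, dot_self, Complex.ofReal_re]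

lemma trace_eq (B : Matrix (Fin m) (Fin n) ℂ) :
    (Bᴴ * B).trace = ((∑ i, ∑ j, Complex.normSq (B i j) : ℝ) : ℂ) := by
  simp only [trace, diag, mul_apply, conjTranspose_apply]
  push_cast
  rw [Finset.sum_comm]
  exact Finset.sum_congr rfl fun i _ => Finset.sum_congr rfl fun j _ => by
    rw [Complex.normSq_eq_conj_mul_self]; rfl

lemma frobenius (B : Matrix (Fin m) (Fin n) ℂ) (x : Fin n → ℂ) :
    nsq (B *ᵥ x) ≤ (∑ i, ∑ j, Complex.normSq (B i j)) * nsq x := by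
  simp only [nsq]
  rw [Finset.sum_mul]
  apply Finset.sum_le_sum
  intro i _
  calc Complex.normSq ((B *ᵥ x) i) ≤ (∑ j, ‖B i j‖ * ‖x j‖) ^ 2 := by
        rw [Complex.normSq_eq_norm_sq]
        apply pow_le_pow_left₀ (norm_nonneg _)
        calc ‖(B *ᵥ x) i‖ ≤ ∑ j, ‖B i j * x j‖ := by
              simpa [mulVec, dotProduct] using norm_sum_le Finset.univ (fun j => B i j * x j)
          _ = ∑ j, ‖B i j‖ * ‖x j‖ := by simp [_root_.map_mul]
    _ ≤ (∑ j, ‖B i j‖ ^ 2) * ∑ j, ‖x j‖ ^ 2 :=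
        Finset.sum_mul_sq_le_sq_mul_sq _ _ _
    _ = (∑ j, Complex.normSq (B i j)) * ∑ j, Complex.normSq (x j) := by
        simp [Complex.sq_norm]

/-- construction of the optimal `Q` (beamforming orthogonal to `hE`). -/
lemma exists_opt (hR hE g : Fin n → ℂ) (hgE : star g ⬝ᵥ hE = 0)
    (hgR : star g ⬝ᵥ hR = (nsq g : ℂ)) (hg : 0 < nsq g) :
    ∃ Q : Matrix (Fin n) (Fin n) ℂ, Q.PosSemidef ∧ Q.trace = 1 ∧
      (star hR ⬝ᵥ (Q *ᵥ hR)).re = nsq g ∧ (star hE ⬝ᵥ (Q *ᵥ hE)).re = 0 := by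
  set s : ℝ := (Real.sqrt (nsq g))⁻¹ with hs
  have hs2 : s ^ 2 = (nsq g)⁻¹ := by
    rw [hs, inv_pow, Real.sq_sqrt hg.le]
  set B : Matrix (Fin 1) (Fin n) ℂ := fun _ j => (s : ℂ) * star (g j) with hB
  have hBv : ∀ x : Fin n → ℂ, B *ᵥ x = fun _ => (s : ℂ) * (star g ⬝ᵥ x) := by
    intro x; funext i
    simp [hB, mulVec, dotProduct, Finset.mul_sum, mul_assoc]
  refine ⟨Bᴴ * B, posSemidef_conjTranspose_mul_self B, ?_, ?_, ?_⟩
  · rw [trace_eq]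
    have : ∑ i, ∑ j, Complex.normSq (B i j) = 1 := by
      simp only [hB, Complex.normSq_mul, Complex.normSq_ofReal, Fin.sum_univ_one]
      have : ∀ j, Complex.normSq (star (g j)) = Complex.normSq (g j) := by
        intro j; simp [Complex.normSq_conj]
      simp only [this, ← Finset.mul_sum]
      have h1 : s * s = (nsq g)⁻¹ := by rw [← sq]; exact hs2
      rw [h1]
      exact inv_mul_cancel₀ hg.ne'
    rw [this, Complex.ofReal_one]
  · rw [quadform_re, hBv hR, hgR]
    simp only [nsq, Fin.sum_univ_one, Complex.normSq_mul, Complex.normSq_ofReal]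
    have h1 : s * s = (nsq g)⁻¹ := by rw [← sq]; exact hs2
    show s * s * (nsq g * nsq g) = nsq g
    rw [h1]
    field_simp
  · rw [quadform_re, hBv hE, hgE]
    simp [nsq]

/-- key arithmetic inequality for the upper bound. -/
lemma key (K ε A ρ a b : ℝ) (hK : 0 < K) (hε : 0 < ε) (hA : 0 ≤ A)
    (hρ1 : 2/ε ≤ ρ) (hρ2 : (1 + 2*K/ε)*A^2/(K+ε) ≤ ρ) (hρ0 : 1 ≤ ρ)
    (hb : 0 ≤ b) (ha : a ≤ (A * Real.sqrt b + Real.sqrt K)^2) :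
    1 + ρ * a ≤ (K + ε) * (ρ * (1 + ρ * b)) := by
  have hρpos : (0:ℝ) < ρ := lt_of_lt_of_le one_pos hρ0
  set u := Real.sqrt K with hu'
  set v := Real.sqrt b with hv'
  have hu : u ^ 2 = K := Real.sq_sqrt hK.le
  have hv : v ^ 2 = b := Real.sq_sqrt hb
  have hu0 : 0 ≤ u := Real.sqrt_nonneg _
  have hv0 : 0 ≤ v := Real.sqrt_nonneg _
  have ht : (0:ℝ) < 2*K/ε := by positivity
  -- 2*u*(A*v) ≤ ε/2 + (2*K/ε)*(A^2*b)
  have hupos : 0 < u := Real.sqrt_pos.mpr hK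
  have h1 : 2*u*(A*v) ≤ ε/2 + (2*K/ε)*(A^2*b) := by
    have hid : ε/2 + (2*K/ε)*(A^2*b) - 2*u*(A*v) = (ε/(2*K)) * (u - (2*K/ε)*(A*v))^2 := by
      rw [← hu, ← hv]
      field_simp
      ring
    nlinarith [mul_nonneg (by positivity : (0:ℝ) ≤ ε/(2*K)) (sq_nonneg (u - (2*K/ε)*(A*v)))]
  have ha2 : a ≤ K + ε/2 + (1 + 2*K/ε)*A^2*b := by nlinarith
  have hC : (1 + 2*K/ε)*A^2 ≤ (K+ε)*ρ := by
    rw [div_le_iff₀ (by positivity : (0:ℝ) < K+ε)] at hρ2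
    linarith [hρ2]
  have h1e : 1 ≤ ρ * ε / 2 := by
    rw [div_le_iff₀ hε] at hρ1
    linarith
  nlinarith [mul_le_mul_of_nonneg_left ha2 hρpos.le,
    mul_le_mul_of_nonneg_right hC (mul_nonneg hρpos.le hb),
    mul_nonneg (mul_nonneg hρpos.le hρpos.le) hb]

end Stmt7
end

open scoped ComplexOrder in
/-- In the MISO wiretap channel with `h_E ≠ 0` and `h_R` not a
scalar multiple of `h_E`, the secrecy capacity `C_s(ρ)` satisfies
`C_s(ρ) − log ρ → log(‖h_R‖² − |h_R†h_E|²/‖h_E‖²)` as `ρ → ∞` (the argument of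
the logarithm being strictly positive), and hence `C_s(ρ)/log ρ → 1`. -/
theorem stmt_7 (nT : ℕ) (hR hE : Fin nT → ℂ) (hEne : hE ≠ 0)
    (hind : ∀ c : ℂ, hR ≠ c • hE) :
    0 < (star hR ⬝ᵥ hR).re - ‖star hR ⬝ᵥ hE‖ ^ 2 / (star hE ⬝ᵥ hE).re ∧
    Filter.Tendsto (fun ρ : ℝ =>
        sSup {x : ℝ | ∃ Q : Matrix (Fin nT) (Fin nT) ℂ, Q.PosSemidef ∧ Q.trace = 1 ∧
            x = Real.log (1 + ρ * (star hR ⬝ᵥ (Q *ᵥ hR)).re)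
              - Real.log (1 + ρ * (star hE ⬝ᵥ (Q *ᵥ hE)).re)} - Real.log ρ)
      Filter.atTop
      (nhds (Real.log ((star hR ⬝ᵥ hR).re
          - ‖star hR ⬝ᵥ hE‖ ^ 2 / (star hE ⬝ᵥ hE).re))) ∧
    Filter.Tendsto (fun ρ : ℝ =>
        sSup {x : ℝ | ∃ Q : Matrix (Fin nT) (Fin nT) ℂ, Q.PosSemidef ∧ Q.trace = 1 ∧
            x = Real.log (1 + ρ * (star hR ⬝ᵥ (Q *ᵥ hR)).re)
              - Real.log (1 + ρ * (star hE ⬝ᵥ (Q *ᵥ hE)).re)} / Real.log ρ)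
      Filter.atTop (nhds 1) := by
  classical
  have hEpos : 0 < Stmt7.nsq hE := Stmt7.nsq_pos hEne
  set α : ℂ := (star hE ⬝ᵥ hR) / (Stmt7.nsq hE : ℂ) with hα
  set g : Fin nT → ℂ := hR - α • hE with hg
  have hgne : g ≠ 0 := fun h => hind α (by rwa [hg, sub_eq_zero] at h)
  have hK : 0 < Stmt7.nsq g := Stmt7.nsq_pos hgne
  have hEc : ((Stmt7.nsq hE : ℝ) : ℂ) ≠ 0 := by exact_mod_cast hEpos.ne'
  have hstarD : star (star hE ⬝ᵥ hR) = star hR ⬝ᵥ hE := (star_dotProduct hR hE).symm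
  have hsα : star α = (star hR ⬝ᵥ hE) / (Stmt7.nsq hE : ℂ) := by
    rw [hα, star_div₀, hstarD]
    congr 1
    simp [Complex.star_def, Complex.conj_ofReal]
  have hgEo : star g ⬝ᵥ hE = 0 := by
    rw [hg, star_sub, sub_dotProduct, star_smul, smul_dotProduct, smul_eq_mul,
      Stmt7.dot_self hE, hsα]
    field_simp
    ring
  have hexp : ∀ v : Fin nT → ℂ, v ⬝ᵥ g = v ⬝ᵥ hR - α * (v ⬝ᵥ hE) := by
    intro v; rw [hg, dotProduct_sub, dotProduct_smul, smul_eq_mul]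
  have hgg : star g ⬝ᵥ g = star g ⬝ᵥ hR := by
    rw [hexp, hgEo, mul_zero, sub_zero]
  have hgR : star g ⬝ᵥ hR = (Stmt7.nsq g : ℂ) := by
    rw [← hgg, Stmt7.dot_self]
  have hexp2 : star g ⬝ᵥ hR = star hR ⬝ᵥ hR - star α * (star hE ⬝ᵥ hR) := by
    rw [hg, star_sub, star_smul, sub_dotProduct, smul_dotProduct, smul_eq_mul]
  have hDD : star α * (star hE ⬝ᵥ hR)
      = ((‖star hR ⬝ᵥ hE‖ ^ 2 : ℝ) : ℂ) / (Stmt7.nsq hE : ℂ) := by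
    rw [hsα, div_mul_eq_mul_div]
    congr 1
    rw [← hstarD]
    simp [Complex.norm_conj, Complex.sq_norm, ← Complex.normSq_eq_conj_mul_self]
  have hKc : (Stmt7.nsq g : ℂ) = ((Stmt7.nsq hR : ℝ) : ℂ)
      - ((‖star hR ⬝ᵥ hE‖ ^ 2 : ℝ) : ℂ) / (Stmt7.nsq hE : ℂ) := by
    rw [← hgR, hexp2, hDD, Stmt7.dot_self hR]
  have hKr : Stmt7.nsq g = Stmt7.nsq hR - ‖star hR ⬝ᵥ hE‖ ^ 2 / Stmt7.nsq hE := by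
    have h := hKc
    rw [show ((Stmt7.nsq hR : ℝ) : ℂ)
        - ((‖star hR ⬝ᵥ hE‖ ^ 2 : ℝ) : ℂ) / ((Stmt7.nsq hE : ℝ) : ℂ)
        = (((Stmt7.nsq hR - ‖star hR ⬝ᵥ hE‖ ^ 2 / Stmt7.nsq hE : ℝ)) : ℂ) by
      push_cast; ring] at h
    exact_mod_cast h
  have hKeq : (star hR ⬝ᵥ hR).re - ‖star hR ⬝ᵥ hE‖ ^ 2 / (star hE ⬝ᵥ hE).re
      = Stmt7.nsq g := by
    rw [Stmt7.dot_self hR, Stmt7.dot_self hE, Complex.ofReal_re, Complex.ofReal_re, hKr]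
  obtain ⟨Q0, hQ0psd, hQ0tr, hQ0a, hQ0b⟩ := Stmt7.exists_opt hR hE g hgEo hgR hK
  set K := Stmt7.nsq g with hKdef
  set S : ℝ → Set ℝ := fun ρ =>
    {x : ℝ | ∃ Q : Matrix (Fin nT) (Fin nT) ℂ, Q.PosSemidef ∧ Q.trace = 1 ∧
        x = Real.log (1 + ρ * (star hR ⬝ᵥ (Q *ᵥ hR)).re)
          - Real.log (1 + ρ * (star hE ⬝ᵥ (Q *ᵥ hE)).re)} with hSdef
  have hmem : ∀ ρ : ℝ, Real.log (1 + ρ * K) ∈ S ρ := by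
    intro ρ
    refine ⟨Q0, hQ0psd, hQ0tr, ?_⟩
    rw [hQ0a, hQ0b, mul_zero, add_zero, Real.log_one, sub_zero]
  set A : ℝ := ‖α‖ with hA
  have hA0 : 0 ≤ A := norm_nonneg _
  have hQprops : ∀ Q : Matrix (Fin nT) (Fin nT) ℂ, Q.PosSemidef → Q.trace = 1 →
      0 ≤ (star hE ⬝ᵥ (Q *ᵥ hE)).re ∧ 0 ≤ (star hR ⬝ᵥ (Q *ᵥ hR)).re ∧
      (star hR ⬝ᵥ (Q *ᵥ hR)).re ≤ Stmt7.nsq hR ∧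
      (star hR ⬝ᵥ (Q *ᵥ hR)).re
        ≤ (A * Real.sqrt ((star hE ⬝ᵥ (Q *ᵥ hE)).re) + Real.sqrt K) ^ 2 := by
    intro Q hpsd htr
    open scoped MatrixOrder in
    obtain ⟨B, hB⟩ := CStarAlgebra.nonneg_iff_eq_star_mul_self.mp hpsd.nonneg
    rw [star_eq_conjTranspose] at hB
    subst hB
    have htr' : ∑ i, ∑ j, Complex.normSq (B i j) = 1 := by
      rw [Stmt7.trace_eq] at htr; exact_mod_cast htr
    rw [Stmt7.quadform_re, Stmt7.quadform_re]
    refine ⟨Stmt7.nsq_nonneg _, Stmt7.nsq_nonneg _, ?_, ?_⟩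
    · have h := Stmt7.frobenius B hR
      rwa [htr', one_mul] at h
    · have hdecomp : B *ᵥ hR = α • (B *ᵥ hE) + B *ᵥ g := by
        conv_lhs => rw [show hR = α • hE + g by rw [hg, add_comm, sub_add_cancel]]
        rw [mulVec_add, mulVec_smul]
      have h1 : Real.sqrt (Stmt7.nsq (B *ᵥ hR))
          ≤ A * Real.sqrt (Stmt7.nsq (B *ᵥ hE)) + Real.sqrt (Stmt7.nsq (B *ᵥ g)) := by
        rw [hdecomp]; exact Stmt7.triangle α (B *ᵥ hE) (B *ᵥ g)
      have h2 : Stmt7.nsq (B *ᵥ g) ≤ K := by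
        have h := Stmt7.frobenius B g
        rwa [htr', one_mul] at h
      have h3 : Real.sqrt (Stmt7.nsq (B *ᵥ hR))
          ≤ A * Real.sqrt (Stmt7.nsq (B *ᵥ hE)) + Real.sqrt K :=
        h1.trans (add_le_add_right (Real.sqrt_le_sqrt h2) _)
      calc Stmt7.nsq (B *ᵥ hR) = Real.sqrt (Stmt7.nsq (B *ᵥ hR)) ^ 2 :=
            (Real.sq_sqrt (Stmt7.nsq_nonneg _)).symm
        _ ≤ (A * Real.sqrt (Stmt7.nsq (B *ᵥ hE)) + Real.sqrt K) ^ 2 :=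
            pow_le_pow_left₀ (Real.sqrt_nonneg _) h3 2
  have hbdd : ∀ ρ : ℝ, 0 ≤ ρ → BddAbove (S ρ) := by
    intro ρ hρ
    refine ⟨Real.log (1 + ρ * Stmt7.nsq hR), ?_⟩
    rintro x ⟨Q, hpsd, htr, rfl⟩
    obtain ⟨hb0, ha0, haR, -⟩ := hQprops Q hpsd htr
    have h1 : (0:ℝ) ≤ Real.log (1 + ρ * (star hE ⬝ᵥ (Q *ᵥ hE)).re) :=
      Real.log_nonneg (by nlinarith)
    have h2 : Real.log (1 + ρ * (star hR ⬝ᵥ (Q *ᵥ hR)).re)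
        ≤ Real.log (1 + ρ * Stmt7.nsq hR) :=
      Real.log_le_log (by nlinarith) (by nlinarith)
    linarith
  have hlow : ∀ ρ : ℝ, 0 ≤ ρ → Real.log (1 + ρ * K) ≤ sSup (S ρ) :=
    fun ρ hρ => le_csSup (hbdd ρ hρ) (hmem ρ)
  have hupper : ∀ ε : ℝ, 0 < ε → ∃ ρ₀ : ℝ, ∀ ρ : ℝ, ρ₀ ≤ ρ →
      sSup (S ρ) ≤ Real.log ρ + Real.log (K + ε) := by
    intro ε hε
    refine ⟨max 1 (max (2/ε) ((1 + 2*K/ε)*A^2/(K+ε))), fun ρ hρ => ?_⟩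
    have hρ1 : 1 ≤ ρ := le_trans (le_max_left _ _) hρ
    have hρ2 : 2/ε ≤ ρ := le_trans ((le_max_left _ _).trans (le_max_right _ _)) hρ
    have hρ3 : (1 + 2*K/ε)*A^2/(K+ε) ≤ ρ :=
      le_trans ((le_max_right _ _).trans (le_max_right _ _)) hρ
    have hρpos : (0:ℝ) < ρ := lt_of_lt_of_le one_pos hρ1
    apply csSup_le ⟨_, hmem ρ⟩
    rintro x ⟨Q, hpsd, htr, rfl⟩
    obtain ⟨hb0, ha0, -, hab⟩ := hQprops Q hpsd htr
    set a := (star hR ⬝ᵥ (Q *ᵥ hR)).re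
    set b := (star hE ⬝ᵥ (Q *ᵥ hE)).re
    have hkey : 1 + ρ * a ≤ (K + ε) * (ρ * (1 + ρ * b)) :=
      Stmt7.key K ε A ρ a b hK hε hA0 hρ2 hρ3 hρ1 hb0 hab
    have h1b : (0:ℝ) < 1 + ρ * b := by nlinarith
    have h1a : (0:ℝ) < 1 + ρ * a := by nlinarith
    have hlog1 : Real.log (1 + ρ * a) ≤ Real.log ((K + ε) * (ρ * (1 + ρ * b))) :=
      Real.log_le_log h1a hkey
    have hlog2 : Real.log ((K + ε) * (ρ * (1 + ρ * b)))
        = Real.log (K + ε) + Real.log ρ + Real.log (1 + ρ * b) := by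
      rw [Real.log_mul (by positivity) (by positivity),
        Real.log_mul (by positivity) (by positivity)]
      ring
    linarith
  -- the basic limit
  have hlim0 : Filter.Tendsto (fun ρ : ℝ => Real.log (1 + ρ * K) - Real.log ρ)
      Filter.atTop (nhds (Real.log K)) := by
    have h1 : Filter.Tendsto (fun ρ : ℝ => ρ⁻¹ + K) Filter.atTop (nhds K) := by
      simpa using (tendsto_inv_atTop_zero.add (tendsto_const_nhds (x := K)))
    have h2 := ((Real.continuousAt_log hK.ne').tendsto.comp h1)
    apply h2.congr'
    filter_upwards [Filter.eventually_gt_atTop (0:ℝ)] with ρ hρ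
    show Real.log (ρ⁻¹ + K) = Real.log (1 + ρ * K) - Real.log ρ
    rw [← Real.log_div (by positivity) hρ.ne']
    congr 1
    field_simp
  have main2 : Filter.Tendsto (fun ρ : ℝ => sSup (S ρ) - Real.log ρ)
      Filter.atTop (nhds (Real.log K)) := by
    rw [Metric.tendsto_atTop]
    intro ε hε
    set δ : ℝ := K * (Real.exp (ε/2) - 1) with hδdef
    have hδ : 0 < δ := by
      apply mul_pos hK
      have : (1:ℝ) < Real.exp (ε/2) := by
        rw [← Real.exp_zero]
        exact Real.exp_lt_exp.mpr (by linarith)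
      linarith
    have hlogδ : Real.log (K + δ) = Real.log K + ε/2 := by
      have hKδ : K + δ = K * Real.exp (ε/2) := by rw [hδdef]; ring
      rw [hKδ, Real.log_mul hK.ne' (Real.exp_ne_zero _), Real.log_exp]
    obtain ⟨ρ₀, hρ₀⟩ := hupper δ hδ
    have hl := hlim0
    rw [Metric.tendsto_atTop] at hl
    obtain ⟨N₁, hN₁⟩ := hl (ε/2) (by linarith)
    refine ⟨max 1 (max ρ₀ N₁), fun ρ hρ => ?_⟩
    have hρ1 : 1 ≤ ρ := le_trans (le_max_left _ _) hρ
    have hρa : ρ₀ ≤ ρ := le_trans ((le_max_left _ _).trans (le_max_right _ _)) hρ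
    have hρb : N₁ ≤ ρ := le_trans ((le_max_right _ _).trans (le_max_right _ _)) hρ
    have hub := hρ₀ ρ hρa
    have hlb := hlow ρ (by linarith)
    have hN := hN₁ ρ hρb
    rw [Real.dist_eq] at hN ⊢
    rw [abs_lt] at hN ⊢
    constructor
    · have : Real.log K - ε/2 < Real.log (1 + ρ * K) - Real.log ρ := by linarith [hN.1]
      linarith
    · have : sSup (S ρ) - Real.log ρ ≤ Real.log (K + δ) := by linarith
      rw [hlogδ] at this
      linarith
  have main3 : Filter.Tendsto (fun ρ : ℝ => sSup (S ρ) / Real.log ρ)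
      Filter.atTop (nhds 1) := by
    have h1 : Filter.Tendsto (fun ρ : ℝ => (sSup (S ρ) - Real.log ρ) * (Real.log ρ)⁻¹ + 1)
        Filter.atTop (nhds (Real.log K * 0 + 1)) :=
      (main2.mul (Real.tendsto_log_atTop.inv_tendsto_atTop)).add tendsto_const_nhds
    rw [mul_zero, zero_add] at h1
    apply h1.congr'
    filter_upwards [Filter.eventually_gt_atTop (1:ℝ)] with ρ hρ
    have hlρ : 0 < Real.log ρ := Real.log_pos hρ
    field_simp
    ring
  exact ⟨by rw [hKeq]; exact hK, by rw [hKeq]; exact main2, main3⟩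
end

section
/- Let S_R and S_E be n_T×n_T Hermitian positive semidefinite matrices such that S_R − S_E has a positive eigenvalue. Then for every n_T×n_T Hermitian positive semidefinite matrix Q: (i) the matrices I + Q S_R and I + Q S_E are invertible and Θ(Q) = S_R(I + Q S_R)⁻¹ − S_E(I + Q S_E)⁻¹ is Hermitian with λ_max(Θ(Q)) > 0; (ii) Tr(Q Θ(Q)) ≤ Tr(Q) · λ_max(Θ(Q)); in particular, if Tr(Q) = 1 then Tr(Q Θ(Q)) ≤ λ_max(Θ(Q)). -/
open Matrix
open scoped ComplexOrder

/-- The largest eigenvalue of a (Hermitian) complex matrix, expressed as the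
supremum of its real eigenvalues. -/
noncomputable def lamMax {n : ℕ} (A : Matrix (Fin n) (Fin n) ℂ) : ℝ :=
  sSup {t : ℝ | ∃ v : Fin n → ℂ, v ≠ 0 ∧ A *ᵥ v = (t : ℂ) • v}

namespace Stmt8Aux

variable {n : ℕ} {A : Matrix (Fin n) (Fin n) ℂ}

open scoped MatrixOrder in
noncomputable def _root_.Matrix.PosSemidef.sqrt {m : ℕ} {S : Matrix (Fin m) (Fin m) ℂ}
    (_hS : S.PosSemidef) : Matrix (Fin m) (Fin m) ℂ :=
  CFC.sqrt S

open scoped MatrixOrder in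
lemma _root_.Matrix.PosSemidef.posSemidef_sqrt {m : ℕ} {S : Matrix (Fin m) (Fin m) ℂ}
    (hS : S.PosSemidef) : hS.sqrt.PosSemidef :=
  (CFC.sqrt_nonneg S).posSemidef

open scoped MatrixOrder in
lemma _root_.Matrix.PosSemidef.sqrt_mul_self {m : ℕ} {S : Matrix (Fin m) (Fin m) ℂ}
    (hS : S.PosSemidef) : hS.sqrt * hS.sqrt = S :=
  CFC.sqrt_mul_sqrt_self S hS.nonneg

lemma isUnit_one_add_mul {Q S : Matrix (Fin n) (Fin n) ℂ}
    (hQ : Q.PosSemidef) (hS : S.PosSemidef) : IsUnit (1 + Q * S) := by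
  rw [Matrix.isUnit_iff_isUnit_det]
  have h1 : Q * S = (Q * hS.sqrt) * hS.sqrt := by
    rw [Matrix.mul_assoc, hS.sqrt_mul_self]
  have h2 : (1 + Q * S).det = (1 + hS.sqrt * (Q * hS.sqrt)).det := by
    rw [h1, Matrix.det_one_add_mul_comm]
  have h3 : (hS.sqrt * (Q * hS.sqrt)).PosSemidef := by
    have := hQ.conjTranspose_mul_mul_same hS.sqrt
    rwa [hS.posSemidef_sqrt.isHermitian.eq, Matrix.mul_assoc] at this
  have h4 : (1 + hS.sqrt * (Q * hS.sqrt)).PosDef :=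
    Matrix.PosDef.add_posSemidef Matrix.PosDef.one h3
  rw [h2]
  exact h4.det_pos.ne'.isUnit

lemma coe_smul_eq (t : ℝ) (w : Fin n → ℂ) : t • w = (t : ℂ) • w := by
  funext i
  simp [Complex.real_smul]

lemma mem_eigSet (hA : A.IsHermitian) (i : Fin n) :
    hA.eigenvalues i ∈ {t : ℝ | ∃ v : Fin n → ℂ, v ≠ 0 ∧ A *ᵥ v = (t : ℂ) • v} := by
  refine ⟨⇑(hA.eigenvectorBasis i), ?_, ?_⟩
  · intro h
    exact hA.eigenvectorBasis.orthonormal.ne_zero i (by ext j; exact congrFun h j)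
  · rw [hA.mulVec_eigenvectorBasis, coe_smul_eq]

lemma eigSet_subset (hA : A.IsHermitian) :
    {t : ℝ | ∃ v : Fin n → ℂ, v ≠ 0 ∧ A *ᵥ v = (t : ℂ) • v} ⊆ Set.range hA.eigenvalues := by
  rintro t ⟨v, hv, hAv⟩
  set U := (hA.eigenvectorUnitary : Matrix (Fin n) (Fin n) ℂ) with hU
  have hsU : star U * U = 1 := Unitary.coe_star_mul_self hA.eigenvectorUnitary
  have hUs : U * star U = 1 := Unitary.coe_mul_star_self hA.eigenvectorUnitary
  set y := star U *ᵥ v with hy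
  have hyne : y ≠ 0 := by
    intro h
    apply hv
    have h2 : U *ᵥ y = v := by rw [hy, Matrix.mulVec_mulVec, hUs, Matrix.one_mulVec]
    rw [← h2, h, Matrix.mulVec_zero]
  have hdiag : diagonal (RCLike.ofReal ∘ hA.eigenvalues) *ᵥ y = (t : ℂ) • y := by
    have h1 : star U *ᵥ (A *ᵥ v) = (t : ℂ) • y := by rw [hAv, Matrix.mulVec_smul]
    conv_lhs at h1 => rw [hA.spectral_theorem, Unitary.conjStarAlgAut_apply]
    rw [Matrix.mulVec_mulVec, ← Matrix.mul_assoc, ← Matrix.mul_assoc, hsU, Matrix.one_mul,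
      ← Matrix.mulVec_mulVec] at h1
    exact h1
  obtain ⟨i, hi⟩ := Function.ne_iff.mp hyne
  have h3 := congrFun hdiag i
  rw [Matrix.mulVec_diagonal, Pi.smul_apply, smul_eq_mul] at h3
  have h4 : ((hA.eigenvalues i : ℝ) : ℂ) = (t : ℂ) := mul_right_cancel₀ hi h3
  exact ⟨i, by exact_mod_cast h4⟩

lemma eig_le_lamMax (hA : A.IsHermitian) (i : Fin n) : hA.eigenvalues i ≤ lamMax A :=
  le_csSup (((Set.finite_range hA.eigenvalues).bddAbove).mono (eigSet_subset hA))
    (mem_eigSet hA i)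

lemma rayleigh (hA : A.IsHermitian) (x : Fin n → ℂ) :
    (star x ⬝ᵥ A *ᵥ x).re ≤ lamMax A * (star x ⬝ᵥ x).re := by
  classical
  set U := (hA.eigenvectorUnitary : Matrix (Fin n) (Fin n) ℂ) with hU
  have hsU : star U * U = 1 := Unitary.coe_star_mul_self hA.eigenvectorUnitary
  have hUs : U * star U = 1 := Unitary.coe_mul_star_self hA.eigenvectorUnitary
  set y := star U *ᵥ x with hy
  have hstar : star y = star x ᵥ* U := by
    rw [hy, Matrix.star_mulVec, Matrix.star_eq_conjTranspose, conjTranspose_conjTranspose]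
  have e1 : star x ⬝ᵥ A *ᵥ x = star y ⬝ᵥ (diagonal (RCLike.ofReal ∘ hA.eigenvalues) *ᵥ y) := by
    conv_lhs => rw [hA.spectral_theorem, Unitary.conjStarAlgAut_apply]
    rw [← Matrix.mulVec_mulVec, ← Matrix.mulVec_mulVec, Matrix.dotProduct_mulVec, ← hstar]
  have e2 : star x ⬝ᵥ x = star y ⬝ᵥ y := by
    rw [hstar, ← Matrix.dotProduct_mulVec, hy, Matrix.mulVec_mulVec, hUs, Matrix.one_mulVec]
  have term : ∀ i, star y i * ((RCLike.ofReal ∘ hA.eigenvalues) i * y i)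
      = ((hA.eigenvalues i * Complex.normSq (y i) : ℝ) : ℂ) := by
    intro i
    have hc : (RCLike.ofReal ∘ hA.eigenvalues) i = ((hA.eigenvalues i : ℝ) : ℂ) := rfl
    have hn : star (y i) * y i = (Complex.normSq (y i) : ℂ) := by
      rw [Complex.star_def, Complex.normSq_eq_conj_mul_self]
    calc star y i * ((RCLike.ofReal ∘ hA.eigenvalues) i * y i)
        = ((hA.eigenvalues i : ℝ) : ℂ) * (star (y i) * y i) := by
          rw [hc, Pi.star_apply]; ring
      _ = _ := by rw [hn]; push_cast; ring
  have e3 : (star y ⬝ᵥ (diagonal (RCLike.ofReal ∘ hA.eigenvalues) *ᵥ y)).re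
      = ∑ i, hA.eigenvalues i * Complex.normSq (y i) := by
    simp only [dotProduct, Matrix.mulVec_diagonal]
    rw [Complex.re_sum]
    refine Finset.sum_congr rfl fun i _ => ?_
    rw [term i, Complex.ofReal_re]
  have e4 : (star y ⬝ᵥ y).re = ∑ i, Complex.normSq (y i) := by
    simp only [dotProduct]
    rw [Complex.re_sum]
    refine Finset.sum_congr rfl fun i _ => ?_
    rw [Pi.star_apply, Complex.star_def, ← Complex.normSq_eq_conj_mul_self, Complex.ofReal_re]
  rw [e1, e2, e3, e4, Finset.mul_sum]
  refine Finset.sum_le_sum fun i _ => ?_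
  exact mul_le_mul_of_nonneg_right (eig_le_lamMax hA i) (Complex.normSq_nonneg _)

lemma herm_dot_real (hA : A.IsHermitian) (x : Fin n → ℂ) :
    star (star x ⬝ᵥ A *ᵥ x) = star x ⬝ᵥ A *ᵥ x := by
  conv_lhs => rw [Matrix.star_dotProduct, star_star, Matrix.star_mulVec, hA.eq,
    ← Matrix.dotProduct_mulVec]

lemma shift_psd (hA : A.IsHermitian) :
    (((lamMax A : ℝ) : ℂ) • (1 : Matrix (Fin n) (Fin n) ℂ) - A).PosSemidef := by
  refine Matrix.PosSemidef.of_dotProduct_mulVec_nonneg ?_ ?_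
  · show _ᴴ = _
    rw [Matrix.conjTranspose_sub, Matrix.conjTranspose_smul, Matrix.conjTranspose_one, hA.eq,
      Complex.star_def, Complex.conj_ofReal]
  · intro x
    have hx0 : 0 ≤ star x ⬝ᵥ x := by
      have := (Matrix.PosDef.one (n := Fin n) (R := ℂ)).posSemidef.dotProduct_mulVec_nonneg x
      rwa [Matrix.one_mulVec] at this
    have hquad : (star x ⬝ᵥ A *ᵥ x).im = 0 :=
      Complex.conj_eq_iff_im.mp (herm_dot_real hA x)
    have hray := rayleigh hA x
    have : star x ⬝ᵥ (((lamMax A : ℝ) : ℂ) • (1 : Matrix (Fin n) (Fin n) ℂ) - A) *ᵥ x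
        = ((lamMax A : ℝ) : ℂ) * (star x ⬝ᵥ x) - star x ⬝ᵥ A *ᵥ x := by
      rw [Matrix.sub_mulVec, dotProduct_sub, Matrix.smul_mulVec, Matrix.one_mulVec,
        dotProduct_smul, smul_eq_mul]
    rw [this, Complex.nonneg_iff] at *
    obtain ⟨hre, him⟩ := hx0
    constructor
    · simp only [Complex.sub_re, Complex.re_ofReal_mul]
      linarith
    · simp only [Complex.sub_im, Complex.mul_im, Complex.ofReal_im, hquad, ← him]
      ring

lemma psd_trace_nonneg {M : Matrix (Fin n) (Fin n) ℂ} (hM : M.PosSemidef) : 0 ≤ M.trace := by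
  rw [Matrix.trace]
  refine Finset.sum_nonneg fun i _ => ?_
  have := hM.dotProduct_mulVec_nonneg (Pi.single i 1)
  simpa [Matrix.diag, dotProduct, Matrix.mulVec_single, Pi.single_apply] using this

lemma trace_mul_psd_nonneg {P M : Matrix (Fin n) (Fin n) ℂ} (hP : P.PosSemidef)
    (hM : M.PosSemidef) : 0 ≤ (P * M).trace := by
  have key : (hP.sqrtᴴ * M * hP.sqrt).trace = (P * M).trace := by
    rw [hP.posSemidef_sqrt.isHermitian.eq, Matrix.trace_mul_cycle, hP.sqrt_mul_self]
  rw [← key]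
  exact psd_trace_nonneg (hM.conjTranspose_mul_mul_same hP.sqrt)

end Stmt8Aux

/-- For Hermitian PSD matrices `S_R, S_E` with `S_R − S_E` having a
positive eigenvalue, and every Hermitian PSD `Q`: the matrices `I + Q S_R` and
`I + Q S_E` are invertible, `Θ(Q) = S_R(I + Q S_R)⁻¹ − S_E(I + Q S_E)⁻¹` is
Hermitian with `λ_max(Θ(Q)) > 0`, `Tr(Q Θ(Q)) ≤ Tr(Q) λ_max(Θ(Q))`, and in
particular `Tr(Q) = 1` implies `Tr(Q Θ(Q)) ≤ λ_max(Θ(Q))`. -/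
theorem stmt_8 (nT : ℕ) (SR SE : Matrix (Fin nT) (Fin nT) ℂ)
    (hSR : SR.PosSemidef) (hSE : SE.PosSemidef)
    (hpos : ∃ (t : ℝ) (v : Fin nT → ℂ), 0 < t ∧ v ≠ 0 ∧ (SR - SE) *ᵥ v = (t : ℂ) • v)
    (Q : Matrix (Fin nT) (Fin nT) ℂ) (hQ : Q.PosSemidef) :
    IsUnit (1 + Q * SR) ∧ IsUnit (1 + Q * SE) ∧
    (SR * (1 + Q * SR)⁻¹ - SE * (1 + Q * SE)⁻¹).IsHermitian ∧
    0 < lamMax (SR * (1 + Q * SR)⁻¹ - SE * (1 + Q * SE)⁻¹) ∧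
    (Q * (SR * (1 + Q * SR)⁻¹ - SE * (1 + Q * SE)⁻¹)).trace.re
      ≤ Q.trace.re * lamMax (SR * (1 + Q * SR)⁻¹ - SE * (1 + Q * SE)⁻¹) ∧
    (Q.trace = 1 →
      (Q * (SR * (1 + Q * SR)⁻¹ - SE * (1 + Q * SE)⁻¹)).trace.re
        ≤ lamMax (SR * (1 + Q * SR)⁻¹ - SE * (1 + Q * SE)⁻¹)) := by
  obtain ⟨t, v, ht, hv, hev⟩ := hpos
  have hUR : IsUnit (1 + Q * SR) := Stmt8Aux.isUnit_one_add_mul hQ hSR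
  have hUE : IsUnit (1 + Q * SE) := Stmt8Aux.isUnit_one_add_mul hQ hSE
  have hUR' : IsUnit (1 + SR * Q) := Stmt8Aux.isUnit_one_add_mul hSR hQ
  have hUE' : IsUnit (1 + SE * Q) := Stmt8Aux.isUnit_one_add_mul hSE hQ
  have hdR : IsUnit (1 + Q * SR).det := (Matrix.isUnit_iff_isUnit_det _).mp hUR
  have hdE : IsUnit (1 + Q * SE).det := (Matrix.isUnit_iff_isUnit_det _).mp hUE
  have hdR' : IsUnit (1 + SR * Q).det := (Matrix.isUnit_iff_isUnit_det _).mp hUR'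
  have hdE' : IsUnit (1 + SE * Q).det := (Matrix.isUnit_iff_isUnit_det _).mp hUE'
  set Θ := SR * (1 + Q * SR)⁻¹ - SE * (1 + Q * SE)⁻¹ with hΘdef
  have swapR : SR * (1 + Q * SR)⁻¹ = (1 + SR * Q)⁻¹ * SR := by
    have h : (1 + SR * Q) * (SR * (1 + Q * SR)⁻¹) = SR := by
      rw [← Matrix.mul_assoc]
      have e : (1 + SR * Q) * SR = SR * (1 + Q * SR) := by noncomm_ring
      rw [e, Matrix.mul_assoc, Matrix.mul_nonsing_inv _ hdR, Matrix.mul_one]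
    calc SR * (1 + Q * SR)⁻¹
        = ((1 + SR * Q)⁻¹ * (1 + SR * Q)) * (SR * (1 + Q * SR)⁻¹) := by
          rw [Matrix.nonsing_inv_mul _ hdR', Matrix.one_mul]
      _ = (1 + SR * Q)⁻¹ * SR := by rw [Matrix.mul_assoc, h]
  have swapE : SE * (1 + Q * SE)⁻¹ = (1 + SE * Q)⁻¹ * SE := by
    have h : (1 + SE * Q) * (SE * (1 + Q * SE)⁻¹) = SE := by
      rw [← Matrix.mul_assoc]
      have e : (1 + SE * Q) * SE = SE * (1 + Q * SE) := by noncomm_ring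
      rw [e, Matrix.mul_assoc, Matrix.mul_nonsing_inv _ hdE, Matrix.mul_one]
    calc SE * (1 + Q * SE)⁻¹
        = ((1 + SE * Q)⁻¹ * (1 + SE * Q)) * (SE * (1 + Q * SE)⁻¹) := by
          rw [Matrix.nonsing_inv_mul _ hdE', Matrix.one_mul]
      _ = (1 + SE * Q)⁻¹ * SE := by rw [Matrix.mul_assoc, h]
  have hconjR : (1 + Q * SR)ᴴ = 1 + SR * Q := by
    rw [Matrix.conjTranspose_add, Matrix.conjTranspose_one, Matrix.conjTranspose_mul,
      hSR.isHermitian.eq, hQ.isHermitian.eq]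
  have hconjE : (1 + Q * SE)ᴴ = 1 + SE * Q := by
    rw [Matrix.conjTranspose_add, Matrix.conjTranspose_one, Matrix.conjTranspose_mul,
      hSE.isHermitian.eq, hQ.isHermitian.eq]
  have hΘ : Θ.IsHermitian := by
    have hR : (SR * (1 + Q * SR)⁻¹).IsHermitian := by
      show (SR * (1 + Q * SR)⁻¹)ᴴ = SR * (1 + Q * SR)⁻¹
      rw [Matrix.conjTranspose_mul, Matrix.conjTranspose_nonsing_inv, hconjR,
        hSR.isHermitian.eq, ← swapR]
    have hE : (SE * (1 + Q * SE)⁻¹).IsHermitian := by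
      show (SE * (1 + Q * SE)⁻¹)ᴴ = SE * (1 + Q * SE)⁻¹
      rw [Matrix.conjTranspose_mul, Matrix.conjTranspose_nonsing_inv, hconjE,
        hSE.isHermitian.eq, ← swapE]
    exact hR.sub hE
  -- key factorization Θ = (1+SE Q)⁻¹ (SR - SE) (1+Q SR)⁻¹
  have idΘ : Θ = (1 + SE * Q)⁻¹ * (SR - SE) * (1 + Q * SR)⁻¹ := by
    have e2 : (1 + SE * Q) * (SE * (1 + Q * SE)⁻¹) = SE := by
      rw [swapE, ← Matrix.mul_assoc, Matrix.mul_nonsing_inv _ hdE', Matrix.one_mul]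
    have e1 : (1 + SE * Q) * SR = (SR - SE) + SE * (1 + Q * SR) := by noncomm_ring
    have hCΘ : (1 + SE * Q) * Θ = (SR - SE) * (1 + Q * SR)⁻¹ := by
      rw [hΘdef, Matrix.mul_sub, e2, ← Matrix.mul_assoc, e1, Matrix.add_mul,
        Matrix.mul_assoc SE, Matrix.mul_nonsing_inv _ hdR, Matrix.mul_one]
      abel
    calc Θ = ((1 + SE * Q)⁻¹ * (1 + SE * Q)) * Θ := by
          rw [Matrix.nonsing_inv_mul _ hdE', Matrix.one_mul]
      _ = (1 + SE * Q)⁻¹ * ((SR - SE) * (1 + Q * SR)⁻¹) := by rw [Matrix.mul_assoc, hCΘ]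
      _ = (1 + SE * Q)⁻¹ * (SR - SE) * (1 + Q * SR)⁻¹ := by rw [Matrix.mul_assoc]
  -- the positive Rayleigh vector
  set u := (1 + Q * SR) *ᵥ v with hu
  set w := (1 + SE * Q)⁻¹ *ᵥ v with hw
  have hBu : (1 + Q * SR)⁻¹ *ᵥ u = v := by
    rw [hu, Matrix.mulVec_mulVec, Matrix.nonsing_inv_mul _ hdR, Matrix.one_mulVec]
  have hCw : (1 + SE * Q) *ᵥ w = v := by
    rw [hw, Matrix.mulVec_mulVec, Matrix.mul_nonsing_inv _ hdE', Matrix.one_mulVec]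
  have hΘu : Θ *ᵥ u = (t : ℂ) • w := by
    rw [idΘ, ← Matrix.mulVec_mulVec, hBu, ← Matrix.mulVec_mulVec, hev, Matrix.mulVec_smul, hw]
  -- star u ⬝ᵥ w decomposition
  have hstaru : star u = star v ᵥ* (1 + SR * Q) := by
    rw [hu, Matrix.star_mulVec, hconjR]
  have hBw : (1 + SR * Q) *ᵥ w = v + (SR - SE) *ᵥ (Q *ᵥ w) := by
    have : (SR - SE) *ᵥ (Q *ᵥ w) = ((SR - SE) * Q) *ᵥ w := by rw [Matrix.mulVec_mulVec]
    rw [this, ← hCw]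
    have : (1 + SR * Q) *ᵥ w = (1 + SE * Q) *ᵥ w + ((SR - SE) * Q) *ᵥ w := by
      rw [← Matrix.add_mulVec]
      noncomm_ring
    rw [this]
  have hsvDz : ∀ z : Fin nT → ℂ, star v ⬝ᵥ ((SR - SE) *ᵥ z) = (t : ℂ) * (star v ⬝ᵥ z) := by
    intro z
    rw [Matrix.dotProduct_mulVec]
    have : star v ᵥ* (SR - SE) = (t : ℂ) • star v := by
      have h1 : star v ᵥ* (SR - SE) = star ((SR - SE) *ᵥ v) := by
        rw [Matrix.star_mulVec, (hSR.isHermitian.sub hSE.isHermitian).eq]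
      rw [h1, hev, star_smul]
      simp [Complex.star_def, Complex.conj_ofReal]
    rw [this, smul_dotProduct, smul_eq_mul]
  have hstarv : star v = star w ᵥ* (1 + Q * SE) := by
    rw [← hCw, Matrix.star_mulVec, ← hconjE, conjTranspose_conjTranspose]
  have hsvQw : star v ⬝ᵥ (Q *ᵥ w) = star w ⬝ᵥ (Q *ᵥ w) + star w ⬝ᵥ ((Q * SE * Q) *ᵥ w) := by
    rw [hstarv, ← Matrix.dotProduct_mulVec, Matrix.mulVec_mulVec]
    have : (1 + Q * SE) * Q = Q + Q * SE * Q := by noncomm_ring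
    rw [this, Matrix.add_mulVec, dotProduct_add]
  have key : star u ⬝ᵥ (Θ *ᵥ u)
      = (t : ℂ) * ((star v ⬝ᵥ v) + (t : ℂ) * (star w ⬝ᵥ (Q *ᵥ w) + star w ⬝ᵥ ((Q * SE * Q) *ᵥ w))) := by
    rw [hΘu, dotProduct_smul, smul_eq_mul]
    rw [hstaru, ← Matrix.dotProduct_mulVec, hBw, dotProduct_add, hsvDz, hsvQw]
  -- positivity of the quadratic form at u
  have hdotvv : 0 < star v ⬝ᵥ v := by
    have := (Matrix.PosDef.one (n := Fin nT) (R := ℂ)).dotProduct_mulVec_pos hv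
    rwa [Matrix.one_mulVec] at this
  have ha : 0 ≤ star w ⬝ᵥ (Q *ᵥ w) := hQ.dotProduct_mulVec_nonneg w
  have hb : 0 ≤ star w ⬝ᵥ ((Q * SE * Q) *ᵥ w) := by
    have := (hSE.conjTranspose_mul_mul_same Q).dotProduct_mulVec_nonneg w
    rwa [hQ.isHermitian.eq] at this
  have htC : (0 : ℂ) < (t : ℂ) := by
    rw [Complex.lt_def]
    simp [ht]
  have hquadpos : 0 < star u ⬝ᵥ (Θ *ᵥ u) := by
    rw [key]
    exact mul_pos htC
      (add_pos_of_pos_of_nonneg hdotvv (mul_nonneg htC.le (add_nonneg ha hb)))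
  have hqre : 0 < (star u ⬝ᵥ (Θ *ᵥ u)).re := by
    have := (Complex.lt_def.mp hquadpos).1
    simpa using this
  have huu : 0 ≤ (star u ⬝ᵥ u).re := by
    have h0 : 0 ≤ star u ⬝ᵥ u := by
      have := (Matrix.PosDef.one (n := Fin nT) (R := ℂ)).posSemidef.dotProduct_mulVec_nonneg u
      rwa [Matrix.one_mulVec] at this
    exact (Complex.nonneg_iff.mp h0).1
  have hray := Stmt8Aux.rayleigh hΘ u
  have hlam : 0 < lamMax Θ := by nlinarith
  -- trace inequality
  have hMpsd := Stmt8Aux.shift_psd hΘ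
  have htr : 0 ≤ (Q * (((lamMax Θ : ℝ) : ℂ) • (1 : Matrix (Fin nT) (Fin nT) ℂ) - Θ)).trace :=
    Stmt8Aux.trace_mul_psd_nonneg hQ hMpsd
  have hexp : (Q * (((lamMax Θ : ℝ) : ℂ) • (1 : Matrix (Fin nT) (Fin nT) ℂ) - Θ)).trace
      = ((lamMax Θ : ℝ) : ℂ) * Q.trace - (Q * Θ).trace := by
    rw [Matrix.mul_sub, Matrix.mul_smul, Matrix.mul_one, Matrix.trace_sub, Matrix.trace_smul,
      smul_eq_mul]
  have htrace_ineq : (Q * Θ).trace.re ≤ Q.trace.re * lamMax Θ := by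
    rw [hexp] at htr
    have := (Complex.nonneg_iff.mp htr).1
    rw [Complex.sub_re, Complex.re_ofReal_mul] at this
    linarith
  refine ⟨hUR, hUE, hΘ, hlam, htrace_ineq, fun h1 => ?_⟩
  have : Q.trace.re = 1 := by rw [h1, Complex.one_re]
  rw [this, one_mul] at htrace_ineq
  exact htrace_ineq
end

section
/- Assume the Hermitian matrix H_R†H_R − H_E†H_E has a positive eigenvalue. If Q° ∈ Ω is a global maximizer of the secrecy rate, i.e. C_s(Q°) ≥ C_s(Q) for all Q ∈ Ω, then Q° satisfies the two equations Q° Θ(Q°) = Tr(Q° Θ(Q°)) · Q° and λ_max(Θ(Q°)) = Tr(Q° Θ(Q°)). -/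
open Matrix
open scoped ComplexOrder
open Polynomial

lemma detPoly_eval {m : ℕ} (B : Matrix (Fin m) (Fin m) ℂ) (c : ℂ) :
    ((-B).charpolyRev).eval c = (1 + c • B).det := by
  rw [Matrix.charpolyRev, ← coe_evalRingHom, RingHom.map_det]
  congr 1
  ext i j
  rcases eq_or_ne i j with rfl | hij
  · simp only [RingHom.mapMatrix_apply, Matrix.map_apply, Matrix.sub_apply, Matrix.add_apply,
      Matrix.smul_apply, Matrix.one_apply_eq, Matrix.neg_apply, smul_eq_mul, coe_evalRingHom,
      eval_mul, eval_X, eval_neg, eval_C, eval_sub, eval_one]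
    ring
  · simp only [RingHom.mapMatrix_apply, Matrix.map_apply, Matrix.sub_apply, Matrix.add_apply,
      Matrix.smul_apply, Matrix.one_apply_ne hij, Matrix.neg_apply, smul_eq_mul, coe_evalRingHom,
      eval_mul, eval_X, eval_neg, eval_C, eval_sub, eval_zero]
    ring

lemma hasDerivAt_det {m : ℕ} (M E : Matrix (Fin m) (Fin m) ℂ) (hM : IsUnit M.det) :
    HasDerivAt (fun t : ℝ => (M + (t : ℂ) • E).det) (M.det * (M⁻¹ * E).trace) 0 := by
  set B := M⁻¹ * E with hB
  set p := (-B).charpolyRev with hp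
  have hfac : ∀ t : ℝ, (M + (t : ℂ) • E).det = M.det * p.eval (t : ℂ) := by
    intro t
    rw [hp, detPoly_eval, ← Matrix.det_mul, Matrix.mul_add, Matrix.mul_one, Matrix.mul_smul,
      hB, ← Matrix.mul_assoc, Matrix.mul_nonsing_inv _ hM, Matrix.one_mul]
  have hderiv : HasDerivAt (fun z : ℂ => p.eval z) (p.derivative.eval 0) 0 := p.hasDerivAt 0
  have hcoeff : p.derivative.eval 0 = B.trace := by
    rw [← Polynomial.coeff_zero_eq_eval_zero, Polynomial.coeff_derivative, hp,
      Matrix.coeff_charpolyRev_eq_neg_trace, Matrix.trace_neg]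
    ring
  have h0 : HasDerivAt (fun t : ℝ => p.eval (t : ℂ)) B.trace 0 := by
    rw [← hcoeff]
    exact HasDerivAt.comp_ofReal (by rw [Complex.ofReal_zero]; exact hderiv)
  have := h0.const_mul M.det
  simp only [hfac]
  simpa using this

lemma hasDerivAt_logdet {m : ℕ} (M E : Matrix (Fin m) (Fin m) ℂ) (hM : IsUnit M.det)
    (him : M.det.im = 0) (hre : 0 < M.det.re) :
    HasDerivAt (fun t : ℝ => Real.log ((M + (t : ℂ) • E).det.re)) ((M⁻¹ * E).trace.re) 0 := by
  have h1 : HasDerivAt (fun t : ℝ => (M + (t : ℂ) • E).det.re)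
      ((M.det * (M⁻¹ * E).trace).re) 0 :=
    Complex.reCLM.hasFDerivAt.comp_hasDerivAt 0 (hasDerivAt_det M E hM)
  have h2 : (fun t : ℝ => (M + (t : ℂ) • E).det.re) 0 ≠ 0 := by
    simp only [Complex.ofReal_zero, zero_smul, add_zero]
    exact hre.ne'
  have h3 := h1.log h2
  have hMre : M.det = ((M.det.re : ℝ) : ℂ) := by
    apply Complex.ext <;> simp [him]
  have : (M.det * (M⁻¹ * E).trace).re / (fun t : ℝ => (M + (t : ℂ) • E).det.re) 0
      = (M⁻¹ * E).trace.re := by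
    simp only [Complex.ofReal_zero, zero_smul, add_zero]
    rw [hMre, Complex.re_ofReal_mul, Complex.ofReal_re]
    exact mul_div_cancel_left₀ _ hre.ne'
  rwa [this] at h3

-- positivity of det (1 + Q * S) for PSD Q, S
open scoped MatrixOrder in
lemma det_one_add_psd {m : ℕ} {Q S : Matrix (Fin m) (Fin m) ℂ}
    (hQ : Q.PosSemidef) (hS : S.PosSemidef) :
    0 < (1 + Q * S).det.re ∧ (1 + Q * S).det.im = 0 ∧ IsUnit (1 + Q * S).det := by
  set s := CFC.sqrt S with hs
  have hssq : s * s = S := CFC.sqrt_mul_sqrt_self S hS.nonneg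
  have hdet : (1 + Q * S).det = (1 + s * Q * s).det := by
    rw [← hssq, ← Matrix.mul_assoc, Matrix.det_one_add_mul_comm, Matrix.mul_assoc]
  have hherm : sᴴ = s := (CFC.sqrt_nonneg S).posSemidef.isHermitian
  have hpsd : (s * Q * s).PosSemidef := by
    have := hQ.conjTranspose_mul_mul_same s
    rwa [hherm] at this
  have hposdef : (1 + s * Q * s).PosDef := Matrix.PosDef.add_posSemidef Matrix.PosDef.one hpsd
  have hd := hposdef.det_pos
  rw [Complex.lt_def] at hd
  refine ⟨?_, ?_, ?_⟩
  · rw [hdet]; simpa using hd.1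
  · rw [hdet]; simpa using hd.2.symm
  · rw [hdet]
    refine isUnit_iff_ne_zero.mpr (fun h => ?_)
    rw [h] at hd
    simp at hd

lemma psd_smul {m : ℕ} {A : Matrix (Fin m) (Fin m) ℂ} (hA : A.PosSemidef)
    {c : ℝ} (hc : 0 ≤ c) : ((c : ℂ) • A).PosSemidef := by
  refine Matrix.PosSemidef.of_dotProduct_mulVec_nonneg ?_ ?_
  · rw [Matrix.IsHermitian, Matrix.conjTranspose_smul, Complex.star_def, Complex.conj_ofReal,
      hA.isHermitian.eq]
  · intro x
    rw [Matrix.smul_mulVec, dotProduct_smul]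
    have h := hA.dotProduct_mulVec_nonneg x
    rw [Complex.le_def] at h ⊢
    constructor
    · rw [smul_eq_mul, Complex.re_ofReal_mul]
      simpa using mul_nonneg hc (by simpa using h.1)
    · rw [smul_eq_mul, Complex.im_ofReal_mul]
      simp [← h.2]

lemma herm_dot_im {m : ℕ} {A : Matrix (Fin m) (Fin m) ℂ} (hA : A.IsHermitian)
    (x : Fin m → ℂ) : (dotProduct (star x) (A *ᵥ x)).im = 0 := by
  have hAe : ∀ i j, star (A i j) = A j i := fun i j => by
    rw [← Matrix.conjTranspose_apply, hA.eq]
  have h : star (dotProduct (star x) (A *ᵥ x))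
      = dotProduct (star x) (A *ᵥ x) := by
    simp only [dotProduct, Matrix.mulVec, star_sum, star_mul', star_star, Pi.star_apply,
      dotProduct, hAe, Finset.sum_mul, Finset.mul_sum]
    rw [Finset.sum_comm]
    exact Finset.sum_congr rfl fun i _ => Finset.sum_congr rfl fun j _ => by ring
  exact Complex.conj_eq_iff_im.mp h

lemma trace_conjTranspose_mul_self_zero {m : ℕ} {X : Matrix (Fin m) (Fin m) ℂ}
    (h : (Xᴴ * X).trace = 0) : X = 0 := by
  have hterm : ∀ j i, Complex.normSq (X i j) = ((starRingEnd ℂ) (X i j) * X i j).re := by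
    intro j i; rw [← Complex.normSq_eq_conj_mul_self, Complex.ofReal_re]
  have hre : (∑ j, ∑ i, Complex.normSq (X i j)) = 0 := by
    have := congrArg Complex.re h
    simp only [Matrix.trace, Matrix.diag, Matrix.mul_apply, Matrix.conjTranspose_apply,
      Complex.zero_re] at this
    rw [← this, Complex.re_sum]
    congr 1; ext j
    rw [Complex.re_sum]
    congr 1; ext i
    rw [hterm]; rfl
  have hz : ∀ j ∈ Finset.univ, ∀ i ∈ Finset.univ, Complex.normSq (X i j) = 0 := by
    intro j _ i _
    have h1 : ∀ j ∈ (Finset.univ : Finset (Fin m)), 0 ≤ ∑ i, Complex.normSq (X i j) :=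
      fun j _ => Finset.sum_nonneg fun i _ => Complex.normSq_nonneg _
    have h2 := (Finset.sum_eq_zero_iff_of_nonneg h1).mp hre j (Finset.mem_univ j)
    exact (Finset.sum_eq_zero_iff_of_nonneg
      (fun i _ => Complex.normSq_nonneg _)).mp h2 i (Finset.mem_univ i)
  ext i j
  simpa using Complex.normSq_eq_zero.mp (hz j (Finset.mem_univ j) i (Finset.mem_univ i))

open scoped MatrixOrder in
lemma psd_mul_psd_trace_zero {m : ℕ} {P A : Matrix (Fin m) (Fin m) ℂ}
    (hP : P.PosSemidef) (hA : A.PosSemidef) (h : (P * A).trace = 0) : P * A = 0 := by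
  obtain ⟨B, hB⟩ := CStarAlgebra.nonneg_iff_eq_star_mul_self.mp hP.nonneg
  obtain ⟨C, hC⟩ := CStarAlgebra.nonneg_iff_eq_star_mul_self.mp hA.nonneg
  rw [Matrix.star_eq_conjTranspose] at hB hC
  have key : ((C * Bᴴ)ᴴ * (C * Bᴴ)).trace = 0 := by
    rw [Matrix.conjTranspose_mul, Matrix.conjTranspose_conjTranspose]
    calc (B * Cᴴ * (C * Bᴴ)).trace
        = ((B * (Cᴴ * C)) * Bᴴ).trace := by simp only [Matrix.mul_assoc]
      _ = (Bᴴ * (B * (Cᴴ * C))).trace := Matrix.trace_mul_comm _ _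
      _ = (P * A).trace := by rw [hB, hC]; simp only [Matrix.mul_assoc]
      _ = 0 := h
  have hCB : C * Bᴴ = 0 := trace_conjTranspose_mul_self_zero key
  have : Bᴴ * (C * Bᴴ)ᴴ * C = P * A := by
    rw [Matrix.conjTranspose_mul, Matrix.conjTranspose_conjTranspose, hB, hC]
    simp only [Matrix.mul_assoc]
  rw [← this, hCB]
  simp

lemma vecMulVec_posSemidef {m : ℕ} (v : Fin m → ℂ) :
    (Matrix.vecMulVec v (star v)).PosSemidef := by
  have h : Matrix.vecMulVec v (star v) = Matrix.replicateCol (Fin 1) v * (Matrix.replicateCol (Fin 1) v)ᴴ := by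
    ext i j
    simp [Matrix.vecMulVec_apply, Matrix.mul_apply, Matrix.replicateCol_apply, Matrix.conjTranspose_apply]
  rw [h]
  exact Matrix.posSemidef_self_mul_conjTranspose _

lemma trace_vecMulVec {m : ℕ} (v : Fin m → ℂ) :
    (Matrix.vecMulVec v (star v)).trace = dotProduct (star v) v := by
  simp [Matrix.trace, Matrix.diag, Matrix.vecMulVec_apply, dotProduct, mul_comm]

lemma trace_mul_vecMulVec {m : ℕ} (A : Matrix (Fin m) (Fin m) ℂ) (v : Fin m → ℂ) :
    (A * Matrix.vecMulVec v (star v)).trace = dotProduct (star v) (A *ᵥ v) := by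
  simp only [Matrix.trace, Matrix.diag, Matrix.mul_apply, Matrix.vecMulVec_apply,
    dotProduct, Matrix.mulVec, Pi.star_apply]
  simp only [Finset.mul_sum]
  exact Finset.sum_congr rfl fun i _ => Finset.sum_congr rfl fun j _ => by ring

lemma det_swap' {nr m : ℕ} (H : Matrix (Fin nr) (Fin m) ℂ) (Q : Matrix (Fin m) (Fin m) ℂ)
    (ρ : ℝ) : (1 + (ρ : ℂ) • (H * Q * Hᴴ)).det = (1 + Q * ((ρ : ℂ) • (Hᴴ * H))).det := by
  have h1 : (ρ : ℂ) • (H * Q * Hᴴ) = H * (Q * ((ρ : ℂ) • Hᴴ)) := by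
    rw [Matrix.mul_smul, ← Matrix.mul_smul, Matrix.mul_assoc, Matrix.mul_smul]
  have h2 : Q * ((ρ : ℂ) • Hᴴ) * H = Q * ((ρ : ℂ) • (Hᴴ * H)) := by
    rw [Matrix.mul_assoc, Matrix.smul_mul]
  rw [h1, Matrix.det_one_add_mul_comm, h2]

lemma herm_S_inv {m : ℕ} {S Q : Matrix (Fin m) (Fin m) ℂ} (hS : S.IsHermitian)
    (hQ : Q.IsHermitian) (hu : IsUnit (1 + Q * S).det) :
    (S * (1 + Q * S)⁻¹).IsHermitian := by
  set M := 1 + Q * S with hM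
  have hu' : IsUnit (1 + S * Q).det := by
    rw [Matrix.det_one_add_mul_comm]; exact hu
  have hcomm : (1 + S * Q) * S = S * M := by
    rw [hM, Matrix.mul_add, Matrix.add_mul, Matrix.mul_one, Matrix.one_mul, Matrix.mul_assoc]
  have heq : (1 + S * Q)⁻¹ * S = S * M⁻¹ := by
    have h1 : (1 + S * Q)⁻¹ * ((1 + S * Q) * S) * M⁻¹ = (1 + S * Q)⁻¹ * (S * M) * M⁻¹ := by
      rw [hcomm]
    rw [← Matrix.mul_assoc, Matrix.nonsing_inv_mul _ hu', Matrix.one_mul] at h1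
    rw [Matrix.mul_assoc, Matrix.mul_assoc, Matrix.mul_nonsing_inv _ hu, Matrix.mul_one] at h1
    exact h1.symm
  rw [Matrix.IsHermitian, Matrix.conjTranspose_mul, Matrix.conjTranspose_nonsing_inv, hS.eq]
  have hMH : Mᴴ = 1 + S * Q := by
    rw [hM, Matrix.conjTranspose_add, Matrix.conjTranspose_one, Matrix.conjTranspose_mul,
      hS.eq, hQ.eq]
  rw [hMH, heq]

/-- If `H_R†H_R − H_E†H_E` has a positive eigenvalue and `Q°` is a
global maximizer of the secrecy rate over `Ω`, then `Q°` satisfies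
`Q° Θ(Q°) = Tr(Q° Θ(Q°)) Q°` and `λ_max(Θ(Q°)) = Tr(Q° Θ(Q°))`, where
`S_R = ρ H_R†H_R`, `S_E = ρ H_E†H_E`, `Θ(Q) = S_R(I+QS_R)⁻¹ − S_E(I+QS_E)⁻¹`. -/
theorem stmt_9 (nT nR nE : ℕ) (HR : Matrix (Fin nR) (Fin nT) ℂ)
    (HE : Matrix (Fin nE) (Fin nT) ℂ) (ρ : ℝ) (hρ : 0 < ρ)
    (hpos : ∃ (t : ℝ) (v : Fin nT → ℂ), 0 < t ∧ v ≠ 0 ∧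
      (HRᴴ * HR - HEᴴ * HE) *ᵥ v = (t : ℂ) • v)
    (SR SE Θ : Matrix (Fin nT) (Fin nT) ℂ)
    (hSR : SR = (ρ : ℂ) • (HRᴴ * HR)) (hSE : SE = (ρ : ℂ) • (HEᴴ * HE))
    (Qo : Matrix (Fin nT) (Fin nT) ℂ) (hQo : Qo.PosSemidef) (htr : Qo.trace = 1)
    (hΘ : Θ = SR * (1 + Qo * SR)⁻¹ - SE * (1 + Qo * SE)⁻¹)
    (hmax : ∀ Q : Matrix (Fin nT) (Fin nT) ℂ, Q.PosSemidef → Q.trace = 1 →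
      Real.log ((1 + (ρ : ℂ) • (HR * Q * HRᴴ)).det.re)
          - Real.log ((1 + (ρ : ℂ) • (HE * Q * HEᴴ)).det.re)
        ≤ Real.log ((1 + (ρ : ℂ) • (HR * Qo * HRᴴ)).det.re)
          - Real.log ((1 + (ρ : ℂ) • (HE * Qo * HEᴴ)).det.re)) :
    Qo * Θ = (Qo * Θ).trace • Qo ∧ lamMax Θ = (Qo * Θ).trace.re := by
  have hSRpsd : SR.PosSemidef := by
    rw [hSR]; exact psd_smul (Matrix.posSemidef_conjTranspose_mul_self HR) hρ.le
  have hSEpsd : SE.PosSemidef := by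
    rw [hSE]; exact psd_smul (Matrix.posSemidef_conjTranspose_mul_self HE) hρ.le
  obtain ⟨hreR, himR, huR⟩ := det_one_add_psd hQo hSRpsd
  obtain ⟨hreE, himE, huE⟩ := det_one_add_psd hQo hSEpsd
  set MR := 1 + Qo * SR with hMR
  set ME := 1 + Qo * SE with hME
  -- Θ is Hermitian
  have hTh : Θ.IsHermitian := by
    rw [hΘ]
    exact (herm_S_inv hSRpsd.isHermitian hQo.isHermitian huR).sub
      (herm_S_inv hSEpsd.isHermitian hQo.isHermitian huE)
  -- first-order optimality
  have key : ∀ Q : Matrix (Fin nT) (Fin nT) ℂ, Q.PosSemidef → Q.trace = 1 →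
      (Θ * (Q - Qo)).trace.re ≤ 0 := by
    intro Q hQ hQtr
    set D := Q - Qo with hD
    set g : ℝ → ℝ := fun t =>
      Real.log ((MR + (t : ℂ) • (D * SR)).det.re) - Real.log ((ME + (t : ℂ) • (D * SE)).det.re)
      with hg
    have hgder : HasDerivAt g ((MR⁻¹ * (D * SR)).trace.re - (ME⁻¹ * (D * SE)).trace.re) 0 :=
      (hasDerivAt_logdet MR (D * SR) huR himR hreR).sub
        (hasDerivAt_logdet ME (D * SE) huE himE hreE)
    have e1 : (MR⁻¹ * (D * SR)).trace = ((SR * MR⁻¹) * D).trace := by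
      rw [Matrix.trace_mul_comm, Matrix.mul_assoc, Matrix.trace_mul_comm D]
    have e2 : (ME⁻¹ * (D * SE)).trace = ((SE * ME⁻¹) * D).trace := by
      rw [Matrix.trace_mul_comm, Matrix.mul_assoc, Matrix.trace_mul_comm D]
    have hgd : (MR⁻¹ * (D * SR)).trace.re - (ME⁻¹ * (D * SE)).trace.re = (Θ * D).trace.re := by
      rw [e1, e2, ← Complex.sub_re, ← Matrix.trace_sub, ← Matrix.sub_mul, ← hΘ]
    rw [hgd] at hgder
    have hmat : ∀ (t : ℝ) (S : Matrix (Fin nT) (Fin nT) ℂ),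
        1 + (Qo + (t : ℂ) • D) * S = (1 + Qo * S) + (t : ℂ) • (D * S) := by
      intro t S
      rw [Matrix.add_mul, Matrix.smul_mul, add_assoc]
    have hub : ∀ t ∈ Set.Ioc (0 : ℝ) 1, g t ≤ g 0 := by
      intro t ht
      have hcomb : Qo + (t : ℂ) • D = ((1 - t : ℝ) : ℂ) • Qo + ((t : ℝ) : ℂ) • Q := by
        rw [hD]
        push_cast
        module
      have hQt : (Qo + (t : ℂ) • D).PosSemidef := by
        rw [hcomb]
        exact (psd_smul hQo (by linarith [ht.2])).add (psd_smul hQ ht.1.le)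
      have hQttr : (Qo + (t : ℂ) • D).trace = 1 := by
        rw [Matrix.trace_add, Matrix.trace_smul, hD, Matrix.trace_sub, htr, hQtr]
        simp
      have h := hmax _ hQt hQttr
      rw [det_swap' HR _ ρ, det_swap' HE _ ρ, det_swap' HR Qo ρ, det_swap' HE Qo ρ,
        ← hSR, ← hSE] at h
      have hgt : g t = Real.log ((1 + (Qo + (t : ℂ) • D) * SR).det.re)
          - Real.log ((1 + (Qo + (t : ℂ) • D) * SE).det.re) := by
        rw [hg, hmat t SR, hmat t SE, ← hMR, ← hME]
      have hg0 : g 0 = Real.log ((1 + Qo * SR).det.re) - Real.log ((1 + Qo * SE).det.re) := by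
        simp only [hg, Complex.ofReal_zero, zero_smul, add_zero, hMR, hME]
      rw [hgt, hg0]
      exact h
    have hdw := hgder.hasDerivWithinAt (s := Set.Ioi (0 : ℝ))
    rw [hasDerivWithinAt_iff_tendsto_slope] at hdw
    have hsets : Set.Ioi (0 : ℝ) \ {0} = Set.Ioi (0 : ℝ) :=
      Set.diff_singleton_eq_self (by simp)
    rw [hsets] at hdw
    have hev : ∀ᶠ t in nhdsWithin (0 : ℝ) (Set.Ioi 0), slope g 0 t ≤ 0 := by
      filter_upwards [Ioc_mem_nhdsGT_of_mem (Set.mem_Ico.mpr ⟨le_refl 0, one_pos⟩)] with t ht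
      rw [slope_def_field]
      exact div_nonpos_of_nonpos_of_nonneg (sub_nonpos.mpr (hub t ht)) (by simp [ht.1.le])
    exact le_of_tendsto hdw hev
  -- trace (Qo * Θ) is real
  have hμreal : (Qo * Θ).trace = (((Qo * Θ).trace.re : ℝ) : ℂ) := by
    have hst : star ((Qo * Θ).trace) = (Qo * Θ).trace := by
      rw [← Matrix.trace_conjTranspose, Matrix.conjTranspose_mul, hTh.eq, hQo.isHermitian.eq,
        Matrix.trace_mul_comm]
    have him : (Qo * Θ).trace.im = 0 := Complex.conj_eq_iff_im.mp hst
    exact Complex.ext (by simp) (by simp [him])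
  set μ : ℝ := (Qo * Θ).trace.re with hμ
  -- Rayleigh-type bound
  have key' : ∀ Q : Matrix (Fin nT) (Fin nT) ℂ, Q.PosSemidef → Q.trace = 1 →
      (Θ * Q).trace.re ≤ μ := by
    intro Q hQ hQtr
    have h := key Q hQ hQtr
    rw [Matrix.mul_sub, Matrix.trace_sub, Complex.sub_re] at h
    have hμ2 : (Θ * Qo).trace.re = μ := by rw [Matrix.trace_mul_comm]
    linarith
  have rayleigh : ∀ x : Fin nT → ℂ,
      (dotProduct (star x) (Θ *ᵥ x)).re ≤ μ * (dotProduct (star x) x).re := by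
    intro x
    rcases eq_or_ne x 0 with rfl | hx
    · simp
    · set c : ℝ := (dotProduct (star x) x).re with hc
      have hcpos : 0 < c := by
        have := dotProduct_star_self_pos_iff.mpr hx
        rw [Complex.lt_def] at this
        simpa [hc] using this.1
      have hdreal : dotProduct (star x) x = ((c : ℝ) : ℂ) := by
        have him : (dotProduct (star x) x).im = 0 := by
          have h1 := herm_dot_im (Matrix.isHermitian_one (n := Fin nT) (α := ℂ)) x
          simpa using h1
        exact Complex.ext (by simp [hc]) (by simp [him])
      set Q : Matrix (Fin nT) (Fin nT) ℂ := ((c⁻¹ : ℝ) : ℂ) • Matrix.vecMulVec x (star x)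
        with hQdef
      have hQpsd : Q.PosSemidef := psd_smul (vecMulVec_posSemidef x) (inv_nonneg.mpr hcpos.le)
      have hQtr : Q.trace = 1 := by
        rw [hQdef, Matrix.trace_smul, trace_vecMulVec, hdreal, smul_eq_mul, ← Complex.ofReal_mul,
          inv_mul_cancel₀ hcpos.ne', Complex.ofReal_one]
      have h := key' Q hQpsd hQtr
      have htrQ : (Θ * Q).trace = ((c⁻¹ : ℝ) : ℂ) * dotProduct (star x) (Θ *ᵥ x) := by
        rw [hQdef, Matrix.mul_smul, Matrix.trace_smul, trace_mul_vecMulVec, smul_eq_mul]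
      rw [htrQ, Complex.re_ofReal_mul] at h
      have h2 : (dotProduct (star x) (Θ *ᵥ x)).re / c ≤ μ := by
        rw [div_eq_inv_mul]; exact h
      calc (dotProduct (star x) (Θ *ᵥ x)).re ≤ μ * c := by
            have := (div_le_iff₀ hcpos).mp h2
            linarith
        _ = μ * (dotProduct (star x) x).re := by rw [hc]
  -- A := μ 1 - Θ is PSD
  set A : Matrix (Fin nT) (Fin nT) ℂ := ((μ : ℂ)) • 1 - Θ with hA
  have hApsd : A.PosSemidef := by
    have hAherm : A.IsHermitian := by
      rw [hA, Matrix.IsHermitian, Matrix.conjTranspose_sub, Matrix.conjTranspose_smul,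
        Matrix.conjTranspose_one, hTh.eq, Complex.star_def, Complex.conj_ofReal]
    refine Matrix.PosSemidef.of_dotProduct_mulVec_nonneg hAherm fun x => ?_
    have him := herm_dot_im hAherm x
    rw [Complex.le_def]
    refine ⟨?_, by simp [him]⟩
    have hexp : dotProduct (star x) (A *ᵥ x)
        = (μ : ℂ) * dotProduct (star x) x - dotProduct (star x) (Θ *ᵥ x) := by
      rw [hA, Matrix.sub_mulVec, dotProduct_sub, Matrix.smul_mulVec,
        Matrix.one_mulVec, dotProduct_smul, smul_eq_mul]
    rw [hexp, Complex.sub_re, Complex.re_ofReal_mul, Complex.zero_re]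
    have := rayleigh x
    linarith
  -- Qo * A = 0
  have hQoA : Qo * A = 0 := by
    apply psd_mul_psd_trace_zero hQo hApsd
    rw [hA, Matrix.mul_sub, Matrix.trace_sub, Matrix.mul_smul, Matrix.mul_one,
      Matrix.trace_smul, htr, smul_eq_mul, mul_one]
    rw [hμreal]
    ring
  have part1 : Qo * Θ = (Qo * Θ).trace • Qo := by
    have h0 : Qo * ((μ : ℂ) • 1) - Qo * Θ = 0 := by
      rw [← Matrix.mul_sub, ← hA, hQoA]
    have h1 : Qo * Θ = (μ : ℂ) • Qo := by
      rw [← sub_eq_zero]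
      rw [Matrix.mul_smul, Matrix.mul_one] at h0
      linear_combination (norm := abel) -h0
    rw [hμreal]
    exact h1
  refine ⟨part1, ?_⟩
  -- part 2
  have hub : ∀ t ∈ {t : ℝ | ∃ v : Fin nT → ℂ, v ≠ 0 ∧ Θ *ᵥ v = (t : ℂ) • v}, t ≤ μ := by
    rintro t ⟨v, hv, hΘv⟩
    have hc : 0 < (dotProduct (star v) v).re := by
      have := dotProduct_star_self_pos_iff.mpr hv
      rw [Complex.lt_def] at this
      simpa using this.1
    have h1 : (dotProduct (star v) (Θ *ᵥ v)).re = t * (dotProduct (star v) v).re := by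
      rw [hΘv, dotProduct_smul, smul_eq_mul, Complex.re_ofReal_mul]
    have h2 := rayleigh v
    rw [h1] at h2
    nlinarith
  have hmem : μ ∈ {t : ℝ | ∃ v : Fin nT → ℂ, v ≠ 0 ∧ Θ *ᵥ v = (t : ℂ) • v} := by
    have hQone : Qo ≠ 0 := by
      intro h
      rw [h, Matrix.trace_zero] at htr
      exact one_ne_zero htr.symm
    have hdetA : A.det = 0 := by
      by_contra h
      have hu : IsUnit A.det := (Ne.isUnit h)
      have : Qo = 0 := by
        have := congrArg (fun X => X * A⁻¹) hQoA
        simpa [Matrix.mul_assoc, Matrix.mul_nonsing_inv _ hu] using this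
      exact hQone this
    obtain ⟨v, hv, hAv⟩ := (Matrix.exists_mulVec_eq_zero_iff).mpr hdetA
    refine ⟨v, hv, ?_⟩
    rw [hA, Matrix.sub_mulVec, Matrix.smul_mulVec, Matrix.one_mulVec, sub_eq_zero] at hAv
    exact hAv.symm
  have hbdd : BddAbove {t : ℝ | ∃ v : Fin nT → ℂ, v ≠ 0 ∧ Θ *ᵥ v = (t : ℂ) • v} := ⟨μ, hub⟩
  exact le_antisymm (csSup_le ⟨μ, hmem⟩ hub) (le_csSup hbdd hmem)
end

section
/- Assume S_R − S_E has a positive eigenvalue, and let Q ∈ Ω satisfy Q Θ(Q) = Tr(Q Θ(Q)) · Q and λ_max(Θ(Q)) = Tr(Q Θ(Q)). Then: (i) rank(Θ(Q)) = rank(S_R − S_E) ≥ rank(Q); (ii) Q(S_R − S_E)Q is positive semidefinite; (iii) the Hermitian matrices Q + Q S_E Q and Q + Q S_R Q commute, i.e., (Q + Q S_E Q)(Q + Q S_R Q) = (Q + Q S_R Q)(Q + Q S_E Q). -/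
open Matrix
open scoped ComplexOrder
open scoped MatrixOrder

variable {n : ℕ}

lemma psd_smul_real {M : Matrix (Fin n) (Fin n) ℂ} (hM : M.PosSemidef) {r : ℝ} (hr : 0 ≤ r) :
    ((r : ℂ) • M).PosSemidef := by
  refine posSemidef_iff_dotProduct_mulVec.mpr ⟨?_, fun x => ?_⟩
  · rw [IsHermitian, conjTranspose_smul, hM.1]
    simp
  · rw [smul_mulVec, dotProduct_smul, smul_eq_mul]
    exact mul_nonneg (by exact_mod_cast hr) (hM.dotProduct_mulVec_nonneg x)

lemma posdef_one_add_psd {M : Matrix (Fin n) (Fin n) ℂ} (hM : M.PosSemidef) :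
    (1 + M).PosDef := Matrix.PosDef.add_posSemidef Matrix.PosDef.one hM

lemma isUnit_det_one_add_psd {M : Matrix (Fin n) (Fin n) ℂ} (hM : M.PosSemidef) :
    IsUnit (1 + M).det :=
  IsUnit.mk0 _ (ne_of_gt (posdef_one_add_psd hM).det_pos)

lemma isUnit_det_one_add_mul {Q S : Matrix (Fin n) (Fin n) ℂ} (hQ : Q.PosSemidef)
    (hS : S.PosSemidef) : IsUnit (1 + Q * S).det := by
  have hpsd : ((CFC.sqrt Q) * S * (CFC.sqrt Q)).PosSemidef := by
    have := hS.mul_mul_conjTranspose_same (CFC.sqrt Q)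
    rwa [(CFC.sqrt_nonneg Q).posSemidef.1] at this
  have h1 : (1 + Q * S).det = (1 + (CFC.sqrt Q) * S * (CFC.sqrt Q)).det := by
    conv_lhs => rw [← (CFC.sqrt_mul_sqrt_self Q hQ.nonneg)]
    rw [Matrix.mul_assoc, Matrix.det_one_add_mul_comm]
  rw [h1]
  exact isUnit_det_one_add_psd hpsd
variable {n : ℕ}

lemma det_mul_add_smul_one_comm (X Y : Matrix (Fin n) (Fin n) ℂ) {c : ℂ} (hc : c ≠ 0) :
    (X * Y + c • 1).det = (Y * X + c • 1).det := by
  have key : ∀ Z W : Matrix (Fin n) (Fin n) ℂ, Z * W + c • 1 = c • (1 + Z * (c⁻¹ • W)) := by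
    intro Z W
    rw [Matrix.mul_smul, smul_add, smul_smul, mul_inv_cancel₀ hc, one_smul, add_comm]
  rw [key, key, Matrix.det_smul, Matrix.det_smul, Matrix.det_one_add_mul_comm,
    Matrix.smul_mul, Matrix.mul_smul]

lemma posdef_smul_one {d : ℝ} (hd : 0 < d) : ((d : ℂ) • (1 : Matrix (Fin n) (Fin n) ℂ)).PosDef := by
  rw [smul_one_eq_diagonal]
  exact Matrix.posDef_diagonal_iff.mpr fun i => by exact_mod_cast hd

lemma eigvec_fun_ne_zero {A : Matrix (Fin n) (Fin n) ℂ} (hA : A.IsHermitian) (i : Fin n) :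
    (⇑(hA.eigenvectorBasis i) : Fin n → ℂ) ≠ 0 := by
  intro h0
  refine hA.eigenvectorBasis.toBasis.ne_zero i ?_
  rw [OrthonormalBasis.coe_toBasis]
  ext j
  exact congrFun h0 j

lemma eigvec_mulVec_complex {A : Matrix (Fin n) (Fin n) ℂ} (hA : A.IsHermitian) (i : Fin n) :
    A *ᵥ ⇑(hA.eigenvectorBasis i) = ((hA.eigenvalues i : ℂ)) • ⇑(hA.eigenvectorBasis i) := by
  rw [hA.mulVec_eigenvectorBasis]
  ext j
  simp [Complex.real_smul]

lemma psd_mul_of_commute {A B : Matrix (Fin n) (Fin n) ℂ} (hA : A.PosSemidef) (hB : B.PosSemidef)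
    (hAB : A * B = B * A) : (A * B).PosSemidef := by
  have hH : (A * B).IsHermitian := by
    rw [IsHermitian, conjTranspose_mul, hA.1, hB.1, hAB]
  refine hH.posSemidef_iff_eigenvalues_nonneg.mpr fun i => ?_
  by_contra hneg
  push_neg at hneg
  rw [Pi.zero_apply] at hneg
  set μ := hH.eigenvalues i with hμ
  have hwe : (A * B) *ᵥ ⇑(hH.eigenvectorBasis i) = ((μ : ℂ)) • ⇑(hH.eigenvectorBasis i) :=
    eigvec_mulVec_complex hH i
  have hdet : ((A * B) + ((-μ : ℝ) : ℂ) • 1).det = 0 := by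
    rw [← Matrix.exists_mulVec_eq_zero_iff]
    refine ⟨⇑(hH.eigenvectorBasis i), eigvec_fun_ne_zero hH i, ?_⟩
    rw [add_mulVec, hwe, smul_mulVec, one_mulVec]
    push_cast
    ext j
    simp
  have hcne : ((-μ : ℝ) : ℂ) ≠ 0 := by
    simp only [ne_eq, Complex.ofReal_eq_zero]
    linarith
  rw [show A * B = (CFC.sqrt A) * ((CFC.sqrt A) * B) by rw [← Matrix.mul_assoc, (CFC.sqrt_mul_sqrt_self A hA.nonneg)],
    det_mul_add_smul_one_comm _ _ hcne] at hdet
  have hpsd : ((CFC.sqrt A) * B * (CFC.sqrt A)).PosSemidef := by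
    have := hB.mul_mul_conjTranspose_same (CFC.sqrt A)
    rwa [(CFC.sqrt_nonneg A).posSemidef.1] at this
  have hPD : (((CFC.sqrt A) * B) * (CFC.sqrt A) + ((-μ : ℝ) : ℂ) • 1).PosDef :=
    Matrix.PosDef.posSemidef_add hpsd (posdef_smul_one (by linarith))
  exact (ne_of_gt hPD.det_pos) hdet

lemma quad_eq_diag {A : Matrix (Fin n) (Fin n) ℂ} (hA : A.IsHermitian) (x : Fin n → ℂ) :
    star x ⬝ᵥ A *ᵥ x = star (star (hA.eigenvectorUnitary : Matrix (Fin n) (Fin n) ℂ) *ᵥ x) ⬝ᵥ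
      (diagonal ((↑) ∘ hA.eigenvalues) *ᵥ (star (hA.eigenvectorUnitary : Matrix (Fin n) (Fin n) ℂ) *ᵥ x)) := by
  set U : Matrix (Fin n) (Fin n) ℂ := (hA.eigenvectorUnitary : Matrix (Fin n) (Fin n) ℂ)
  conv_lhs => rw [hA.spectral_theorem, Unitary.conjStarAlgAut_apply]
  rw [← mulVec_mulVec, ← mulVec_mulVec, dotProduct_mulVec (star x) U, star_mulVec,
    star_eq_conjTranspose, conjTranspose_conjTranspose]
  rfl

lemma star_dot_self (z : ℂ) : star z * z = (↑(‖z‖ ^ 2) : ℂ) := by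
  rw [show star z = (starRingEnd ℂ) z from rfl, Complex.conj_mul']
  push_cast
  ring

lemma quadform_eigen {A : Matrix (Fin n) (Fin n) ℂ} (hA : A.IsHermitian) (x : Fin n → ℂ) :
    (star x ⬝ᵥ A *ᵥ x).re =
      ∑ i, hA.eigenvalues i *
        ‖(star (hA.eigenvectorUnitary : Matrix (Fin n) (Fin n) ℂ) *ᵥ x) i‖ ^ 2 := by
  rw [quad_eq_diag hA x, dotProduct, Complex.re_sum]
  refine Finset.sum_congr rfl fun i _ => ?_
  rw [mulVec_diagonal]
  simp only [Pi.star_apply, Function.comp_apply]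
  set z := (star (hA.eigenvectorUnitary : Matrix (Fin n) (Fin n) ℂ) *ᵥ x) i
  rw [show star z * ((hA.eigenvalues i : ℂ) * z) = (hA.eigenvalues i : ℂ) * (star z * z) by ring,
    star_dot_self, ← Complex.ofReal_mul]
  exact Complex.ofReal_re _

lemma dot_star_self_eq (v : Fin n → ℂ) : star v ⬝ᵥ v = (↑(∑ i, ‖v i‖ ^ 2) : ℂ) := by
  rw [dotProduct, Complex.ofReal_sum]
  exact Finset.sum_congr rfl fun i _ => star_dot_self (v i)

lemma sum_normSq_eq {A : Matrix (Fin n) (Fin n) ℂ} (hA : A.IsHermitian) (x : Fin n → ℂ) :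
    ∑ i, ‖(star (hA.eigenvectorUnitary : Matrix (Fin n) (Fin n) ℂ) *ᵥ x) i‖ ^ 2
      = ∑ i, ‖x i‖ ^ 2 := by
  set U : Matrix (Fin n) (Fin n) ℂ := (hA.eigenvectorUnitary : Matrix (Fin n) (Fin n) ℂ)
  have hU : U * star U = 1 := Matrix.mem_unitaryGroup_iff.mp hA.eigenvectorUnitary.2
  have key : star (star U *ᵥ x) ⬝ᵥ (star U *ᵥ x) = star x ⬝ᵥ x := by
    rw [dotProduct_mulVec (star (star U *ᵥ x)) (star U) x, star_mulVec, vecMul_vecMul,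
      star_eq_conjTranspose, conjTranspose_conjTranspose]
    rw [← star_eq_conjTranspose U, hU, vecMul_one]
  rw [dot_star_self_eq, dot_star_self_eq] at key
  exact_mod_cast key

lemma sum_normSq_pos {v : Fin n → ℂ} (hv : v ≠ 0) : 0 < ∑ i, ‖v i‖ ^ 2 := by
  obtain ⟨j, hj⟩ := Function.ne_iff.mp hv
  exact Finset.sum_pos' (fun i _ => by positivity)
    ⟨j, Finset.mem_univ j, by
      have : ‖v j‖ ≠ 0 := norm_ne_zero_iff.mpr hj
      positivity⟩

lemma lamMax_pos_of_quadform {A : Matrix (Fin n) (Fin n) ℂ} (hA : A.IsHermitian)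
    {x : Fin n → ℂ} (hx : 0 < (star x ⬝ᵥ A *ᵥ x).re) : 0 < lamMax A := by
  have hne : Nonempty (Fin n) := by
    by_contra h
    rw [not_nonempty_iff] at h
    rw [show star x ⬝ᵥ A *ᵥ x = 0 from by simp [dotProduct]] at hx
    simp at hx
  obtain ⟨i, hi⟩ : ∃ i, 0 < hA.eigenvalues i := by
    by_contra h
    push_neg at h
    have hle : (star x ⬝ᵥ A *ᵥ x).re ≤ 0 := by
      rw [quadform_eigen hA x]
      exact Finset.sum_nonpos fun j _ =>
        mul_nonpos_iff.mpr (Or.inr ⟨h j, by positivity⟩)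
    linarith
  have hmem : hA.eigenvalues i ∈ {t : ℝ | ∃ v : Fin n → ℂ, v ≠ 0 ∧ A *ᵥ v = (t : ℂ) • v} :=
    ⟨⇑(hA.eigenvectorBasis i), eigvec_fun_ne_zero hA i, eigvec_mulVec_complex hA i⟩
  have hbdd : BddAbove {t : ℝ | ∃ v : Fin n → ℂ, v ≠ 0 ∧ A *ᵥ v = (t : ℂ) • v} := by
    refine ⟨Finset.univ.sup' Finset.univ_nonempty hA.eigenvalues, fun t ht => ?_⟩
    obtain ⟨v, hv0, hveq⟩ := ht
    have h1 : (star v ⬝ᵥ A *ᵥ v).re = t * ∑ j, ‖v j‖ ^ 2 := by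
      rw [hveq, dotProduct_smul, smul_eq_mul, dot_star_self_eq, ← Complex.ofReal_mul]
      exact Complex.ofReal_re _
    have h2 : (star v ⬝ᵥ A *ᵥ v).re ≤
        (Finset.univ.sup' Finset.univ_nonempty hA.eigenvalues) * ∑ j, ‖v j‖ ^ 2 := by
      rw [quadform_eigen hA v, ← sum_normSq_eq hA v, Finset.mul_sum]
      exact Finset.sum_le_sum fun j _ =>
        mul_le_mul_of_nonneg_right (Finset.le_sup' _ (Finset.mem_univ j)) (by positivity)
    have h3 := sum_normSq_pos hv0
    rw [h1] at h2
    exact le_of_mul_le_mul_right h2 h3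
  exact lt_of_lt_of_le hi (le_csSup hbdd hmem)

/-- If `S_R − S_E` has a positive eigenvalue and `Q ∈ Ω` satisfies
the optimality equations `Q Θ(Q) = Tr(Q Θ(Q)) Q`, `λ_max(Θ(Q)) = Tr(Q Θ(Q))`,
then (i) `rank(Θ(Q)) = rank(S_R − S_E) ≥ rank(Q)`; (ii) `Q(S_R − S_E)Q ⪰ 0`;
(iii) `Q + Q S_E Q` and `Q + Q S_R Q` commute. -/
theorem stmt_11 (nT nR nE : ℕ) (HR : Matrix (Fin nR) (Fin nT) ℂ)
    (HE : Matrix (Fin nE) (Fin nT) ℂ) (ρ : ℝ) (hρ : 0 < ρ)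
    (SR SE Θ : Matrix (Fin nT) (Fin nT) ℂ)
    (hSR : SR = (ρ : ℂ) • (HRᴴ * HR)) (hSE : SE = (ρ : ℂ) • (HEᴴ * HE))
    (hpos : ∃ (t : ℝ) (v : Fin nT → ℂ), 0 < t ∧ v ≠ 0 ∧
      (SR - SE) *ᵥ v = (t : ℂ) • v)
    (Q : Matrix (Fin nT) (Fin nT) ℂ) (hQ : Q.PosSemidef) (htr : Q.trace = 1)
    (hΘ : Θ = SR * (1 + Q * SR)⁻¹ - SE * (1 + Q * SE)⁻¹)
    (heq1 : Q * Θ = (Q * Θ).trace • Q)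
    (heq2 : lamMax Θ = (Q * Θ).trace.re) :
    Θ.rank = (SR - SE).rank ∧ Q.rank ≤ (SR - SE).rank ∧
    (Q * (SR - SE) * Q).PosSemidef ∧
    (Q + Q * SE * Q) * (Q + Q * SR * Q) = (Q + Q * SR * Q) * (Q + Q * SE * Q) := by
  classical
  have hSRpsd : SR.PosSemidef := by
    rw [hSR]; exact psd_smul_real (posSemidef_conjTranspose_mul_self HR) hρ.le
  have hSEpsd : SE.PosSemidef := by
    rw [hSE]; exact psd_smul_real (posSemidef_conjTranspose_mul_self HE) hρ.le
  set M : Matrix (Fin nT) (Fin nT) ℂ := SR - SE with hMdef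
  have hMH : Mᴴ = M := by rw [hMdef, conjTranspose_sub, hSRpsd.1, hSEpsd.1]
  set A : Matrix (Fin nT) (Fin nT) ℂ := 1 + SR * Q with hAdef
  set B : Matrix (Fin nT) (Fin nT) ℂ := 1 + Q * SE with hBdef
  -- determinants
  have hdQR : IsUnit (1 + Q * SR).det := isUnit_det_one_add_mul hQ hSRpsd
  have hdQE : IsUnit B.det := isUnit_det_one_add_mul hQ hSEpsd
  have hdRQ : IsUnit A.det := by
    rw [hAdef, Matrix.det_one_add_mul_comm]; exact hdQR
  have hdEQ : IsUnit (1 + SE * Q).det := by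
    rw [Matrix.det_one_add_mul_comm]; exact hdQE
  -- conjTransposes
  have hctA : Aᴴ = 1 + Q * SR := by
    rw [hAdef, conjTranspose_add, conjTranspose_one, conjTranspose_mul, hSRpsd.1, hQ.1]
  have hctA' : (1 + Q * SR)ᴴ = A := by
    rw [conjTranspose_add, conjTranspose_one, conjTranspose_mul, hSRpsd.1, hQ.1, hAdef]
  have hctB : Bᴴ = 1 + SE * Q := by
    rw [hBdef, conjTranspose_add, conjTranspose_one, conjTranspose_mul, hSEpsd.1, hQ.1]
  have hctB' : (1 + SE * Q)ᴴ = B := by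
    rw [conjTranspose_add, conjTranspose_one, conjTranspose_mul, hSEpsd.1, hQ.1, hBdef]
  -- the key factorization
  have e1 : A * (SR * (1 + Q * SR)⁻¹) = SR := by
    rw [← Matrix.mul_assoc, show A * SR = SR * (1 + Q * SR) by rw [hAdef]; noncomm_ring,
      Matrix.mul_assoc, Matrix.mul_nonsing_inv _ hdQR, Matrix.mul_one]
  have e2 : SE * B⁻¹ * B = SE := by
    rw [Matrix.mul_assoc, Matrix.nonsing_inv_mul _ hdQE, Matrix.mul_one]
  have hABM : A * Θ * B = M := by
    rw [hΘ, Matrix.mul_sub, Matrix.sub_mul, e1, Matrix.mul_assoc A (SE * B⁻¹) B, e2]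
    rw [hMdef, hAdef, hBdef]; noncomm_ring
  -- Hermitian Θ
  have e1' : (1 + SE * Q) * (SE * B⁻¹) = SE := by
    rw [← Matrix.mul_assoc, show (1 + SE * Q) * SE = SE * B by rw [hBdef]; noncomm_ring,
      Matrix.mul_assoc, Matrix.mul_nonsing_inv _ hdQE, Matrix.mul_one]
  have hswap1 : A⁻¹ * SR = SR * (1 + Q * SR)⁻¹ := by
    calc A⁻¹ * SR = A⁻¹ * (A * (SR * (1 + Q * SR)⁻¹)) := by rw [e1]
    _ = (A⁻¹ * A) * (SR * (1 + Q * SR)⁻¹) := by rw [Matrix.mul_assoc]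
    _ = SR * (1 + Q * SR)⁻¹ := by rw [Matrix.nonsing_inv_mul _ hdRQ, Matrix.one_mul]
  have hswap2 : (1 + SE * Q)⁻¹ * SE = SE * B⁻¹ := by
    calc (1 + SE * Q)⁻¹ * SE = (1 + SE * Q)⁻¹ * ((1 + SE * Q) * (SE * B⁻¹)) := by rw [e1']
    _ = ((1 + SE * Q)⁻¹ * (1 + SE * Q)) * (SE * B⁻¹) := by rw [Matrix.mul_assoc]
    _ = SE * B⁻¹ := by rw [Matrix.nonsing_inv_mul _ hdEQ, Matrix.one_mul]
  have hΘH : Θ.IsHermitian := by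
    have hth : Θᴴ = A⁻¹ * SR - (1 + SE * Q)⁻¹ * SE := by
      rw [hΘ, conjTranspose_sub, conjTranspose_mul, conjTranspose_mul,
        Matrix.conjTranspose_nonsing_inv, Matrix.conjTranspose_nonsing_inv,
        hctA', hSRpsd.1, hctB, hSEpsd.1]
    rw [IsHermitian, hth, hswap1, hswap2, hΘ]
  -- Θ as congruence
  have hΘeq : Θ = A⁻¹ * M * B⁻¹ := by
    rw [← hABM]
    calc Θ = (A⁻¹ * A) * Θ * (B * B⁻¹) := by
          rw [Matrix.nonsing_inv_mul _ hdRQ, Matrix.mul_nonsing_inv _ hdQE,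
            Matrix.one_mul, Matrix.mul_one]
    _ = A⁻¹ * (A * Θ * B) * B⁻¹ := by simp only [Matrix.mul_assoc]
  have hΘ2 : Θ = (1 + SE * Q)⁻¹ * M * (1 + Q * SR)⁻¹ := by
    conv_lhs => rw [← hΘH.eq, hΘeq]
    rw [conjTranspose_mul, conjTranspose_mul, Matrix.conjTranspose_nonsing_inv,
      Matrix.conjTranspose_nonsing_inv, hMH, hctA, hctB]
    simp only [Matrix.mul_assoc]
  -- trace is real
  have hcreal : (Q * Θ).trace = (((Q * Θ).trace.re : ℝ) : ℂ) := by
    refine (Complex.conj_eq_iff_re.mp ?_).symm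
    have h1 : (Q * Θ)ᴴ.trace = star (Q * Θ).trace := Matrix.trace_conjTranspose (Q * Θ)
    rw [conjTranspose_mul, hΘH.eq, hQ.1, Matrix.trace_mul_comm] at h1
    exact h1.symm
  -- positivity of the trace value
  obtain ⟨t, v, ht, hv, hveq⟩ := hpos
  have hKps : (Q * (1 + SE * Q)⁻¹).PosSemidef := by
    set R := (CFC.sqrt Q) with hRdef
    have hRH : Rᴴ = R := (CFC.sqrt_nonneg Q).posSemidef.1
    have hRSR : (R * SE * R).PosSemidef := by
      have h := hSEpsd.mul_mul_conjTranspose_same R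
      rwa [hRH] at h
    have hdet1 : IsUnit (1 + R * SE * R).det := isUnit_det_one_add_psd hRSR
    have hcommR : R * (1 + SE * Q) = (1 + R * SE * R) * R := by
      rw [Matrix.mul_add, Matrix.add_mul, Matrix.mul_one, Matrix.one_mul]
      conv_lhs => rw [← (CFC.sqrt_mul_sqrt_self Q hQ.nonneg)]
      simp only [← hRdef, Matrix.mul_assoc]
    have h5 : R * (1 + R * SE * R)⁻¹ * (R * (1 + SE * Q)) = Q := by
      rw [hcommR, ← Matrix.mul_assoc, Matrix.mul_assoc R (1 + R * SE * R)⁻¹ (1 + R * SE * R),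
        Matrix.nonsing_inv_mul _ hdet1, Matrix.mul_one, (CFC.sqrt_mul_sqrt_self Q hQ.nonneg)]
    have hKeq : Q * (1 + SE * Q)⁻¹ = R * (1 + R * SE * R)⁻¹ * R := by
      calc Q * (1 + SE * Q)⁻¹
          = (R * (1 + R * SE * R)⁻¹ * (R * (1 + SE * Q))) * (1 + SE * Q)⁻¹ := by rw [h5]
        _ = R * (1 + R * SE * R)⁻¹ * R * ((1 + SE * Q) * (1 + SE * Q)⁻¹) := by
            simp only [Matrix.mul_assoc]
        _ = R * (1 + R * SE * R)⁻¹ * R := by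
            rw [Matrix.mul_nonsing_inv _ hdEQ, Matrix.mul_one]
    rw [hKeq]
    have hinv : ((1 + R * SE * R)⁻¹).PosSemidef := (posdef_one_add_psd hRSR).inv.posSemidef
    have h6 := hinv.mul_mul_conjTranspose_same R
    rwa [hRH] at h6
  set x : Fin nT → ℂ := (1 + Q * SR) *ᵥ v with hxdef
  have hΘx : Θ *ᵥ x = (t : ℂ) • ((1 + SE * Q)⁻¹ *ᵥ v) := by
    rw [hxdef, mulVec_mulVec, hΘ2, Matrix.mul_assoc ((1 + SE * Q)⁻¹ * M) _ _,
      Matrix.nonsing_inv_mul _ hdQR, Matrix.mul_one, ← mulVec_mulVec, hveq, mulVec_smul]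
  have hstarx : star x = star v ᵥ* A := by
    rw [hxdef, star_mulVec, hctA']
  have hvM : star v ᵥ* M = (t : ℂ) • star v := by
    have h9 := star_mulVec M v
    rw [hMH, hveq, star_smul] at h9
    rw [← h9]
    congr 1
    simp [Complex.star_def, Complex.conj_ofReal]
  have hAN : A * (1 + SE * Q)⁻¹ = 1 + M * (Q * (1 + SE * Q)⁻¹) := by
    have h10 : A = (1 + SE * Q) + M * Q := by rw [hAdef, hMdef]; noncomm_ring
    rw [h10, Matrix.add_mul, Matrix.mul_nonsing_inv _ hdEQ, Matrix.mul_assoc]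
  have hform : star x ⬝ᵥ Θ *ᵥ x
      = (t : ℂ) * ((star v ⬝ᵥ v) + (t : ℂ) * (star v ⬝ᵥ (Q * (1 + SE * Q)⁻¹) *ᵥ v)) := by
    rw [hΘx, dotProduct_smul, smul_eq_mul]
    congr 1
    rw [hstarx, ← dotProduct_mulVec, mulVec_mulVec, hAN, add_mulVec, one_mulVec, dotProduct_add]
    congr 1
    rw [← mulVec_mulVec, dotProduct_mulVec, hvM, smul_dotProduct, smul_eq_mul]
  have hKre : 0 ≤ (star v ⬝ᵥ (Q * (1 + SE * Q)⁻¹) *ᵥ v).re := by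
    have h0 := hKps.dotProduct_mulVec_nonneg v
    simpa using (Complex.le_def.mp h0).1
  have hquad : 0 < (star x ⬝ᵥ Θ *ᵥ x).re := by
    rw [hform, dot_star_self_eq v]
    have hs : 0 < ∑ i, ‖v i‖ ^ 2 := sum_normSq_pos hv
    set z := star v ⬝ᵥ (Q * (1 + SE * Q)⁻¹) *ᵥ v with hzdef
    set s := ∑ i, ‖v i‖ ^ 2 with hsdef
    have h11 : ((t : ℂ) * ((s : ℂ) + (t : ℂ) * z)).re = t * (s + t * z.re) := by
      rw [Complex.re_ofReal_mul, Complex.add_re, Complex.ofReal_re, Complex.re_ofReal_mul]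
    rw [h11]
    nlinarith [mul_nonneg ht.le hKre]
  have hlam : 0 < (Q * Θ).trace.re := by
    rw [← heq2]
    exact lamMax_pos_of_quadform hΘH hquad
  set lam : ℝ := (Q * Θ).trace.re with hlamdef
  have hlamne : ((lam : ℝ) : ℂ) ≠ 0 := by
    simp only [ne_eq, Complex.ofReal_eq_zero]
    exact ne_of_gt hlam
  have hQΘ : Q * Θ = ((lam : ℝ) : ℂ) • Q := by rw [heq1, hcreal]
  have hΘQ : Θ * Q = ((lam : ℝ) : ℂ) • Q := by
    have h := congrArg conjTranspose hQΘ
    rwa [conjTranspose_mul, hΘH.eq, conjTranspose_smul,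
      Complex.star_def, Complex.conj_ofReal, hQ.1] at h
  have hrank : Θ.rank = M.rank := by
    conv_rhs => rw [← hABM]
    rw [Matrix.rank_mul_eq_left_of_isUnit_det B (A * Θ) hdQE,
      Matrix.rank_mul_eq_right_of_isUnit_det A Θ hdRQ]
  have hrank2 : Q.rank ≤ M.rank := by
    have hQeq : (((lam : ℝ) : ℂ)⁻¹ • (1 : Matrix (Fin nT) (Fin nT) ℂ)) * (Q * Θ) = Q := by
      rw [hQΘ, Matrix.smul_mul, Matrix.one_mul, smul_smul, inv_mul_cancel₀ hlamne, one_smul]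
    calc Q.rank = ((((lam : ℝ) : ℂ)⁻¹ • (1 : Matrix (Fin nT) (Fin nT) ℂ)) * (Q * Θ)).rank := by
          rw [hQeq]
      _ ≤ (Q * Θ).rank := Matrix.rank_mul_le_right _ _
      _ ≤ Θ.rank := Matrix.rank_mul_le_right _ _
      _ = M.rank := hrank
  have hPRpsd : (Q + Q * SR * Q).PosSemidef := by
    refine hQ.add ?_
    have h := hSRpsd.mul_mul_conjTranspose_same Q
    rwa [hQ.1] at h
  have hPEpsd : (Q + Q * SE * Q).PosSemidef := by
    refine hQ.add ?_
    have h := hSEpsd.mul_mul_conjTranspose_same Q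
    rwa [hQ.1] at h
  have hPE : Θ * (Q + Q * SE * Q) = ((lam : ℝ) : ℂ) • (Q + Q * SE * Q) := by
    have h12 : Θ * (Q + Q * SE * Q) = Θ * Q + ((Θ * Q) * SE) * Q := by
      rw [Matrix.mul_add]
      simp only [← Matrix.mul_assoc]
    rw [h12, hΘQ, Matrix.smul_mul, Matrix.smul_mul, ← smul_add]
  have hQMQ : Q * M * Q = ((lam : ℝ) : ℂ) • ((Q + Q * SR * Q) * (Q + Q * SE * Q)) := by
    conv_lhs => rw [← hABM]
    have h7 : Q * (A * Θ * B) * Q = (Q * A) * (Θ * (B * Q)) := by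
      simp only [Matrix.mul_assoc]
    rw [h7, show Q * A = Q + Q * SR * Q by rw [hAdef]; noncomm_ring,
      show B * Q = Q + Q * SE * Q by rw [hBdef]; noncomm_ring, hPE, Matrix.mul_smul]
  have hherm : (Q * M * Q)ᴴ = Q * M * Q := by
    rw [conjTranspose_mul, conjTranspose_mul, hQ.1, hMH]
    simp only [Matrix.mul_assoc]
  have hcomm : (Q + Q * SE * Q) * (Q + Q * SR * Q) = (Q + Q * SR * Q) * (Q + Q * SE * Q) := by
    have h8 := hherm
    rw [hQMQ, conjTranspose_smul, conjTranspose_mul, hPRpsd.1, hPEpsd.1,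
      Complex.star_def, Complex.conj_ofReal] at h8
    exact smul_right_injective (Matrix (Fin nT) (Fin nT) ℂ) hlamne h8
  refine ⟨hrank, hrank2, ?_, hcomm⟩
  show (Q * M * Q).PosSemidef
  rw [hQMQ]
  exact psd_smul_real (psd_mul_of_commute hPRpsd hPEpsd hcomm.symm) hlam.le
end
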